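/- arXiv:1806.07643 — 4 statements merged into one kernel-verified Lean document; each statement's English description precedes it below -/
import Mathlib

section
/- Let P and Q be polytopes in ℝ^d. Then P has a summand homothetic to Q if and only if P and P + Q have the same number of vertices, i.e., f0(P) = f0(P + Q). -/
open Pointwise
open scoped RealInnerProductSpace

noncomputable section

abbrev Esp (d : ℕ) := EuclideanSpace ℝ (Fin d)

def IsPolytope {d : ℕ} (P : Set (Esp d)) : Prop :=
  ∃ s : Finset (Esp d), s.Nonempty ∧ P = convexHull ℝ (s : Set (Esp d))

def polyFace {d : ℕ} (P : Set (Esp d)) (c : Esp d) : Set (Esp d) :=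
  {x | x ∈ P ∧ ∀ y ∈ P, ⟪c, x⟫ ≤ ⟪c, y⟫}

def polyVerts {d : ℕ} (P : Set (Esp d)) : Set (Esp d) :=
  Set.extremePoints ℝ P

def f0 {d : ℕ} (P : Set (Esp d)) : ℕ := (polyVerts P).ncard

def polyAdj {d : ℕ} (P : Set (Esp d)) (u v : Esp d) : Prop :=
  u ≠ v ∧ u ∈ polyVerts P ∧ v ∈ polyVerts P ∧
    ∃ c : Esp d, polyFace P c = segment ℝ u v

def polyGraph {d : ℕ} (P : Set (Esp d)) : SimpleGraph (Esp d) where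
  Adj u v := polyAdj P u v
  symm := ⟨by
    rintro u v ⟨hne, hu, hv, c, hc⟩
    exact ⟨hne.symm, hv, hu, c, by rw [hc, segment_symm]⟩⟩
  loopless := ⟨by rintro u ⟨hne, -⟩; exact hne rfl⟩

def polyDiam {d : ℕ} (P : Set (Esp d)) : ℕ :=
  sSup {n : ℕ | ∃ u ∈ polyVerts P, ∃ v ∈ polyVerts P, n = (polyGraph P).dist u v}

def polyDim {d : ℕ} (P : Set (Esp d)) : ℕ :=
  Module.finrank ℝ (affineSpan ℝ P).direction

def IsFace {d : ℕ} (P F : Set (Esp d)) : Prop := ∃ c : Esp d, polyFace P c = F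

def gammaVerts {d : ℕ} (P Q : Set (Esp d)) (u : Esp d) : Set (Esp d) :=
  {w ∈ polyVerts (P + Q) | ∃ v ∈ polyVerts Q, w = u + v}

namespace Stmt0Aux

variable {d : ℕ}

local instance : DecidableEq (Esp d) := Classical.decEq _

lemma inner_cont (c : Esp d) : Continuous (fun x : Esp d => (⟪c, x⟫ : ℝ)) :=
  Continuous.inner continuous_const continuous_id

lemma convex_min (c : Esp d) {s : Set (Esp d)} {x : Esp d} (hx : x ∈ convexHull ℝ s) :
    ∃ v ∈ s, ⟪c, v⟫ ≤ ⟪c, x⟫ := by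
  revert x
  have : convexHull ℝ s ⊆ {x | ∃ v ∈ s, ⟪c, v⟫ ≤ ⟪c, x⟫} := by
    apply convexHull_min
    · exact fun v hv => ⟨v, hv, le_refl _⟩
    · rintro a ⟨va, hva, hva'⟩ b ⟨vb, hvb, hvb'⟩ u w hu hw huw
      have hsum : ⟪c, u • a + w • b⟫ = u * ⟪c, a⟫ + w * ⟪c, b⟫ := by
        rw [inner_add_right, real_inner_smul_right, real_inner_smul_right]
      rcases le_total ⟪c, va⟫ ⟪c, vb⟫ with h | h
      · refine ⟨va, hva, ?_⟩
        rw [hsum]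
        calc ⟪c, va⟫ = u * ⟪c, va⟫ + w * ⟪c, va⟫ := by rw [← add_mul, huw, one_mul]
          _ ≤ u * ⟪c, a⟫ + w * ⟪c, b⟫ :=
            add_le_add (mul_le_mul_of_nonneg_left hva' hu)
              (mul_le_mul_of_nonneg_left (le_trans h hvb') hw)
      · refine ⟨vb, hvb, ?_⟩
        rw [hsum]
        calc ⟪c, vb⟫ = u * ⟪c, vb⟫ + w * ⟪c, vb⟫ := by rw [← add_mul, huw, one_mul]
          _ ≤ u * ⟪c, a⟫ + w * ⟪c, b⟫ :=
            add_le_add (mul_le_mul_of_nonneg_left (le_trans h hva') hu)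
              (mul_le_mul_of_nonneg_left hvb' hw)
  exact fun x hx => this hx

lemma mem_face_iff {P : Set (Esp d)} {c x : Esp d} :
    x ∈ polyFace P c ↔ x ∈ P ∧ ∀ y ∈ P, ⟪c, x⟫ ≤ ⟪c, y⟫ := Iff.rfl

lemma face_subset {P : Set (Esp d)} {c : Esp d} : polyFace P c ⊆ P := fun _ h => h.1

lemma face_add (c : Esp d) (A B : Set (Esp d)) :
    polyFace (A + B) c = polyFace A c + polyFace B c := by
  ext x
  constructor
  · rintro ⟨hx, hmin⟩
    rw [Set.mem_add] at hx
    obtain ⟨a, ha, b, hb, rfl⟩ := hx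
    have haf : a ∈ polyFace A c := by
      refine ⟨ha, fun y hy => ?_⟩
      have := hmin (y + b) (Set.add_mem_add hy hb)
      rw [inner_add_right, inner_add_right] at this
      linarith
    have hbf : b ∈ polyFace B c := by
      refine ⟨hb, fun y hy => ?_⟩
      have := hmin (a + y) (Set.add_mem_add ha hy)
      rw [inner_add_right, inner_add_right] at this
      linarith
    exact Set.add_mem_add haf hbf
  · intro hx
    rw [Set.mem_add] at hx
    obtain ⟨a, ha, b, hb, rfl⟩ := hx
    refine ⟨Set.add_mem_add ha.1 hb.1, fun y hy => ?_⟩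
    rw [Set.mem_add] at hy
    obtain ⟨a', ha', b', hb', rfl⟩ := hy
    rw [inner_add_right, inner_add_right]
    exact add_le_add (ha.2 a' ha') (hb.2 b' hb')

lemma isExtreme_face (P : Set (Esp d)) (c : Esp d) : IsExtreme ℝ P (polyFace P c) := by
  constructor
  · exact face_subset
  · rintro x1 hx1 x2 hx2 x ⟨hxP, hmin⟩ hseg
    obtain ⟨u, w, hu, hw, huw, hx⟩ := hseg
    have hval : u * ⟪c, x1⟫ + w * ⟪c, x2⟫ = ⟪c, x⟫ := by
      rw [← hx, inner_add_right, real_inner_smul_right, real_inner_smul_right]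
    have h1 : ⟪c, x⟫ ≤ ⟪c, x1⟫ := hmin x1 hx1
    have h2 : ⟪c, x⟫ ≤ ⟪c, x2⟫ := hmin x2 hx2
    have hid : u * ⟪c, x⟫ + w * ⟪c, x⟫ = ⟪c, x⟫ := by rw [← add_mul, huw, one_mul]
    have e1 : ⟪c, x1⟫ = ⟪c, x⟫ := by
      refine le_antisymm (le_of_mul_le_mul_left ?_ hu) h1
      have m2 : w * ⟪c, x⟫ ≤ w * ⟪c, x2⟫ := mul_le_mul_of_nonneg_left h2 hw.le
      linarith
    have e2 : ⟪c, x2⟫ = ⟪c, x⟫ := by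
      refine le_antisymm (le_of_mul_le_mul_left ?_ hw) h2
      have m1 : u * ⟪c, x⟫ ≤ u * ⟪c, x1⟫ := mul_le_mul_of_nonneg_left h1 hu.le
      linarith
    exact ⟨hx1, fun y hy => e1 ▸ hmin y hy⟩

lemma face_isCompact {P : Set (Esp d)} (hP : IsCompact P) (c : Esp d) :
    IsCompact (polyFace P c) := by
  refine hP.of_isClosed_subset ?_ face_subset
  have : polyFace P c = P ∩ ⋂ y ∈ P, {x | ⟪c, x⟫ ≤ ⟪c, y⟫} := by
    ext x; simp [mem_face_iff, Set.mem_iInter]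
  rw [this]
  exact hP.isClosed.inter (isClosed_biInter fun y _ =>
    isClosed_le (inner_cont c) continuous_const)

lemma face_nonempty {P : Set (Esp d)} (hP : IsCompact P) (hne : P.Nonempty) (c : Esp d) :
    (polyFace P c).Nonempty := by
  obtain ⟨x, hx, hmin⟩ := hP.exists_isMinOn hne ((inner_cont c).continuousOn)
  exact ⟨x, hx, fun y hy => hmin hy⟩

lemma extreme_of_face_singleton {P : Set (Esp d)} {c p : Esp d} (h : polyFace P c = {p}) :
    p ∈ Set.extremePoints ℝ P :=
  (h ▸ isExtreme_face P c).mem_extremePoints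

lemma exists_vertex_min {P : Set (Esp d)} (hP : IsCompact P) (hne : P.Nonempty) (c : Esp d) :
    ∃ z ∈ Set.extremePoints ℝ P, ∀ x ∈ P, ⟪c, z⟫ ≤ ⟪c, x⟫ := by
  obtain ⟨z, hz⟩ := (face_isCompact hP c).extremePoints_nonempty (face_nonempty hP hne c)
  refine ⟨z, (isExtreme_face P c).extremePoints_subset_extremePoints hz, ?_⟩
  exact ((extremePoints_subset hz) : z ∈ polyFace P c).2

lemma two_smul_cancel {y z : Esp d} (h : y + y = z + z) : y = z := by
  have h2 : (2 : ℝ) • y = (2 : ℝ) • z := by rw [two_smul, two_smul]; exact h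
  exact smul_right_injective (Esp d) two_ne_zero h2

lemma extreme_add_unique {A B : Set (Esp d)} {y a b a' b' : Esp d}
    (hy : y ∈ Set.extremePoints ℝ (A + B)) (ha : a ∈ A) (hb : b ∈ B) (ha' : a' ∈ A)
    (hb' : b' ∈ B) (h1 : a + b = y) (h2 : a' + b' = y) : a = a' ∧ b = b' := by
  obtain rfl : b = y - a := by rw [← h1]; abel
  obtain rfl : b' = y - a' := by rw [← h2]; abel
  suffices haa : a = a' by exact ⟨haa, by rw [haa]⟩
  by_cases hz : a + (y - a') = a' + (y - a)
  · apply two_smul_cancel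
    have : a + (y - a') - (a' + (y - a)) = a + a - (a' + a') := by abel
    rw [hz, sub_self] at this
    exact (sub_eq_zero.mp this.symm)
  · exfalso
    have hmem1 : a + (y - a') ∈ A + B := Set.add_mem_add ha hb'
    have hmem2 : a' + (y - a) ∈ A + B := Set.add_mem_add ha' hb
    have hseg : y ∈ openSegment ℝ (a + (y - a')) (a' + (y - a)) := by
      refine ⟨1/2, 1/2, by norm_num, by norm_num, by norm_num, ?_⟩
      have hsum : (a + (y - a')) + (a' + (y - a)) = y + y := by abel
      calc (1/2 : ℝ) • (a + (y - a')) + (1/2 : ℝ) • (a' + (y - a))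
          = (1/2 : ℝ) • ((a + (y - a')) + (a' + (y - a))) := (smul_add _ _ _).symm
        _ = (1/2 : ℝ) • (y + y) := by rw [hsum]
        _ = y := by rw [smul_add, ← add_smul]; norm_num
    obtain ⟨e1, e2⟩ := (mem_extremePoints.mp hy).2 _ hmem1 _ hmem2 hseg
    exact hz (e1.trans e2.symm)

lemma extreme_add_left {A B : Set (Esp d)} {y a b : Esp d}
    (hy : y ∈ Set.extremePoints ℝ (A + B)) (ha : a ∈ A) (hb : b ∈ B) (h : a + b = y) :
    a ∈ Set.extremePoints ℝ A := by
  refine mem_extremePoints.mpr ⟨ha, fun x1 hx1 x2 hx2 hseg => ?_⟩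
  obtain ⟨u, w, hu, hw, huw, hx⟩ := hseg
  have hseg' : y ∈ openSegment ℝ (x1 + b) (x2 + b) := by
    refine ⟨u, w, hu, hw, huw, ?_⟩
    calc u • (x1 + b) + w • (x2 + b) = (u • x1 + w • x2) + (u + w) • b := by
          rw [smul_add, smul_add, add_smul]; abel
      _ = a + b := by rw [hx, huw, one_smul]
      _ = y := h
  obtain ⟨e1, e2⟩ := (mem_extremePoints.mp hy).2 _ (Set.add_mem_add hx1 hb) _ (Set.add_mem_add hx2 hb) hseg'
  constructor
  · have : x1 + b = a + b := by rw [e1, h]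
    exact add_right_cancel this
  · have : x2 + b = a + b := by rw [e2, h]
    exact add_right_cancel this

lemma extreme_add_right {A B : Set (Esp d)} {y a b : Esp d}
    (hy : y ∈ Set.extremePoints ℝ (A + B)) (ha : a ∈ A) (hb : b ∈ B) (h : a + b = y) :
    b ∈ Set.extremePoints ℝ B := by
  rw [add_comm A B] at hy
  exact extreme_add_left hy hb ha (by rw [add_comm]; exact h)

lemma extreme_smul_mem {A : Set (Esp d)} {α : ℝ} (hα : 0 < α) {x : Esp d}
    (hx : x ∈ Set.extremePoints ℝ (α • A)) : α⁻¹ • x ∈ Set.extremePoints ℝ A := by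
  obtain ⟨a, haA, rfl⟩ := hx.1
  have hinv : α⁻¹ • (α • a) = a := by rw [smul_smul, inv_mul_cancel₀ hα.ne', one_smul]
  rw [hinv]
  refine mem_extremePoints.mpr ⟨haA, fun x1 hx1 x2 hx2 hseg => ?_⟩
  obtain ⟨u, w, hu, hw, huw, hxe⟩ := hseg
  have hseg' : α • a ∈ openSegment ℝ (α • x1) (α • x2) := by
    refine ⟨u, w, hu, hw, huw, ?_⟩
    rw [smul_comm u α x1, smul_comm w α x2, ← smul_add, hxe]
  obtain ⟨e1, e2⟩ := (mem_extremePoints.mp hx).2 _ (Set.smul_mem_smul_set hx1) _ (Set.smul_mem_smul_set hx2) hseg'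
  exact ⟨smul_right_injective (Esp d) hα.ne' e1, smul_right_injective (Esp d) hα.ne' e2⟩

lemma add_eq_singleton {A B : Set (Esp d)} {x : Esp d} (hA : A.Nonempty) (hB : B.Nonempty)
    (h : A + B = {x}) : ∃ a b, A = {a} ∧ B = {b} ∧ a + b = x := by
  obtain ⟨a, ha⟩ := hA
  obtain ⟨b, hb⟩ := hB
  refine ⟨a, b, ?_, ?_, ?_⟩
  · apply Set.eq_singleton_iff_unique_mem.mpr
    refine ⟨ha, fun a' ha' => ?_⟩
    have e1 : a + b = x := by have := Set.add_mem_add ha hb; rw [h] at this; exact this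
    have e2 : a' + b = x := by have := Set.add_mem_add ha' hb; rw [h] at this; exact this
    exact add_right_cancel (e2.trans e1.symm)
  · apply Set.eq_singleton_iff_unique_mem.mpr
    refine ⟨hb, fun b' hb' => ?_⟩
    have e1 : a + b = x := by have := Set.add_mem_add ha hb; rw [h] at this; exact this
    have e2 : a + b' = x := by have := Set.add_mem_add ha hb'; rw [h] at this; exact this
    exact add_left_cancel (e2.trans e1.symm)
  · have := Set.add_mem_add ha hb; rw [h] at this; exact this

lemma face_singleton_of_strict {s : Finset (Esp d)} {p c : Esp d} (hp : p ∈ s)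
    (h : ∀ v ∈ s, v ≠ p → ⟪c, p⟫ < ⟪c, v⟫) :
    polyFace (convexHull ℝ (s : Set (Esp d))) c = {p} := by
  have hpmem : p ∈ convexHull ℝ (s : Set (Esp d)) := subset_convexHull ℝ _ hp
  have hpface : p ∈ polyFace (convexHull ℝ (s : Set (Esp d))) c := by
    refine ⟨hpmem, fun y hy => ?_⟩
    obtain ⟨v, hv, hvy⟩ := convex_min c hy
    rcases eq_or_ne v p with rfl | hne
    · exact hvy
    · exact le_trans (h v hv hne).le hvy
  refine Set.eq_singleton_iff_unique_mem.mpr ⟨hpface, ?_⟩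
  rintro x ⟨hxmem, hxmin⟩
  by_cases hsp : ((s.erase p : Finset (Esp d)) : Set (Esp d)).Nonempty
  · have hins : ((s : Finset (Esp d)) : Set (Esp d))
        = insert p ((s.erase p : Finset (Esp d)) : Set (Esp d)) := by
      rw [← Finset.coe_insert, Finset.insert_erase hp]
    rw [hins, convexHull_insert hsp] at hxmem
    obtain ⟨a, haa, z, hz, hseg⟩ := mem_convexJoin.mp hxmem
    rw [show a = p from haa] at hseg
    obtain ⟨u, w, hu, hw, huw, hx'⟩ := hseg
    obtain ⟨v, hv, hvz⟩ := convex_min c hz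
    have hvP : v ∈ s := Finset.mem_of_mem_erase (by exact_mod_cast hv)
    have hvp : v ≠ p := Finset.ne_of_mem_erase (by exact_mod_cast hv)
    have hlt : ⟪c, p⟫ < ⟪c, z⟫ := lt_of_lt_of_le (h v hvP hvp) hvz
    have hxp : ⟪c, x⟫ ≤ ⟪c, p⟫ := hxmin p hpmem
    have hval : ⟪c, x⟫ = u * ⟪c, p⟫ + w * ⟪c, z⟫ := by
      rw [← hx', inner_add_right, real_inner_smul_right, real_inner_smul_right]
    have hid : u * ⟪c, p⟫ + w * ⟪c, p⟫ = ⟪c, p⟫ := by rw [← add_mul, huw, one_mul]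
    have hw0 : w = 0 := by nlinarith [mul_le_mul_of_nonneg_left hlt.le hw]
    have hu1 : u = 1 := by rw [hw0, add_zero] at huw; exact huw
    rw [← hx', hw0, hu1, one_smul, zero_smul, add_zero]
  · -- s ⊆ {p}
    have hsub : (s : Set (Esp d)) = {p} := by
      apply Set.eq_singleton_iff_unique_mem.mpr
      refine ⟨hp, fun v hv => ?_⟩
      by_contra hne
      exact hsp ⟨v, by exact_mod_cast Finset.mem_erase.mpr ⟨hne, hv⟩⟩
    rw [hsub, convexHull_singleton] at hxmem
    exact hxmem

lemma exposed_of_extreme {s : Finset (Esp d)} {p : Esp d}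
    (hp : p ∈ Set.extremePoints ℝ (convexHull ℝ (s : Set (Esp d)))) :
    ∃ c, ∀ v ∈ s, v ≠ p → ⟪c, p⟫ < ⟪c, v⟫ := by
  have hps : p ∈ (s : Set (Esp d)) := extremePoints_convexHull_subset hp
  by_cases hsp : ((s.erase p : Finset (Esp d)) : Set (Esp d)).Nonempty
  · have hins : ((s : Finset (Esp d)) : Set (Esp d))
        = insert p ((s.erase p : Finset (Esp d)) : Set (Esp d)) := by
      rw [← Finset.coe_insert, Finset.insert_erase (by exact_mod_cast hps)]
    have hK : p ∉ convexHull ℝ ((s.erase p : Finset (Esp d)) : Set (Esp d)) := by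
      intro hmem
      have heq : convexHull ℝ (s : Set (Esp d))
          = convexHull ℝ ((s.erase p : Finset (Esp d)) : Set (Esp d)) := by
        rw [hins, convexHull_insert hsp]
        apply subset_antisymm
        · intro x hx
          obtain ⟨a, haa, z, hz, hseg⟩ := mem_convexJoin.mp hx
          rw [show a = p from haa] at hseg
          exact (convex_convexHull ℝ _).segment_subset hmem hz hseg
        · intro z hz
          exact mem_convexJoin.mpr ⟨p, rfl, z, hz, right_mem_segment ℝ p z⟩
      rw [heq] at hp
      have := extremePoints_convexHull_subset hp
      simp at this
    obtain ⟨f, u, hfu, hub⟩ := geometric_hahn_banach_point_closed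
      (convex_convexHull ℝ _) (((s.erase p).finite_toSet.isCompact_convexHull ℝ).isClosed) hK
    refine ⟨(InnerProductSpace.toDual ℝ (Esp d)).symm f, fun v hv hvp => ?_⟩
    have hvK : v ∈ convexHull ℝ ((s.erase p : Finset (Esp d)) : Set (Esp d)) :=
      subset_convexHull ℝ _ (by exact_mod_cast Finset.mem_erase.mpr ⟨hvp, hv⟩)
    have h2 := hub v hvK
    rw [InnerProductSpace.toDual_symm_apply, InnerProductSpace.toDual_symm_apply]
    linarith
  · refine ⟨0, fun v hv hvp => absurd ?_ hsp⟩
    exact ⟨v, by exact_mod_cast Finset.mem_erase.mpr ⟨hvp, hv⟩⟩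

lemma exposed_vertex_of_extreme {s : Finset (Esp d)} {p : Esp d}
    (hp : p ∈ Set.extremePoints ℝ (convexHull ℝ (s : Set (Esp d)))) :
    ∃ c, polyFace (convexHull ℝ (s : Set (Esp d))) c = {p} := by
  obtain ⟨c, hc⟩ := exposed_of_extreme hp
  exact ⟨c, face_singleton_of_strict (by exact_mod_cast extremePoints_convexHull_subset hp) hc⟩

lemma inner_left_cont (v : Esp d) : Continuous (fun c : Esp d => (⟪c, v⟫ : ℝ)) :=
  Continuous.inner continuous_id continuous_const

lemma open_avoid (t : Finset (Esp d)) (ht : ∀ v ∈ t, v ≠ (0 : Esp d)) :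
    ∀ U : Set (Esp d), IsOpen U → U.Nonempty → ∃ c ∈ U, ∀ v ∈ t, ⟪c, v⟫ ≠ 0 := by
  induction t using Finset.induction_on with
  | empty =>
    intro U _ hne
    obtain ⟨c, hc⟩ := hne
    exact ⟨c, hc, by simp⟩
  | @insert v t hvt ih =>
    intro U hU hne
    have hv0 : v ≠ 0 := ht v (Finset.mem_insert_self v t)
    have hnv : (0 : ℝ) < ‖v‖ := norm_pos_iff.mpr hv0
    have hopen : IsOpen {c : Esp d | ⟪c, v⟫ ≠ 0} :=
      isOpen_compl_singleton.preimage (inner_left_cont v)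
    have hne' : (U ∩ {c : Esp d | ⟪c, v⟫ ≠ 0}).Nonempty := by
      obtain ⟨c, hc⟩ := hne
      by_cases h0 : ⟪c, v⟫ ≠ 0
      · exact ⟨c, hc, h0⟩
      · push_neg at h0
        obtain ⟨ε, hε, hball⟩ := Metric.isOpen_iff.mp hU c hc
        set δ : ℝ := ε / (2 * ‖v‖) with hδ
        have hδpos : 0 < δ := by positivity
        refine ⟨c + δ • v, hball ?_, ?_⟩
        · rw [Metric.mem_ball, dist_eq_norm]
          have : c + δ • v - c = δ • v := by abel
          rw [this, norm_smul, Real.norm_eq_abs, abs_of_pos hδpos, hδ]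
          rw [div_mul_eq_mul_div]
          rw [div_lt_iff₀ (by positivity)]
          nlinarith
        · have : ⟪c + δ • v, v⟫ = ⟪c, v⟫ + δ * ⟪v, v⟫ := by
            rw [inner_add_left, real_inner_smul_left]
          rw [Set.mem_setOf_eq, this, h0, zero_add, real_inner_self_eq_norm_mul_norm]
          positivity
    obtain ⟨c, hc, hall⟩ := ih (fun w hw => ht w (Finset.mem_insert_of_mem hw))
      (U ∩ {c : Esp d | ⟪c, v⟫ ≠ 0}) (hU.inter hopen) hne'
    refine ⟨c, hc.1, fun w hw => ?_⟩
    rcases Finset.mem_insert.mp hw with rfl | hw'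
    · exact hc.2
    · exact hall w hw'

lemma root_subsingleton {a b : ℝ} (h : a + b ≠ 0) :
    Set.Subsingleton {t : ℝ | a + t * b = 0} := by
  intro t1 h1 t2 h2
  simp only [Set.mem_setOf_eq] at h1 h2
  by_cases hb : b = 0
  · exfalso; apply h; rw [hb] at h1 ⊢; linarith
  · have : t1 * b = t2 * b := by linarith
    exact mul_right_cancel₀ hb this

/-- Given a vector `c'` strictly exposing `p` in `P` and generic for `sQ`,
produce the partner vertex `q` of `Q`. -/
lemma face_pair {sP sQ : Finset (Esp d)} {P Q : Set (Esp d)} (hsQ : sQ.Nonempty)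
    (hPdef : P = convexHull ℝ (sP : Set (Esp d)))
    (hQdef : Q = convexHull ℝ (sQ : Set (Esp d)))
    {p c' : Esp d} (hpsP : p ∈ sP)
    (hstrict : ∀ v ∈ sP, v ≠ p → ⟪c', p⟫ < ⟪c', v⟫)
    (hgen : ∀ q1 ∈ sQ, ∀ q2 ∈ sQ, q1 ≠ q2 → ⟪c', q1 - q2⟫ ≠ 0) :
    ∃ q ∈ Set.extremePoints ℝ Q, (∀ y ∈ Q, ⟪c', q⟫ ≤ ⟪c', y⟫) ∧
      p + q ∈ Set.extremePoints ℝ (P + Q) := by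
  obtain ⟨q, hqsQ, hqmin⟩ := sQ.exists_min_image (fun v => (⟪c', v⟫ : ℝ)) hsQ
  have hqstrict : ∀ v ∈ sQ, v ≠ q → ⟪c', q⟫ < ⟪c', v⟫ := by
    intro v hv hvq
    have hne := hgen v hv q hqsQ hvq
    rw [inner_sub_right] at hne
    exact lt_of_le_of_ne (hqmin v hv) fun hcontra => hne (by linarith)
  have hfaceQ : polyFace Q c' = {q} := by
    rw [hQdef]; exact face_singleton_of_strict hqsQ hqstrict
  have hfaceP : polyFace P c' = {p} := by
    rw [hPdef]; exact face_singleton_of_strict hpsP hstrict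
  have hfacePQ : polyFace (P + Q) c' = {p + q} := by
    rw [face_add, hfaceP, hfaceQ, Set.singleton_add_singleton]
  refine ⟨q, extreme_of_face_singleton hfaceQ, ?_, extreme_of_face_singleton hfacePQ⟩
  intro y hy
  have : q ∈ polyFace Q c' := by rw [hfaceQ]; exact rfl
  exact this.2 y hy

/-- Each extreme point of `P` has a partner `q` making `p + q` extreme in `P + Q`,
and the partner can be chosen exposed by a vector generic enough. -/
lemma exists_partner {sP sQ : Finset (Esp d)} {P Q : Set (Esp d)} (hsQ : sQ.Nonempty)
    (hPdef : P = convexHull ℝ (sP : Set (Esp d)))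
    (hQdef : Q = convexHull ℝ (sQ : Set (Esp d)))
    {p : Esp d} (hp : p ∈ Set.extremePoints ℝ P) :
    ∃ c', (∀ v ∈ sP, v ≠ p → ⟪c', p⟫ < ⟪c', v⟫) ∧
      (∀ q1 ∈ sQ, ∀ q2 ∈ sQ, q1 ≠ q2 → ⟪c', q1 - q2⟫ ≠ 0) := by
  obtain ⟨c₀, hc₀⟩ := exposed_of_extreme (hPdef ▸ hp)
  set U : Set (Esp d) :=
    ⋂ v ∈ (sP.filter (fun v => v ≠ p) : Finset (Esp d)), {c : Esp d | 0 < ⟪c, v - p⟫} with hU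
  have hUopen : IsOpen U :=
    isOpen_biInter_finset fun v _ => (isOpen_lt continuous_const (inner_left_cont (v - p)))
  have hUne : U.Nonempty := by
    refine ⟨c₀, ?_⟩
    rw [hU]
    refine Set.mem_iInter₂.mpr fun v hv => ?_
    rw [Finset.mem_filter] at hv
    have := hc₀ v hv.1 hv.2
    rw [Set.mem_setOf_eq, inner_sub_right]
    linarith
  set bad : Finset (Esp d) :=
    ((sQ ×ˢ sQ).filter (fun pr => pr.1 ≠ pr.2)).image (fun pr => pr.1 - pr.2) with hbad
  have hbadne : ∀ w ∈ bad, w ≠ (0 : Esp d) := by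
    intro w hw
    rw [hbad, Finset.mem_image] at hw
    obtain ⟨pr, hpr, rfl⟩ := hw
    rw [Finset.mem_filter] at hpr
    exact sub_ne_zero.mpr hpr.2
  obtain ⟨c', hc'U, hc'gen⟩ := open_avoid bad hbadne U hUopen hUne
  refine ⟨c', fun v hv hvp => ?_, fun q1 h1 q2 h2 hne => ?_⟩
  · have : c' ∈ {c : Esp d | 0 < ⟪c, v - p⟫} := by
      rw [hU] at hc'U
      exact Set.mem_iInter₂.mp hc'U v (Finset.mem_filter.mpr ⟨hv, hvp⟩)
    rw [Set.mem_setOf_eq, inner_sub_right] at this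
    linarith
  · refine hc'gen (q1 - q2) ?_
    rw [hbad, Finset.mem_image]
    exact ⟨(q1, q2), Finset.mem_filter.mpr ⟨Finset.mem_product.mpr ⟨h1, h2⟩, hne⟩, rfl⟩

lemma partner_exists {sP sQ : Finset (Esp d)} {P Q : Set (Esp d)} (hsQ : sQ.Nonempty)
    (hPdef : P = convexHull ℝ (sP : Set (Esp d)))
    (hQdef : Q = convexHull ℝ (sQ : Set (Esp d)))
    {p : Esp d} (hp : p ∈ Set.extremePoints ℝ P) :
    ∃ q ∈ Set.extremePoints ℝ Q, p + q ∈ Set.extremePoints ℝ (P + Q) := by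
  obtain ⟨c', hstrict, hgen⟩ := exists_partner hsQ hPdef hQdef hp
  have hpsP : p ∈ sP := by
    have := extremePoints_convexHull_subset (hPdef ▸ hp)
    exact_mod_cast this
  obtain ⟨q, hq, _, hpq⟩ := face_pair hsQ hPdef hQdef hpsP hstrict hgen
  exact ⟨q, hq, hpq⟩

lemma normal_inclusion {sP sQ : Finset (Esp d)} {P Q : Set (Esp d)} (hsQ : sQ.Nonempty)
    (hPdef : P = convexHull ℝ (sP : Set (Esp d)))
    (hQdef : Q = convexHull ℝ (sQ : Set (Esp d)))
    {p : Esp d} (hp : p ∈ Set.extremePoints ℝ P)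
    (huniq : ∀ q q', q ∈ Set.extremePoints ℝ Q → q' ∈ Set.extremePoints ℝ Q →
      p + q ∈ Set.extremePoints ℝ (P + Q) → p + q' ∈ Set.extremePoints ℝ (P + Q) → q = q') :
    ∃ q ∈ Set.extremePoints ℝ Q,
      ∀ c : Esp d, (∀ x ∈ P, ⟪c, p⟫ ≤ ⟪c, x⟫) → ∀ y ∈ Q, ⟪c, q⟫ ≤ ⟪c, y⟫ := by
  obtain ⟨c₀, hstrict₀, hgen₀⟩ := exists_partner hsQ hPdef hQdef hp
  have hpsP : p ∈ sP := by
    have := extremePoints_convexHull_subset (hPdef ▸ hp)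
    exact_mod_cast this
  obtain ⟨q₀, hq₀ext, _, hpq₀⟩ := face_pair hsQ hPdef hQdef hpsP hstrict₀ hgen₀
  refine ⟨q₀, hq₀ext, fun c hc y' hy' => ?_⟩
  by_contra hcon
  push_neg at hcon
  have hD : ⟪c, y' - q₀⟫ < 0 := by rw [inner_sub_right]; linarith
  set D : ℝ := ⟪c, y' - q₀⟫ with hDdef
  set m : ℝ := ⟪c₀ - c, y' - q₀⟫ with hmdef
  set bad : Set ℝ := ⋃ w ∈ (((sQ ×ˢ sQ).filter fun pr => pr.1 ≠ pr.2 : Finset (Esp d × Esp d)) :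
      Set (Esp d × Esp d)), {t : ℝ | ⟪c, w.1 - w.2⟫ + t * ⟪c₀ - c, w.1 - w.2⟫ = 0} with hbaddef
  have hbadfin : bad.Finite := by
    refine Set.Finite.biUnion (Finset.finite_toSet _) fun w hw => ?_
    refine Set.Subsingleton.finite (root_subsingleton ?_)
    have hw' := Finset.mem_filter.mp (Finset.mem_coe.mp hw)
    have hmem := Finset.mem_product.mp hw'.1
    have hne := hgen₀ w.1 hmem.1 w.2 hmem.2 hw'.2
    have heq : ⟪c, w.1 - w.2⟫ + ⟪c₀ - c, w.1 - w.2⟫ = ⟪c₀, w.1 - w.2⟫ := by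
      rw [inner_sub_left]; ring
    rw [heq]; exact hne
  have hεpos : (0 : ℝ) < min 1 ((-D) / (|m| + 1)) := by
    apply lt_min one_pos
    apply div_pos (by linarith) (by positivity)
  obtain ⟨t, ht⟩ := ((Set.Ioo_infinite hεpos).diff hbadfin).nonempty
  obtain ⟨⟨ht0, htlt⟩, htbad⟩ := ht
  have ht1 : t ≤ 1 := le_of_lt (lt_of_lt_of_le htlt (min_le_left _ _))
  set ct : Esp d := c + t • (c₀ - c) with hct
  have hctval : ∀ w : Esp d, ⟪ct, w⟫ = ⟪c, w⟫ + t * ⟪c₀ - c, w⟫ := fun w => by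
    rw [hct, inner_add_left, real_inner_smul_left]
  have hstrict_t : ∀ v ∈ sP, v ≠ p → ⟪ct, p⟫ < ⟪ct, v⟫ := by
    intro v hv hvp
    have hvP : v ∈ P := by rw [hPdef]; exact subset_convexHull ℝ _ (Finset.mem_coe.mpr hv)
    have h1 : 0 ≤ ⟪c, v - p⟫ := by
      rw [inner_sub_right]; have := hc v hvP; linarith
    have h2 : 0 < ⟪c₀, v - p⟫ := by
      rw [inner_sub_right]; have := hstrict₀ v hv hvp; linarith
    have h3 : 0 < ⟪ct, v - p⟫ := by
      rw [hctval, inner_sub_left (𝕜 := ℝ)]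
      nlinarith
    rw [inner_sub_right] at h3; linarith
  have hgen_t : ∀ q1 ∈ sQ, ∀ q2 ∈ sQ, q1 ≠ q2 → ⟪ct, q1 - q2⟫ ≠ 0 := by
    intro q1 h1 q2 h2 hne hzero
    apply htbad
    rw [hbaddef]
    refine Set.mem_biUnion (x := ((q1, q2) : Esp d × Esp d)) ?_ ?_
    · exact Finset.mem_coe.mpr (Finset.mem_filter.mpr ⟨Finset.mem_product.mpr ⟨h1, h2⟩, hne⟩)
    · rw [Set.mem_setOf_eq, ← hctval]
      exact hzero
  obtain ⟨q_t, hq_text, hq_tmin, hpq_t⟩ := face_pair hsQ hPdef hQdef hpsP hstrict_t hgen_t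
  have hqeq : q_t = q₀ := huniq q_t q₀ hq_text hq₀ext hpq_t hpq₀
  have hmin := hq_tmin y' hy'
  rw [hqeq] at hmin
  have hge : 0 ≤ D + t * m := by
    have h4 : 0 ≤ ⟪ct, y' - q₀⟫ := by rw [inner_sub_right]; linarith
    rw [hctval, ← hDdef, ← hmdef] at h4
    exact h4
  have htlt2 : t < (-D) / (|m| + 1) := lt_of_lt_of_le htlt (min_le_right _ _)
  have h5 : t * (|m| + 1) < -D := (lt_div_iff₀ (by positivity)).mp htlt2
  nlinarith [le_abs_self m, mul_le_mul_of_nonneg_left (le_abs_self m) ht0.le]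

def coneSum (t : Finset (Esp d)) : Set (Esp d) :=
  {x | ∃ μ : Esp d → ℝ, (∀ v, 0 ≤ μ v) ∧ x = ∑ v ∈ t, μ v • v}

lemma coneSum_convex (t : Finset (Esp d)) : Convex ℝ (coneSum t) := by
  rintro x ⟨μ, hμ, rfl⟩ y ⟨ν, hν, rfl⟩ a b ha hb hab
  refine ⟨fun v => a * μ v + b * ν v,
    fun v => add_nonneg (mul_nonneg ha (hμ v)) (mul_nonneg hb (hν v)), ?_⟩
  rw [Finset.smul_sum, Finset.smul_sum, ← Finset.sum_add_distrib]
  refine Finset.sum_congr rfl fun v _ => ?_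
  rw [add_smul, smul_smul, smul_smul]

lemma coneSum_zero_mem (t : Finset (Esp d)) : (0 : Esp d) ∈ coneSum t :=
  ⟨fun _ => 0, fun _ => le_refl _, by simp⟩

lemma coneSum_smul_mem {t : Finset (Esp d)} {x : Esp d} {r : ℝ} (hr : 0 ≤ r)
    (hx : x ∈ coneSum t) : r • x ∈ coneSum t := by
  obtain ⟨μ, hμ, rfl⟩ := hx
  refine ⟨fun v => r * μ v, fun v => mul_nonneg hr (hμ v), ?_⟩
  rw [Finset.smul_sum]
  exact Finset.sum_congr rfl fun v _ => by rw [smul_smul]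

lemma coneSum_gen_mem {t : Finset (Esp d)} {v : Esp d} (hv : v ∈ t) : v ∈ coneSum t := by
  refine ⟨fun w => if w = v then 1 else 0, fun w => ?_, ?_⟩
  · dsimp only; split <;> norm_num
  · have h1 : ∑ w ∈ t, (if w = v then (1 : ℝ) else 0) • w
        = ∑ w ∈ t, (if w = v then v else 0) := by
      refine Finset.sum_congr rfl fun w _ => ?_
      split
      · next h => rw [h, one_smul]
      · rw [zero_smul]
    rw [h1, Finset.sum_ite_eq' t v (fun _ => v), if_pos hv]

lemma coneSum_mono {t' t : Finset (Esp d)} (h : t' ⊆ t) : coneSum t' ⊆ coneSum t := by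
  rintro x ⟨μ, hμ, rfl⟩
  refine ⟨fun v => if v ∈ t' then μ v else 0, fun v => ?_, ?_⟩
  · dsimp only; split
    · exact hμ v
    · exact le_refl _
  · have h1 : ∑ v ∈ t', μ v • v = ∑ v ∈ t', (if v ∈ t' then μ v else 0) • v :=
      Finset.sum_congr rfl fun v hv => by rw [if_pos hv]
    rw [h1]
    exact Finset.sum_subset h (fun v _ hv => by rw [if_neg hv, zero_smul])

lemma coneSum_isClosed_of_indep {t : Finset (Esp d)}
    (hind : LinearIndependent ℝ (fun v : {x // x ∈ t} => (v : Esp d))) :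
    IsClosed (coneSum t) := by
  set T : ({x // x ∈ t} → ℝ) →ₗ[ℝ] Esp d :=
    Fintype.linearCombination ℝ (fun v : {x // x ∈ t} => (v : Esp d)) with hT
  have hTapp : ∀ μ : {x // x ∈ t} → ℝ, T μ = ∑ i, μ i • (i : Esp d) := fun μ => rfl
  have hker : LinearMap.ker T = ⊥ := by
    rw [LinearMap.ker_eq_bot']
    intro μ hμ
    have := Fintype.linearIndependent_iff.mp hind μ (by rw [← hTapp]; exact hμ)
    funext i; exact this i
  have hemb := LinearMap.isClosedEmbedding_of_injective hker
  have himage : coneSum t = T '' {μ : {x // x ∈ t} → ℝ | ∀ i, 0 ≤ μ i} := by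
    ext x
    constructor
    · rintro ⟨μ, hμ, rfl⟩
      refine ⟨fun i => μ (i : Esp d), fun i => hμ _, ?_⟩
      rw [hTapp, Finset.univ_eq_attach, Finset.sum_attach t (fun v => μ v • v)]
    · rintro ⟨μ, hμ, rfl⟩
      set μ' : Esp d → ℝ := fun v => if h : v ∈ t then μ ⟨v, h⟩ else 0 with hμ'
      have hμ'i : ∀ i : {x // x ∈ t}, μ' (i : Esp d) = μ i := fun i => dif_pos i.2
      refine ⟨μ', fun v => ?_, ?_⟩
      · rw [hμ']; dsimp only; split
        · exact hμ _
        · exact le_refl _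
      · rw [hTapp, Finset.univ_eq_attach, ← Finset.sum_attach t (fun v => μ' v • v)]
        exact Finset.sum_congr rfl fun i _ => by rw [hμ'i i]
  rw [himage]
  refine hemb.isClosedMap _ ?_
  have heq : {μ : {x // x ∈ t} → ℝ | ∀ i, 0 ≤ μ i} = ⋂ i, {μ | 0 ≤ μ i} := by
    ext μ; simp [Set.mem_iInter]
  rw [heq]
  exact isClosed_iInter fun i => isClosed_le continuous_const (continuous_apply i)

lemma coneSum_cara : ∀ (n : ℕ) (t : Finset (Esp d)), t.card ≤ n → ∀ x ∈ coneSum t,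
    ∃ t' : Finset (Esp d), t' ⊆ t ∧
      LinearIndependent ℝ (fun v : {x // x ∈ t'} => (v : Esp d)) ∧ x ∈ coneSum t' := by
  intro n
  induction n with
  | zero =>
    intro t hcard x hx
    have ht : t = ∅ := Finset.card_eq_zero.mp (Nat.le_zero.mp hcard)
    subst ht
    refine ⟨∅, subset_rfl, ?_, hx⟩
    have : IsEmpty {x : Esp d // x ∈ (∅ : Finset (Esp d))} := by
      constructor; rintro ⟨x, hx⟩; simp at hx
    exact linearIndependent_empty_type
  | succ n ih =>
    intro t hcard x hx
    by_cases hind : LinearIndependent ℝ (fun v : {x // x ∈ t} => (v : Esp d))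
    · exact ⟨t, subset_rfl, hind, hx⟩
    · obtain ⟨g, hgsum, i₀, hgi₀⟩ := Fintype.not_linearIndependent_iff.mp hind
      obtain ⟨μ, hμ, rfl⟩ := hx
      set g' : Esp d → ℝ := fun v => if h : v ∈ t then g ⟨v, h⟩ else 0 with hg'
      have hg'i : ∀ i : {x // x ∈ t}, g' (i : Esp d) = g i := fun i => dif_pos i.2
      have hg'sum : ∑ v ∈ t, g' v • v = 0 := by
        rw [← Finset.sum_attach t (fun v => g' v • v)]
        rw [Finset.univ_eq_attach] at hgsum
        rw [← hgsum]
        exact Finset.sum_congr rfl fun i _ => by rw [hg'i i]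
      have hexists : ∃ gg : Esp d → ℝ, (∑ v ∈ t, gg v • v = 0) ∧ ∃ v ∈ t, 0 < gg v := by
        rcases lt_or_gt_of_ne hgi₀ with hneg | hpos
        · refine ⟨fun v => -g' v, ?_, ?_⟩
          · have : ∑ v ∈ t, (-g' v) • v = -∑ v ∈ t, g' v • v := by
              rw [← Finset.sum_neg_distrib]
              exact Finset.sum_congr rfl fun v _ => by rw [neg_smul]
            rw [this, hg'sum, neg_zero]
          · exact ⟨(i₀ : Esp d), i₀.2, by dsimp only; rw [hg'i i₀]; simpa using hneg⟩
        · exact ⟨g', hg'sum, ⟨(i₀ : Esp d), i₀.2, by rw [hg'i i₀]; exact hpos⟩⟩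
      obtain ⟨gg, hggsum, hggpos⟩ := hexists
      set pos : Finset (Esp d) := t.filter (fun v => 0 < gg v) with hpos
      have hposne : pos.Nonempty := by
        obtain ⟨v, hv, hgv⟩ := hggpos
        exact ⟨v, Finset.mem_filter.mpr ⟨hv, hgv⟩⟩
      obtain ⟨v₀, hv₀pos, hv₀min⟩ := pos.exists_min_image (fun v => μ v / gg v) hposne
      have hv₀t : v₀ ∈ t := (Finset.mem_filter.mp hv₀pos).1
      have hgv₀ : 0 < gg v₀ := (Finset.mem_filter.mp hv₀pos).2
      set r : ℝ := μ v₀ / gg v₀ with hr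
      have hr0 : 0 ≤ r := div_nonneg (hμ v₀) hgv₀.le
      set μ' : Esp d → ℝ := fun v => μ v - r * gg v with hμ'
      have hμ'v₀ : μ' v₀ = 0 := by
        rw [hμ']; dsimp only; rw [hr]; field_simp; ring
      have hμ'nonneg : ∀ v ∈ t, 0 ≤ μ' v := by
        intro v hv
        rw [hμ']; dsimp only
        rcases le_or_gt (gg v) 0 with hgv | hgv
        · have h2 : r * gg v ≤ 0 := mul_nonpos_of_nonneg_of_nonpos hr0 hgv
          have := hμ v; linarith
        · have hle := hv₀min v (Finset.mem_filter.mpr ⟨hv, hgv⟩)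
          have h3 : r * gg v ≤ μ v := by
            rw [hr, div_mul_eq_mul_div, div_le_iff₀ hgv₀]
            rw [div_le_div_iff₀ hgv₀ hgv] at hle
            nlinarith
          linarith
      have hsum' : ∑ v ∈ t, μ v • v = ∑ v ∈ t, μ' v • v := by
        have h4 : ∑ v ∈ t, μ' v • v = ∑ v ∈ t, (μ v • v - (r * gg v) • v) :=
          Finset.sum_congr rfl fun v _ => by rw [hμ']; dsimp only; rw [sub_smul]
        rw [h4, Finset.sum_sub_distrib]
        have h5 : ∑ v ∈ t, (r * gg v) • v = r • ∑ v ∈ t, gg v • v := by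
          rw [Finset.smul_sum]
          exact Finset.sum_congr rfl fun v _ => by rw [smul_smul]
        rw [h5, hggsum, smul_zero, sub_zero]
      have hsum'' : ∑ v ∈ t, μ v • v = ∑ v ∈ t.erase v₀, μ' v • v := by
        rw [hsum']
        exact (Finset.sum_erase t (by rw [hμ'v₀, zero_smul])).symm
      have hcard' : (t.erase v₀).card ≤ n := by
        have := Finset.card_erase_of_mem hv₀t
        have := Finset.card_pos.mpr ⟨v₀, hv₀t⟩
        omega
      set μ'' : Esp d → ℝ := fun v => if v ∈ t.erase v₀ then μ' v else 0 with hμ''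
      have hμ''nonneg : ∀ v, 0 ≤ μ'' v := by
        intro v
        rw [hμ'']; dsimp only; split
        · next hv => exact hμ'nonneg v (Finset.mem_of_mem_erase hv)
        · exact le_refl _
      have hsum''' : ∑ v ∈ t, μ v • v = ∑ v ∈ t.erase v₀, μ'' v • v := by
        rw [hsum'']
        exact Finset.sum_congr rfl fun v hv => by rw [hμ'']; dsimp only; rw [if_pos hv]
      obtain ⟨t', ht'sub, ht'ind, ht'mem⟩ := ih (t.erase v₀) hcard'
        (∑ v ∈ t, μ v • v) ⟨μ'', hμ''nonneg, hsum'''⟩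
      exact ⟨t', ht'sub.trans (Finset.erase_subset _ _), ht'ind, ht'mem⟩

lemma coneSum_isClosed (t : Finset (Esp d)) : IsClosed (coneSum t) := by
  classical
  have hdec : coneSum t = ⋃ t' ∈ ((t.powerset.filter
      (fun t' => LinearIndependent ℝ (fun v : {x // x ∈ t'} => (v : Esp d)))) :
      Finset (Finset (Esp d))), coneSum t' := by
    apply subset_antisymm
    · intro x hx
      obtain ⟨t', ht'sub, ht'ind, ht'mem⟩ := coneSum_cara t.card t le_rfl x hx
      exact Set.mem_biUnion (Finset.mem_filter.mpr
        ⟨Finset.mem_powerset.mpr ht'sub, ht'ind⟩) ht'mem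
    · refine Set.iUnion₂_subset fun t' ht' => ?_
      exact coneSum_mono (Finset.mem_powerset.mp (Finset.mem_filter.mp ht').1)
  rw [hdec]
  refine Set.Finite.isClosed_biUnion (Finset.finite_toSet _) fun t' ht' => ?_
  exact coneSum_isClosed_of_indep (Finset.mem_filter.mp ht').2

lemma farkas {t : Finset (Esp d)} {v : Esp d}
    (h : ∀ c : Esp d, (∀ u ∈ t, ⟪c, u⟫ ≤ 0) → ⟪c, v⟫ ≤ 0) : v ∈ coneSum t := by
  by_contra hvC
  obtain ⟨f, u, hfa, hufv⟩ := geometric_hahn_banach_closed_point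
    (coneSum_convex t) (coneSum_isClosed t) hvC
  have h0 : (0 : ℝ) < u := by
    have := hfa 0 (coneSum_zero_mem t)
    rwa [map_zero] at this
  have hneg : ∀ w ∈ t, f w ≤ 0 := by
    intro w hw
    by_contra hpos
    push_neg at hpos
    have hmem : (u / f w) • w ∈ coneSum t :=
      coneSum_smul_mem (div_nonneg h0.le hpos.le) (coneSum_gen_mem hw)
    have := hfa _ hmem
    rw [map_smul, smul_eq_mul, div_mul_cancel₀ _ hpos.ne'] at this
    exact lt_irrefl u this
  set c : Esp d := (InnerProductSpace.toDual ℝ (Esp d)).symm f with hc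
  have hcapp : ∀ w : Esp d, ⟪c, w⟫ = f w := fun w =>
    InnerProductSpace.toDual_symm_apply
  have := h c (fun w hw => by rw [hcapp]; exact hneg w hw)
  rw [hcapp] at this
  linarith

lemma subset_of_support {A B : Set (Esp d)} (hB : Convex ℝ B) (hBc : IsClosed B)
    (h : ∀ c : Esp d, ∀ a ∈ A, ∃ b ∈ B, ⟪c, b⟫ ≤ ⟪c, a⟫) : A ⊆ B := by
  intro x hx
  by_contra hxB
  obtain ⟨f, u, hfx, hfb⟩ := geometric_hahn_banach_point_closed hB hBc hxB
  obtain ⟨b, hb, hble⟩ := h ((InnerProductSpace.toDual ℝ (Esp d)).symm f) x hx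
  rw [InnerProductSpace.toDual_symm_apply, InnerProductSpace.toDual_symm_apply] at hble
  have := hfb b hb
  linarith

/-- The normal-fan refinement condition. -/
def NCond (P Q : Set (Esp d)) : Prop :=
  ∀ p ∈ Set.extremePoints ℝ P, ∃ q ∈ Set.extremePoints ℝ Q,
    ∀ c : Esp d, (∀ x ∈ P, ⟪c, p⟫ ≤ ⟪c, x⟫) → ∀ y ∈ Q, ⟪c, q⟫ ≤ ⟪c, y⟫

lemma cond_of_summand {P Q R : Set (Esp d)} {α : ℝ} (hα : 0 < α)
    (hPQR : P = α • Q + R) : NCond P Q := by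
  intro p hp
  have hp' : p ∈ Set.extremePoints ℝ (α • Q + R) := hPQR ▸ hp
  have hpP : p ∈ P := extremePoints_subset hp
  have hpP' : p ∈ α • Q + R := hPQR ▸ hpP
  rw [Set.mem_add] at hpP'
  obtain ⟨w, hwQ, r, hrR, hwr⟩ := hpP'
  have hwext : w ∈ Set.extremePoints ℝ (α • Q) := extreme_add_left hp' hwQ hrR hwr
  have hq0 : α⁻¹ • w ∈ Set.extremePoints ℝ Q := extreme_smul_mem hα hwext
  refine ⟨α⁻¹ • w, hq0, fun c hc y hy => ?_⟩
  have hpface : p ∈ polyFace (α • Q + R) c := by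
    rw [← hPQR]; exact ⟨hpP, hc⟩
  rw [face_add, Set.mem_add] at hpface
  obtain ⟨w', hw', r', hr', hw'r'⟩ := hpface
  obtain ⟨hww, -⟩ := extreme_add_unique hp' hw'.1 hr'.1 hwQ hrR hw'r' hwr
  have hwface : w ∈ polyFace (α • Q) c := hww ▸ hw'
  have hmin := hwface.2 (α • y) (Set.smul_mem_smul_set hy)
  have hw2 : w = α • (α⁻¹ • w) := by
    rw [smul_smul, mul_inv_cancel₀ hα.ne', one_smul]
  rw [hw2] at hmin
  rw [real_inner_smul_right c (α⁻¹ • w) α] at hmin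
  rw [real_inner_smul_right c y α] at hmin
  exact le_of_mul_le_mul_left hmin hα

lemma partner_unique {sP sQ : Finset (Esp d)} {P Q : Set (Esp d)}
    (hsP : sP.Nonempty) (hsQ : sQ.Nonempty)
    (hPdef : P = convexHull ℝ (sP : Set (Esp d)))
    (hQdef : Q = convexHull ℝ (sQ : Set (Esp d)))
    {p q q₀ : Esp d} (hpP : p ∈ P) (hqQ : q ∈ Q) (hq₀Q : q₀ ∈ Q)
    (hpq : p + q ∈ Set.extremePoints ℝ (P + Q))
    (hq₀N : ∀ c : Esp d, (∀ x ∈ P, ⟪c, p⟫ ≤ ⟪c, x⟫) → ∀ y ∈ Q, ⟪c, q₀⟫ ≤ ⟪c, y⟫) :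
    q = q₀ := by
  have hPQdef : P + Q = convexHull ℝ (((sP + sQ : Finset (Esp d))) : Set (Esp d)) := by
    rw [Finset.coe_add, convexHull_add, hPdef, hQdef]
  obtain ⟨c₀, hexp⟩ := exposed_vertex_of_extreme (hPQdef ▸ hpq)
  have hface : polyFace (P + Q) c₀ = {p + q} := by rw [hPQdef]; exact hexp
  rw [face_add] at hface
  have hPcomp : IsCompact P := by
    rw [hPdef]; exact sP.finite_toSet.isCompact_convexHull ℝ
  have hQcomp : IsCompact Q := by
    rw [hQdef]; exact sQ.finite_toSet.isCompact_convexHull ℝ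
  have hPne : P.Nonempty := by
    rw [hPdef]; exact (Finset.coe_nonempty.mpr hsP).convexHull
  have hQne : Q.Nonempty := by
    rw [hQdef]; exact (Finset.coe_nonempty.mpr hsQ).convexHull
  obtain ⟨a, b, hfa, hfb, hab⟩ := add_eq_singleton
    (face_nonempty hPcomp hPne c₀) (face_nonempty hQcomp hQne c₀) hface
  have haP : a ∈ P := by
    have : a ∈ polyFace P c₀ := by rw [hfa]; exact rfl
    exact this.1
  have hbQ : b ∈ Q := by
    have : b ∈ polyFace Q c₀ := by rw [hfb]; exact rfl
    exact this.1
  obtain ⟨hap, hbq⟩ := extreme_add_unique hpq haP hbQ hpP hqQ hab rfl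
  have hc₀min : ∀ x ∈ P, ⟪c₀, p⟫ ≤ ⟪c₀, x⟫ := by
    intro x hx
    have : p ∈ polyFace P c₀ := by rw [hfa, hap]; exact rfl
    exact this.2 x hx
  have hq₀face : q₀ ∈ polyFace Q c₀ := ⟨hq₀Q, hq₀N c₀ hc₀min⟩
  rw [hfb] at hq₀face
  rw [← hbq]
  exact hq₀face.symm

lemma feq_of_cond {sP sQ : Finset (Esp d)} {P Q : Set (Esp d)}
    (hsP : sP.Nonempty) (hsQ : sQ.Nonempty)
    (hPdef : P = convexHull ℝ (sP : Set (Esp d)))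
    (hQdef : Q = convexHull ℝ (sQ : Set (Esp d)))
    (hcond : NCond P Q) :
    (Set.extremePoints ℝ P).ncard = (Set.extremePoints ℝ (P + Q)).ncard := by
  classical
  set τ : Esp d → Esp d := fun p =>
    p + (if h : ∃ q, q ∈ Set.extremePoints ℝ Q ∧ p + q ∈ Set.extremePoints ℝ (P + Q) then
      Classical.choose h else 0) with hτ
  have hτspec : ∀ p ∈ Set.extremePoints ℝ P, τ p ∈ Set.extremePoints ℝ (P + Q) ∧
      ∃ q ∈ Set.extremePoints ℝ Q, τ p = p + q := by
    intro p hp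
    have hex : ∃ q, q ∈ Set.extremePoints ℝ Q ∧ p + q ∈ Set.extremePoints ℝ (P + Q) := by
      obtain ⟨q, hq, hpq⟩ := partner_exists hsQ hPdef hQdef hp
      exact ⟨q, hq, hpq⟩
    have hτp : τ p = p + Classical.choose hex := by rw [hτ]; dsimp only; rw [dif_pos hex]
    obtain ⟨hq, hpq⟩ := Classical.choose_spec hex
    exact ⟨by rw [hτp]; exact hpq, ⟨Classical.choose hex, hq, hτp⟩⟩
  have hbij : Set.BijOn τ (Set.extremePoints ℝ P) (Set.extremePoints ℝ (P + Q)) := by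
    refine ⟨fun p hp => (hτspec p hp).1, ?_, ?_⟩
    · -- InjOn
      intro p hp p' hp' heq
      obtain ⟨-, q, hq, hτp⟩ := hτspec p hp
      obtain ⟨hext, q', hq', hτp'⟩ := hτspec p' hp'
      have hyext : p' + q' ∈ Set.extremePoints ℝ (P + Q) := by rw [← hτp']; exact hext
      have heq2 : p + q = p' + q' := by rw [← hτp, ← hτp', heq]
      exact (extreme_add_unique hyext (extremePoints_subset hp) (extremePoints_subset hq)
        (extremePoints_subset hp') (extremePoints_subset hq') heq2 rfl).1
    · -- SurjOn
      intro y hy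
      have hyPQ : y ∈ P + Q := extremePoints_subset hy
      rw [Set.mem_add] at hyPQ
      obtain ⟨a, haP, b, hbQ, hab⟩ := hyPQ
      have haext : a ∈ Set.extremePoints ℝ P := extreme_add_left hy haP hbQ hab
      have hbext : b ∈ Set.extremePoints ℝ Q := extreme_add_right hy haP hbQ hab
      obtain ⟨hτaext, q₁, hq₁, hτa⟩ := hτspec a haext
      obtain ⟨q₀, hq₀ext, hq₀N⟩ := hcond a haext
      have hb0 : b = q₀ := partner_unique hsP hsQ hPdef hQdef haP hbQ
        (extremePoints_subset hq₀ext) (by rw [hab]; exact hy) hq₀N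
      have hq10 : q₁ = q₀ := partner_unique hsP hsQ hPdef hQdef haP
        (extremePoints_subset hq₁) (extremePoints_subset hq₀ext)
        (by rw [← hτa]; exact hτaext) hq₀N
      refine ⟨a, haext, ?_⟩
      rw [hτa, hq10, ← hb0, hab]
  rw [← hbij.image_eq, Set.ncard_image_of_injOn hbij.injOn]

lemma cond_of_feq {sP sQ : Finset (Esp d)} {P Q : Set (Esp d)}
    (hsP : sP.Nonempty) (hsQ : sQ.Nonempty)
    (hPdef : P = convexHull ℝ (sP : Set (Esp d)))
    (hQdef : Q = convexHull ℝ (sQ : Set (Esp d)))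
    (hfeq : (Set.extremePoints ℝ P).ncard = (Set.extremePoints ℝ (P + Q)).ncard) :
    NCond P Q := by
  classical
  have hPQdef : P + Q = convexHull ℝ (((sP + sQ : Finset (Esp d))) : Set (Esp d)) := by
    rw [Finset.coe_add, convexHull_add, hPdef, hQdef]
  have hfinP : (Set.extremePoints ℝ P).Finite :=
    Set.Finite.subset sP.finite_toSet (by rw [hPdef]; exact extremePoints_convexHull_subset)
  have hfinPQ : (Set.extremePoints ℝ (P + Q)).Finite :=
    Set.Finite.subset (sP + sQ).finite_toSet
      (by rw [hPQdef]; exact extremePoints_convexHull_subset)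
  set π : Esp d → Esp d := fun y =>
    if h : ∃ a, ∃ b, a ∈ P ∧ b ∈ Q ∧ a + b = y then Classical.choose h else 0 with hπ
  have hπspec : ∀ y ∈ P + Q, ∃ b, π y ∈ P ∧ b ∈ Q ∧ π y + b = y := by
    intro y hy
    rw [Set.mem_add] at hy
    obtain ⟨a, ha, b, hb, hab⟩ := hy
    have hex : ∃ a, ∃ b, a ∈ P ∧ b ∈ Q ∧ a + b = y := ⟨a, b, ha, hb, hab⟩
    have : π y = Classical.choose hex := by rw [hπ]; dsimp only; rw [dif_pos hex]
    rw [this]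
    exact Classical.choose_spec hex
  have hπdec : ∀ p q, p ∈ P → q ∈ Q → p + q ∈ Set.extremePoints ℝ (P + Q) →
      π (p + q) = p := by
    intro p q hp hq hpq
    obtain ⟨b, hπP, hbQ, hπb⟩ := hπspec (p + q) (extremePoints_subset hpq)
    exact (extreme_add_unique hpq hπP hbQ hp hq hπb rfl).1
  have hsurj : Set.SurjOn π (Set.extremePoints ℝ (P + Q)) (Set.extremePoints ℝ P) := by
    intro p hp
    obtain ⟨q, hq, hpq⟩ := partner_exists hsQ hPdef hQdef hp
    exact ⟨p + q, hpq, hπdec p q (extremePoints_subset hp) (extremePoints_subset hq) hpq⟩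
  have hmapsto : Set.MapsTo π (Set.extremePoints ℝ (P + Q)) (Set.extremePoints ℝ P) := by
    intro y hy
    obtain ⟨b, hπP, hbQ, hπb⟩ := hπspec y (extremePoints_subset hy)
    exact extreme_add_left hy hπP hbQ hπb
  have himg : π '' (Set.extremePoints ℝ (P + Q)) = Set.extremePoints ℝ P :=
    subset_antisymm (Set.mapsTo_iff_image_subset.mp hmapsto) hsurj
  have hinj : Set.InjOn π (Set.extremePoints ℝ (P + Q)) := by
    apply hfinPQ.injOn_of_encard_image_eq
    rw [himg, ← hfinP.cast_ncard_eq, ← hfinPQ.cast_ncard_eq, hfeq]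
  intro p hp
  apply normal_inclusion hsQ hPdef hQdef hp
  intro q q' hq hq' hpq hpq'
  have h1 : π (p + q) = p :=
    hπdec p q (extremePoints_subset hp) (extremePoints_subset hq) hpq
  have h2 : π (p + q') = p :=
    hπdec p q' (extremePoints_subset hp) (extremePoints_subset hq') hpq'
  have := hinj hpq hpq' (h1.trans h2.symm)
  exact add_left_cancel this

lemma summand_of_cond {sP sQ : Finset (Esp d)} {P Q : Set (Esp d)}
    (hsP : sP.Nonempty) (hsQ : sQ.Nonempty)
    (hPdef : P = convexHull ℝ (sP : Set (Esp d)))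
    (hQdef : Q = convexHull ℝ (sQ : Set (Esp d)))
    (hcond : NCond P Q) :
    ∃ α : ℝ, 0 < α ∧ ∃ R : Set (Esp d), IsPolytope R ∧ P = α • Q + R := by
  classical
  have hPcomp : IsCompact P := by rw [hPdef]; exact sP.finite_toSet.isCompact_convexHull ℝ
  have hQcomp : IsCompact Q := by rw [hQdef]; exact sQ.finite_toSet.isCompact_convexHull ℝ
  have hPne : P.Nonempty := by rw [hPdef]; exact (Finset.coe_nonempty.mpr hsP).convexHull
  have hQne : Q.Nonempty := by rw [hQdef]; exact (Finset.coe_nonempty.mpr hsQ).convexHull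
  have hPconv : Convex ℝ P := by rw [hPdef]; exact convex_convexHull ℝ _
  have hQconv : Convex ℝ Q := by rw [hQdef]; exact convex_convexHull ℝ _
  have hfinP : (Set.extremePoints ℝ P).Finite :=
    Set.Finite.subset sP.finite_toSet (by rw [hPdef]; exact extremePoints_convexHull_subset)
  have hfinQ : (Set.extremePoints ℝ Q).Finite :=
    Set.Finite.subset sQ.finite_toSet (by rw [hQdef]; exact extremePoints_convexHull_subset)
  set FP : Finset (Esp d) := hfinP.toFinset with hFP
  set FQ : Finset (Esp d) := hfinQ.toFinset with hFQ
  have hFPmem : ∀ {x}, x ∈ FP ↔ x ∈ Set.extremePoints ℝ P := fun {x} => hfinP.mem_toFinset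
  have hFQmem : ∀ {x}, x ∈ FQ ↔ x ∈ Set.extremePoints ℝ Q := fun {x} => hfinQ.mem_toFinset
  -- the partner function
  set qf : Esp d → Esp d := fun p =>
    if h : ∃ q, q ∈ Set.extremePoints ℝ Q ∧
        (∀ c : Esp d, (∀ x ∈ P, ⟪c, p⟫ ≤ ⟪c, x⟫) → ∀ y ∈ Q, ⟪c, q⟫ ≤ ⟪c, y⟫) then
      Classical.choose h else 0 with hqf
  have hqfspec : ∀ p ∈ Set.extremePoints ℝ P, qf p ∈ Set.extremePoints ℝ Q ∧
      (∀ c : Esp d, (∀ x ∈ P, ⟪c, p⟫ ≤ ⟪c, x⟫) → ∀ y ∈ Q, ⟪c, qf p⟫ ≤ ⟪c, y⟫) := by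
    intro p hp
    have hex : ∃ q, q ∈ Set.extremePoints ℝ Q ∧
        (∀ c : Esp d, (∀ x ∈ P, ⟪c, p⟫ ≤ ⟪c, x⟫) → ∀ y ∈ Q, ⟪c, q⟫ ≤ ⟪c, y⟫) := by
      obtain ⟨q, hq, hN⟩ := hcond p hp
      exact ⟨q, hq, hN⟩
    have : qf p = Classical.choose hex := by rw [hqf]; dsimp only; rw [dif_pos hex]
    rw [this]
    exact Classical.choose_spec hex
  -- Farkas bounds
  have key : ∀ p' ∈ Set.extremePoints ℝ P, ∀ q'' ∈ Set.extremePoints ℝ Q,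
      ∃ β : ℝ, 0 ≤ β ∧ ∀ c : Esp d, ∀ D : ℝ,
        (∀ p'' ∈ Set.extremePoints ℝ P, ⟪c, p' - p''⟫ ≤ D) → 0 ≤ D →
          ⟪c, qf p' - q''⟫ ≤ β * D := by
    intro p' hp' q'' hq''
    set t : Finset (Esp d) := FP.image (fun p'' => p' - p'') with ht
    have hfark : qf p' - q'' ∈ coneSum t := by
      apply farkas
      intro c hc
      have hN : ∀ x ∈ P, ⟪c, p'⟫ ≤ ⟪c, x⟫ := by
        obtain ⟨z, hzext, hzmin⟩ := exists_vertex_min hPcomp hPne c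
        have hz : ⟪c, p' - z⟫ ≤ 0 := hc _ (Finset.mem_image.mpr ⟨z, hFPmem.mpr hzext, rfl⟩)
        rw [inner_sub_right] at hz
        intro x hx
        have := hzmin x hx
        linarith
      have hQmin := (hqfspec p' hp').2 c hN
      rw [inner_sub_right]
      have := hQmin q'' (extremePoints_subset hq'')
      linarith
    obtain ⟨μ, hμ, hsum⟩ := hfark
    refine ⟨∑ u ∈ t, μ u, Finset.sum_nonneg fun u _ => hμ u, fun c D hD hD0 => ?_⟩
    have hexp : ⟪c, qf p' - q''⟫ = ∑ u ∈ t, μ u * ⟪c, u⟫ := by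
      rw [hsum, inner_sum]
      exact Finset.sum_congr rfl fun u _ => real_inner_smul_right c u (μ u)
    rw [hexp]
    have : ∑ u ∈ t, μ u * ⟪c, u⟫ ≤ ∑ u ∈ t, μ u * D := by
      refine Finset.sum_le_sum fun u hu => ?_
      obtain ⟨p'', hp''FP, rfl⟩ := Finset.mem_image.mp hu
      exact mul_le_mul_of_nonneg_left (hD p'' (hFPmem.mp hp''FP)) (hμ _)
    calc ∑ u ∈ t, μ u * ⟪c, u⟫ ≤ ∑ u ∈ t, μ u * D := this
      _ = (∑ u ∈ t, μ u) * D := by rw [Finset.sum_mul]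
  choose! β hβ0 hβ using key
  -- pick α
  have hFPne : FP.Nonempty := by
    obtain ⟨z, hz, -⟩ := exists_vertex_min hPcomp hPne 0
    exact ⟨z, hFPmem.mpr hz⟩
  have hFQne : FQ.Nonempty := by
    obtain ⟨z, hz, -⟩ := exists_vertex_min hQcomp hQne 0
    exact ⟨z, hFQmem.mpr hz⟩
  have hprodne : (FP ×ˢ FQ).Nonempty := hFPne.product hFQne
  set α : ℝ := (FP ×ˢ FQ).inf' hprodne (fun pr => 1 / (max (β pr.1 pr.2) 0 + 1)) with hαdef
  have hαpos : 0 < α := by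
    rw [hαdef, Finset.lt_inf'_iff]
    intro pr _
    positivity
  have hαle : ∀ p' ∈ Set.extremePoints ℝ P, ∀ q'' ∈ Set.extremePoints ℝ Q,
      α * (β p' q'' + 1) ≤ 1 := by
    intro p' hp' q'' hq''
    have hmem : (p', q'') ∈ FP ×ˢ FQ :=
      Finset.mem_product.mpr ⟨hFPmem.mpr hp', hFQmem.mpr hq''⟩
    have h1 : α ≤ 1 / (max (β p' q'') 0 + 1) := Finset.inf'_le _ hmem
    have h2 : 0 ≤ β p' q'' := hβ0 p' hp' q'' hq''
    have h3 : max (β p' q'') 0 = β p' q'' := max_eq_left h2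
    rw [h3] at h1
    rw [← le_div_iff₀ (by linarith)]
    exact h1
  -- key inequality
  have keyineq : ∀ c : Esp d, ∀ p' ∈ Set.extremePoints ℝ P, ∀ z ∈ Set.extremePoints ℝ P,
      (∀ x ∈ P, ⟪c, z⟫ ≤ ⟪c, x⟫) →
        α * (⟪c, qf p'⟫ - ⟪c, qf z⟫) ≤ ⟪c, p'⟫ - ⟪c, z⟫ := by
    intro c p' hp' z hz hzmin
    have hq''ext : qf z ∈ Set.extremePoints ℝ Q := (hqfspec z hz).1
    have hD0 : 0 ≤ ⟪c, p'⟫ - ⟪c, z⟫ := by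
      have := hzmin p' (extremePoints_subset hp'); linarith
    have hDb : ∀ p'' ∈ Set.extremePoints ℝ P, ⟪c, p' - p''⟫ ≤ ⟪c, p'⟫ - ⟪c, z⟫ := by
      intro p'' hp''
      rw [inner_sub_right]
      have := hzmin p'' (extremePoints_subset hp'')
      linarith
    have hX := hβ p' hp' (qf z) hq''ext c (⟪c, p'⟫ - ⟪c, z⟫) hDb hD0
    rw [inner_sub_right] at hX
    have hβnn := hβ0 p' hp' (qf z) hq''ext
    have hle := hαle p' hp' (qf z) hq''ext
    set X : ℝ := ⟪c, qf p'⟫ - ⟪c, qf z⟫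
    set D : ℝ := ⟪c, p'⟫ - ⟪c, z⟫
    set B : ℝ := β p' (qf z)
    -- hX : X ≤ B * D, want α * X ≤ D
    nlinarith [mul_le_mul_of_nonneg_left hX hαpos.le, mul_nonneg (mul_nonneg hαpos.le hβnn) hD0]
  -- define R
  set gens : Finset (Esp d) := FP.image (fun p' => p' - α • qf p') with hgens
  set R : Set (Esp d) := convexHull ℝ (gens : Set (Esp d)) with hRdef
  have hgensne : gens.Nonempty := hFPne.image _
  have hRcomp : IsCompact R := gens.finite_toSet.isCompact_convexHull ℝ
  have hRconv : Convex ℝ R := convex_convexHull ℝ _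
  refine ⟨α, hαpos, R, ⟨gens, hgensne, rfl⟩, ?_⟩
  -- final set equality
  apply subset_antisymm
  · -- P ⊆ α • Q + R
    apply subset_of_support (Convex.add (hQconv.smul α) hRconv)
      (((hQcomp.smul α).add hRcomp).isClosed)
    intro c a ha
    obtain ⟨z, hzext, hzmin⟩ := exists_vertex_min hPcomp hPne c
    have hqzQ : qf z ∈ Q := extremePoints_subset (hqfspec z hzext).1
    have hmem : α • qf z + (z - α • qf z) ∈ α • Q + R :=
      Set.add_mem_add (Set.smul_mem_smul_set hqzQ)
        (subset_convexHull ℝ _ (Finset.mem_coe.mpr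
          (Finset.mem_image.mpr ⟨z, hFPmem.mpr hzext, rfl⟩)))
    have heq : α • qf z + (z - α • qf z) = z := by abel
    rw [heq] at hmem
    exact ⟨z, hmem, hzmin a ha⟩
  · -- α • Q + R ⊆ P
    apply subset_of_support hPconv hPcomp.isClosed
    intro c a ha
    rw [Set.mem_add] at ha
    obtain ⟨w, hw, r, hr, rfl⟩ := ha
    obtain ⟨y, hyQ, rfl⟩ := Set.mem_smul_set.mp hw
    obtain ⟨z, hzext, hzmin⟩ := exists_vertex_min hPcomp hPne c
    refine ⟨z, extremePoints_subset hzext, ?_⟩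
    obtain ⟨g, hg, hgle⟩ := convex_min c (hRdef ▸ hr)
    obtain ⟨p', hp'FP, rfl⟩ := Finset.mem_image.mp (Finset.mem_coe.mp hg)
    have hp'ext : p' ∈ Set.extremePoints ℝ P := hFPmem.mp hp'FP
    have hkey := keyineq c p' hp'ext z hzext hzmin
    have hQmin := (hqfspec z hzext).2 c hzmin y hyQ
    have hexp1 : ⟪c, α • y + r⟫ = α * ⟪c, y⟫ + ⟪c, r⟫ := by
      rw [inner_add_right, real_inner_smul_right]
    have hexp2 : ⟪c, p' - α • qf p'⟫ = ⟪c, p'⟫ - α * ⟪c, qf p'⟫ := by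
      rw [inner_sub_right, real_inner_smul_right]
    rw [hexp2] at hgle
    have hα1 : α * ⟪c, qf z⟫ ≤ α * ⟪c, y⟫ := mul_le_mul_of_nonneg_left hQmin hαpos.le
    rw [hexp1]
    nlinarith

end Stmt0Aux

theorem stmt0 {d : ℕ} (P Q : Set (Esp d)) (hP : IsPolytope P) (hQ : IsPolytope Q) :
    (∃ α : ℝ, 0 < α ∧ ∃ R : Set (Esp d), IsPolytope R ∧ P = α • Q + R) ↔
      f0 P = f0 (P + Q) := by
  obtain ⟨sP, hsPne, hPdef⟩ := hP
  obtain ⟨sQ, hsQne, hQdef⟩ := hQ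
  constructor
  · rintro ⟨α, hα, R, hR, hPQR⟩
    have hc := Stmt0Aux.cond_of_summand hα hPQR
    have hfe := Stmt0Aux.feq_of_cond hsPne hsQne hPdef hQdef hc
    simpa [f0, polyVerts] using hfe
  · intro hfeq
    have hfeq' : (Set.extremePoints ℝ P).ncard = (Set.extremePoints ℝ (P + Q)).ncard := by
      simpa [f0, polyVerts] using hfeq
    exact Stmt0Aux.summand_of_cond hsPne hsQne hPdef hQdef
      (Stmt0Aux.cond_of_feq hsPne hsQne hPdef hQdef hfeq')
end
end

section
/- For any two polytopes P and Q in ℝ^d, the diameter of their Minkowski sum satisfies δ(P + Q) ≥ max{δ(P), δ(Q)}. -/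
open Pointwise
open scoped RealInnerProductSpace

noncomputable section

namespace PolyAux

variable {d : ℕ}

lemma innerLinear (c : Esp d) : IsLinearMap ℝ (fun x : Esp d => ⟪c, x⟫) :=
  ⟨fun x y => inner_add_right c x y, fun r x => real_inner_smul_right c x r⟩

/-- the set of minimizers of ⟪c,·⟫ within s -/
def smin (s : Finset (Esp d)) (c : Esp d) : Finset (Esp d) :=
  @Finset.filter _ (fun y => ∀ z ∈ s, ⟪c, y⟫ ≤ ⟪c, z⟫) (Classical.decPred _) s

lemma mem_smin {s : Finset (Esp d)} {c y} :
    y ∈ smin s c ↔ y ∈ s ∧ ∀ z ∈ s, ⟪c, y⟫ ≤ ⟪c, z⟫ := by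
  classical
  simp [smin]

lemma smin_subset {s : Finset (Esp d)} {c} : smin s c ⊆ s := fun y hy => (mem_smin.1 hy).1

lemma smin_nonempty {s : Finset (Esp d)} (hs : s.Nonempty) (c : Esp d) :
    (smin s c).Nonempty := by
  obtain ⟨z, hz, hmin⟩ := s.exists_min_image (fun y => ⟪c, y⟫) hs
  exact ⟨z, mem_smin.2 ⟨hz, hmin⟩⟩

lemma hull_le {s : Finset (Esp d)} {c : Esp d} {m : ℝ} (h : ∀ y ∈ s, m ≤ ⟪c, y⟫) :
    ∀ x ∈ convexHull ℝ (s : Set (Esp d)), m ≤ ⟪c, x⟫ := by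
  intro x hx
  have : convexHull ℝ (s : Set (Esp d)) ⊆ {x | m ≤ ⟪c, x⟫} :=
    convexHull_min (fun y hy => h y hy) (convex_halfSpace_ge (innerLinear c) m)
  exact this hx

lemma hull_ge {s : Finset (Esp d)} {c : Esp d} {m : ℝ} (h : ∀ y ∈ s, ⟪c, y⟫ ≤ m) :
    ∀ x ∈ convexHull ℝ (s : Set (Esp d)), ⟪c, x⟫ ≤ m := by
  intro x hx
  have : convexHull ℝ (s : Set (Esp d)) ⊆ {x | ⟪c, x⟫ ≤ m} :=
    convexHull_min (fun y hy => h y hy) (convex_halfSpace_le (innerLinear c) m)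
  exact this hx

lemma smin_const {s : Finset (Esp d)} {c : Esp d} {y z : Esp d}
    (hy : y ∈ smin s c) (hz : z ∈ smin s c) : ⟪c, y⟫ = ⟪c, z⟫ :=
  le_antisymm ((mem_smin.1 hy).2 z (smin_subset hz)) ((mem_smin.1 hz).2 y (smin_subset hy))

/-- The face of a polytope in direction c is the hull of the minimizing points. -/
lemma faceHull (s : Finset (Esp d)) (hs : s.Nonempty) (c : Esp d) :
    polyFace (convexHull ℝ (s : Set (Esp d))) c = convexHull ℝ ((smin s c : Finset (Esp d)) : Set (Esp d)) := by
  obtain ⟨z₀, hz₀⟩ := smin_nonempty hs c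
  have hz₀s := smin_subset hz₀
  have hz₀min := (mem_smin.1 hz₀).2
  set m : ℝ := ⟪c, z₀⟫ with hm
  have hhull_ge : ∀ x ∈ convexHull ℝ (s : Set (Esp d)), m ≤ ⟪c, x⟫ := hull_le hz₀min
  have hsm_eq : ∀ x ∈ convexHull ℝ ((smin s c : Finset (Esp d)) : Set (Esp d)), ⟪c, x⟫ = m := by
    intro x hx
    have h1 : ⟪c, x⟫ ≤ m := hull_ge (fun y hy => (smin_const hy hz₀).le) x hx
    have h2 : m ≤ ⟪c, x⟫ :=
      hhull_ge x (convexHull_mono (by exact_mod_cast Finset.coe_subset.2 smin_subset) hx)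
    exact le_antisymm h1 h2
  apply Set.eq_of_subset_of_subset
  · rintro x ⟨hxP, hxmin⟩
    -- x has value m
    have hxm : ⟪c, x⟫ = m := by
      have h1 : ⟪c, x⟫ ≤ m :=
        hxmin z₀ (subset_convexHull ℝ (s : Set (Esp d)) (by exact_mod_cast hz₀s))
      exact le_antisymm h1 (hhull_ge x hxP)
    rw [Finset.convexHull_eq] at hxP
    obtain ⟨w, hw0, hw1, hwx⟩ := hxP
    -- weights vanish outside smin
    have hsupp : ∀ y ∈ s, y ∉ smin s c → w y = 0 := by
      intro y hy hyn
      by_contra hwy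
      have hwy' : 0 < w y := lt_of_le_of_ne (hw0 y hy) (Ne.symm hwy)
      have hyval : m < ⟪c, y⟫ := by
        rcases lt_or_ge m ⟪c, y⟫ with h | h
        · exact h
        · exact absurd (mem_smin.2 ⟨hy, fun z hz => by
            calc ⟪c, y⟫ ≤ m := h
            _ ≤ ⟪c, z⟫ := hz₀min z hz⟩) hyn
      -- then the total value exceeds m
      have hvx : ⟪c, x⟫ = ∑ y ∈ s, w y * ⟪c, y⟫ := by
        rw [← hwx, Finset.centerMass, hw1, inv_one, one_smul, inner_sum]
        exact Finset.sum_congr rfl (fun i _ => real_inner_smul_right c i (w i))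
      have hgt : m < ∑ y ∈ s, w y * ⟪c, y⟫ := by
        calc m = ∑ y ∈ s, w y * m := by rw [← Finset.sum_mul, hw1, one_mul]
        _ < ∑ y ∈ s, w y * ⟪c, y⟫ := by
            apply Finset.sum_lt_sum
            · intro i hi
              exact mul_le_mul_of_nonneg_left (hhull_ge i (subset_convexHull ℝ _ (by exact_mod_cast hi))) (hw0 i hi)
            · exact ⟨y, hy, by nlinarith⟩
      rw [hvx] at hxm; linarith
    -- so x is centerMass over smin
    have : (smin s c).centerMass w id = x := by
      rw [← hwx]
      exact (Finset.centerMass_subset id smin_subset hsupp)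
    rw [← this]
    apply Finset.centerMass_mem_convexHull
    · intro i hi; exact hw0 i (smin_subset hi)
    · have : ∑ y ∈ smin s c, w y = 1 := by
        rw [← hw1]
        exact Finset.sum_subset smin_subset (fun y hy hyn => hsupp y hy hyn)
      rw [this]; exact one_pos
    · intro i hi; exact Finset.mem_coe.2 hi
  · intro x hx
    refine ⟨convexHull_mono (by exact_mod_cast Finset.coe_subset.2 smin_subset) hx, ?_⟩
    intro y hy
    rw [hsm_eq x hx]
    exact hhull_ge y hy


/-- extreme points of a face are extreme points of the polytope -/
lemma extreme_of_face {P : Set (Esp d)} {c : Esp d} {x : Esp d}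
    (hx : x ∈ Set.extremePoints ℝ (polyFace P c)) : x ∈ Set.extremePoints ℝ P := by
  obtain ⟨⟨hxP, hxmin⟩, hext⟩ := hx
  refine ⟨hxP, fun a ha b hb hseg => ?_⟩
  obtain ⟨ta, tb, hta, htb, htab, hxab⟩ := hseg
  have hva : ⟪c, x⟫ ≤ ⟪c, a⟫ := hxmin a ha
  have hvb : ⟪c, x⟫ ≤ ⟪c, b⟫ := hxmin b hb
  have hxv : ⟪c, x⟫ = ta * ⟪c, a⟫ + tb * ⟪c, b⟫ := by
    rw [← hxab, inner_add_right, real_inner_smul_right, real_inner_smul_right]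
  have h3 : ta * ⟪c, x⟫ + tb * ⟪c, x⟫ = ⟪c, x⟫ := by rw [← add_mul, htab, one_mul]
  have hva' : ⟪c, a⟫ = ⟪c, x⟫ := by
    by_contra hne
    have hlt : ⟪c, x⟫ < ⟪c, a⟫ := hva.lt_of_ne (Ne.symm hne)
    have h1 : ta * ⟪c, x⟫ < ta * ⟪c, a⟫ := mul_lt_mul_of_pos_left hlt hta
    have h2 : tb * ⟪c, x⟫ ≤ tb * ⟪c, b⟫ := mul_le_mul_of_nonneg_left hvb htb.le
    linarith
  have hvb' : ⟪c, b⟫ = ⟪c, x⟫ := by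
    by_contra hne
    have hlt : ⟪c, x⟫ < ⟪c, b⟫ := hvb.lt_of_ne (Ne.symm hne)
    have h1 : tb * ⟪c, x⟫ < tb * ⟪c, b⟫ := mul_lt_mul_of_pos_left hlt htb
    have h2 : ta * ⟪c, x⟫ ≤ ta * ⟪c, a⟫ := mul_le_mul_of_nonneg_left hva hta.le
    linarith
  have haF : a ∈ polyFace P c := ⟨ha, fun y hy => hva' ▸ hxmin y hy⟩
  have hbF : b ∈ polyFace P c := ⟨hb, fun y hy => hvb' ▸ hxmin y hy⟩
  exact hext haF hbF ⟨ta, tb, hta, htb, htab, hxab⟩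

/-- extreme points of subsets -/
lemma extreme_of_subset {P A : Set (Esp d)} {x : Esp d} (hAP : A ⊆ P)
    (hx : x ∈ Set.extremePoints ℝ P) (hxA : x ∈ A) : x ∈ Set.extremePoints ℝ A :=
  ⟨hxA, fun a ha b hb hseg => hx.2 (hAP ha) (hAP hb) hseg⟩

/-- the face of a Minkowski sum is the sum of the faces -/
lemma face_add (P Q : Set (Esp d)) (c : Esp d) :
    polyFace (P + Q) c = polyFace P c + polyFace Q c := by
  apply Set.eq_of_subset_of_subset
  · rintro z ⟨hz, hzmin⟩
    obtain ⟨p, hp, q, hq, rfl⟩ := Set.mem_add.1 hz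
    refine Set.mem_add.2 ⟨p, ⟨hp, fun y hy => ?_⟩, q, ⟨hq, fun y hy => ?_⟩, rfl⟩
    · have := hzmin (y + q) (Set.add_mem_add hy hq)
      rw [inner_add_right, inner_add_right] at this; linarith
    · have := hzmin (p + y) (Set.add_mem_add hp hy)
      rw [inner_add_right, inner_add_right] at this; linarith
  · rintro z hz
    obtain ⟨p, ⟨hp, hpmin⟩, q, ⟨hq, hqmin⟩, rfl⟩ := Set.mem_add.1 hz
    refine ⟨Set.add_mem_add hp hq, fun y hy => ?_⟩
    obtain ⟨p', hp', q', hq', rfl⟩ := Set.mem_add.1 hy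
    rw [inner_add_right, inner_add_right]
    exact add_le_add (hpmin p' hp') (hqmin q' hq')

/-- unique decomposition of extreme points of a sum -/
lemma sum_decomp_unique {P Q : Set (Esp d)} {w p p' q q' : Esp d}
    (hw : w ∈ Set.extremePoints ℝ (P + Q))
    (hp : p ∈ P) (hq : q ∈ Q) (hp' : p' ∈ P) (hq' : q' ∈ Q)
    (h1 : w = p + q) (h2 : w = p' + q') : p = p' ∧ q = q' := by
  by_cases heq : p + q' = p' + q
  · have h3 : p + q = p' + q' := h1.symm.trans h2
    have h5 : (p + p) + (q + q') = (p' + p') + (q + q') := by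
      calc (p + p) + (q + q') = (p + q) + (p + q') := by abel
      _ = (p' + q') + (p' + q) := by rw [h3, heq]
      _ = (p' + p') + (q + q') := by abel
    have h4 : p + p = p' + p' := add_right_cancel h5
    have h6 : (2 : ℝ) • p = (2 : ℝ) • p' := by rw [two_smul, two_smul]; exact h4
    have hp2 : p = p' := smul_right_injective _ (by norm_num : (2:ℝ) ≠ 0) h6
    refine ⟨hp2, ?_⟩
    rw [hp2] at h3
    exact add_left_cancel h3
  · exfalso
    have hmem1 : p + q' ∈ P + Q := Set.add_mem_add hp hq'
    have hmem2 : p' + q ∈ P + Q := Set.add_mem_add hp' hq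
    have hwseg : w ∈ openSegment ℝ (p + q') (p' + q) := by
      refine ⟨1/2, 1/2, by norm_num, by norm_num, by norm_num, ?_⟩
      have : (1/2 : ℝ) • (p + q') + (1/2 : ℝ) • (p' + q) = (1/2 : ℝ) • ((p+q) + (p'+q')) := by
        module
      rw [this, ← h1, ← h2]
      module
    have := hw.2 hmem1 hmem2 hwseg
    have h' := hw.2 hmem2 hmem1 (by rw [openSegment_symm]; exact hwseg)
    exact heq (this.trans h'.symm)


/-- components of a decomposition of an extreme point of P + Q are extreme -/
lemma comp_extreme_left {P Q : Set (Esp d)} {w p q : Esp d}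
    (hw : w ∈ Set.extremePoints ℝ (P + Q)) (hp : p ∈ P) (hq : q ∈ Q) (hpq : w = p + q) :
    p ∈ Set.extremePoints ℝ P := by
  refine ⟨hp, fun a ha b hb hseg => ?_⟩
  obtain ⟨ta, tb, hta, htb, htab, hab⟩ := hseg
  have hwseg : w ∈ openSegment ℝ (a + q) (b + q) := by
    refine ⟨ta, tb, hta, htb, htab, ?_⟩
    rw [hpq, ← hab]
    calc ta • (a + q) + tb • (b + q) = ta • a + tb • b + (ta + tb) • q := by module
    _ = ta • a + tb • b + q := by rw [htab, one_smul]
  have := hw.2 (Set.add_mem_add ha hq) (Set.add_mem_add hb hq) hwseg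
  have : a + q = p + q := this.trans hpq
  exact add_right_cancel this

lemma comp_extreme_right {P Q : Set (Esp d)} {w p q : Esp d}
    (hw : w ∈ Set.extremePoints ℝ (P + Q)) (hp : p ∈ P) (hq : q ∈ Q) (hpq : w = p + q) :
    q ∈ Set.extremePoints ℝ Q := by
  have hw' : w ∈ Set.extremePoints ℝ (Q + P) := by rwa [add_comm Q P]
  exact comp_extreme_left hw' hq hp (by rw [hpq, add_comm])

/-- an extreme point of the hull of a finite set is strictly exposed -/
lemma exists_exposer {s : Finset (Esp d)} {x : Esp d}
    (hx : x ∈ Set.extremePoints ℝ (convexHull ℝ (s : Set (Esp d)))) :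
    ∃ c : Esp d, ∀ y ∈ s, y ≠ x → 0 < ⟪c, y⟫ - ⟪c, x⟫ := by
  classical
  have hxs : x ∈ s := extremePoints_convexHull_subset hx
  -- x is not in the hull of the rest
  have hnot : x ∉ convexHull ℝ ((s.erase x : Finset (Esp d)) : Set (Esp d)) := by
    intro hmem
    have h1 := (convex_convexHull ℝ (s : Set (Esp d))).mem_extremePoints_iff_mem_diff_convexHull_diff.1 hx
    apply h1.2
    apply convexHull_mono ?_ hmem
    intro y hy
    simp only [Finset.coe_erase, Set.mem_diff, Set.mem_singleton_iff] at hy ⊢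
    exact ⟨subset_convexHull ℝ _ hy.1, hy.2⟩
  -- separate
  have hclosed : IsClosed (convexHull ℝ ((s.erase x : Finset (Esp d)) : Set (Esp d))) :=
    (Set.Finite.isCompact_convexHull ℝ (Finset.finite_toSet _)).isClosed
  obtain ⟨f, u, hfx, hfy⟩ := geometric_hahn_banach_point_closed
    (convex_convexHull ℝ _) hclosed hnot
  obtain ⟨c, hc⟩ := (InnerProductSpace.toDual ℝ (Esp d)).surjective f
  refine ⟨c, fun y hy hyx => ?_⟩
  have hyy : y ∈ convexHull ℝ ((s.erase x : Finset (Esp d)) : Set (Esp d)) :=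
    subset_convexHull ℝ _ (by simp [Finset.mem_erase, hyx, hy])
  have h1 : f x < u := hfx
  have h2 : u < f y := hfy y hyy
  have hfc : ∀ z, f z = ⟪c, z⟫ := fun z => by rw [← hc]; rfl
  rw [hfc] at h1 h2
  linarith

/-- avoid finitely many hyperplanes -/
lemma exists_generic (t : Finset (Esp d)) (ht : ∀ v ∈ t, v ≠ 0) :
    ∃ c : Esp d, ∀ v ∈ t, ⟪c, v⟫ ≠ 0 := by
  classical
  induction t using Finset.induction_on with
  | empty => exact ⟨0, by simp⟩
  | @insert v t hvt ih =>
    obtain ⟨c, hc⟩ := ih (fun w hw => ht w (Finset.mem_insert_of_mem hw))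
    have hv0 : v ≠ 0 := ht v (Finset.mem_insert_self v t)
    by_cases hcv : ⟪c, v⟫ ≠ 0
    · by_cases hall : ∀ w ∈ t, ⟪c, w⟫ ≠ 0
      · exact ⟨c, fun w hw => by
          rcases Finset.mem_insert.1 hw with rfl | hw
          · exact hcv
          · exact hall w hw⟩
      · exact ⟨c, fun w hw => by
          rcases Finset.mem_insert.1 hw with rfl | hw
          · exact hcv
          · exact hc w hw⟩
    · -- perturb along v
      push_neg at hcv
      set bad : Finset ℝ := insert 0 (t.image (fun w => - ⟪c, w⟫ / ⟪v, w⟫)) with hbad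
      obtain ⟨ε, hε⟩ := Infinite.exists_notMem_finset bad
      have hε0 : ε ≠ 0 := fun h => hε (by rw [h, hbad]; exact Finset.mem_insert_self _ _)
      refine ⟨c + ε • v, fun w hw => ?_⟩
      have hval : ∀ z : Esp d, ⟪c + ε • v, z⟫ = ⟪c, z⟫ + ε * ⟪v, z⟫ := by
        intro z
        rw [inner_add_left, real_inner_smul_left]
      rcases Finset.mem_insert.1 hw with rfl | hw
      · rw [hval, hcv, zero_add]
        intro h
        rcases mul_eq_zero.1 h with h | h
        · exact hε0 h
        · exact hv0 (inner_self_eq_zero.1 h)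
      · rw [hval]
        by_cases hvw : ⟪v, w⟫ = 0
        · rw [hvw, mul_zero, add_zero]; exact hc w hw
        · intro h
          apply hε
          rw [hbad]
          apply Finset.mem_insert_of_mem
          apply Finset.mem_image.2 ⟨w, hw, ?_⟩
          rw [div_eq_iff hvw]
          linarith


/-- the convex hull of a finite collinear set is a segment with endpoints in the set -/
lemma collinear_hull_segment (s : Finset (Esp d)) (hs : s.Nonempty)
    (hcol : Collinear ℝ (s : Set (Esp d))) :
    ∃ a b, a ∈ s ∧ b ∈ s ∧ convexHull ℝ (s : Set (Esp d)) = segment ℝ a b := by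
  classical
  obtain ⟨p, v, hpv⟩ := (collinear_iff_exists_forall_eq_smul_vadd (s : Set (Esp d))).1 hcol
  choose τ hτ using hpv
  set g : Esp d → ℝ := fun x => if h : x ∈ (s : Set (Esp d)) then τ x h else 0 with hg
  have hgx : ∀ x (hx : x ∈ s), x = g x • v + p := by
    intro x hx
    have := hτ x (Finset.mem_coe.2 hx)
    rw [hg]; simp only [Finset.mem_coe.2 hx, dif_pos]
    simpa [vadd_eq_add] using this
  obtain ⟨a, ha, hamin⟩ := s.exists_min_image g hs
  obtain ⟨b, hb, hbmax⟩ := s.exists_max_image g hs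
  refine ⟨a, b, ha, hb, ?_⟩
  apply Set.eq_of_subset_of_subset
  · apply convexHull_min ?_ (convex_segment a b)
    intro x hx
    rw [Finset.mem_coe] at hx
    rcases eq_or_lt_of_le (hamin x hx) with heq | hlt
    · have : x = a := by rw [hgx x hx, hgx a ha, ← heq]
      rw [this]; exact left_mem_segment ℝ a b
    · have hab : g a < g b := lt_of_lt_of_le hlt (hbmax x hx)
      have hba : g b - g a ≠ 0 := by linarith
      rw [segment_eq_image']
      refine ⟨(g x - g a) / (g b - g a), ⟨div_nonneg (by linarith) (by linarith), ?_⟩, ?_⟩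
      · rw [div_le_one (by linarith)]
        linarith [hbmax x hx]
      · show a + ((g x - g a) / (g b - g a)) • (b - a) = x
        have key : ∀ y (hy : y ∈ s), y - a = (g y - g a) • v := by
          intro y hy
          rw [sub_smul]
          calc y - a = (g y • v + p) - (g a • v + p) := by rw [← hgx y hy, ← hgx a ha]
          _ = g y • v - g a • v := by abel
        calc a + ((g x - g a) / (g b - g a)) • (b - a)
            = a + (g x - g a) • v := by
              rw [key b hb, smul_smul, div_mul_cancel₀ _ hba]
        _ = x := by rw [← key x hx]; abel
  · rw [← convexHull_pair]
    apply convexHull_mono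
    intro x hx
    rcases hx with rfl | hx
    · exact Finset.mem_coe.2 ha
    · rw [Set.mem_singleton_iff] at hx; rw [hx]; exact Finset.mem_coe.2 hb

/-- extreme points of a segment are endpoints -/
lemma extreme_of_segment {a b x : Esp d} (hx : x ∈ Set.extremePoints ℝ (segment ℝ a b)) :
    x = a ∨ x = b := by
  by_contra h
  push_neg at h
  have hopen : x ∈ openSegment ℝ a b := mem_openSegment_of_ne_left_right (Ne.symm h.1) (Ne.symm h.2) hx.1
  have := hx.2 (left_mem_segment ℝ a b) (right_mem_segment ℝ a b) hopen
  exact h.1 this.symm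


/-- perturbation: minimizing a perturbed functional = minimizing the perturbation on the
minimizing set, for small ε -/
lemma smin_perturb (s : Finset (Esp d)) (hs : s.Nonempty) (c c' : Esp d) :
    ∃ ε : ℝ, 0 < ε ∧ smin s (c + ε • c') = smin (smin s c) c' := by
  classical
  obtain ⟨z₀, hz₀⟩ := smin_nonempty hs c
  set m := ⟪c, z₀⟫ with hm
  have hmle : ∀ z ∈ s, m ≤ ⟪c, z⟫ := (mem_smin.1 hz₀).2
  have hmeq : ∀ z ∈ smin s c, ⟪c, z⟫ = m := fun z hz => smin_const hz hz₀
  set R : ℝ := (s.sup' hs fun y => ⟪c', y⟫) - (s.inf' hs fun y => ⟪c', y⟫) + 1 with hR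
  have hRpos : 0 < R := by
    have : (s.inf' hs fun y => ⟪c', y⟫) ≤ (s.sup' hs fun y => ⟪c', y⟫) := by
      obtain ⟨w, hw⟩ := hs
      exact le_trans (Finset.inf'_le _ hw) (Finset.le_sup' _ hw)
    rw [hR]; linarith
  have hRdiff : ∀ y ∈ s, ∀ z ∈ s, ⟪c', y⟫ - ⟪c', z⟫ < R := by
    intro y hy z hz
    have h1 : ⟪c', y⟫ ≤ s.sup' hs fun y => ⟪c', y⟫ := Finset.le_sup' _ hy
    have h2 : s.inf' hs (fun y => ⟪c', y⟫) ≤ ⟪c', z⟫ := Finset.inf'_le _ hz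
    rw [hR]; linarith
  by_cases hrest : (s \ smin s c).Nonempty
  · set γ : ℝ := (s \ smin s c).inf' hrest (fun y => ⟪c, y⟫ - m) with hγ
    have hγpos : 0 < γ := by
      rw [hγ, Finset.lt_inf'_iff]
      intro y hy
      rw [Finset.mem_sdiff] at hy
      rcases lt_or_ge m ⟪c, y⟫ with h | h
      · linarith
      · exact absurd (mem_smin.2 ⟨hy.1, fun z hz => le_trans h (hmle z hz)⟩) hy.2
    have hγle : ∀ z ∈ s, z ∉ smin s c → m + γ ≤ ⟪c, z⟫ := by
      intro z hz hzn
      have : γ ≤ ⟪c, z⟫ - m := Finset.inf'_le _ (Finset.mem_sdiff.2 ⟨hz, hzn⟩)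
      linarith
    refine ⟨γ / R, div_pos hγpos hRpos, ?_⟩
    have hεR : γ / R * R = γ := div_mul_cancel₀ _ (ne_of_gt hRpos)
    set ε := γ / R with hε
    have hεpos : 0 < ε := div_pos hγpos hRpos
    have hval : ∀ z : Esp d, ⟪c + ε • c', z⟫ = ⟪c, z⟫ + ε * ⟪c', z⟫ := fun z => by
      rw [inner_add_left, real_inner_smul_left]
    apply Finset.ext
    intro y
    constructor
    · intro hy
      obtain ⟨hys, hymin⟩ := mem_smin.1 hy
      obtain ⟨w, hw⟩ := smin_nonempty (smin_nonempty hs c) c'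
      obtain ⟨hw1, hw2⟩ := mem_smin.1 hw
      have hws : w ∈ s := smin_subset hw1
      have hy1 : y ∈ smin s c := by
        by_contra hyn
        have h1 := hymin w hws
        rw [hval, hval, hmeq w hw1] at h1
        have h2 : m + γ ≤ ⟪c, y⟫ := hγle y hys hyn
        have h3 : ε * (⟪c', w⟫ - ⟪c', y⟫) < ε * R :=
          mul_lt_mul_of_pos_left (hRdiff w hws y hys) hεpos
        rw [hε] at h3
        rw [hεR] at h3
        nlinarith
      refine mem_smin.2 ⟨hy1, fun z hz => ?_⟩
      have h1 := hymin z (smin_subset hz)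
      rw [hval, hval, hmeq y hy1, hmeq z hz] at h1
      have := le_of_add_le_add_left h1
      exact le_of_mul_le_mul_left this hεpos
    · intro hy
      obtain ⟨hy1, hymin⟩ := mem_smin.1 hy
      have hys : y ∈ s := smin_subset hy1
      refine mem_smin.2 ⟨hys, fun z hz => ?_⟩
      rw [hval, hval]
      by_cases hz1 : z ∈ smin s c
      · rw [hmeq y hy1, hmeq z hz1]
        have := hymin z hz1
        nlinarith
      · have h2 : m + γ ≤ ⟪c, z⟫ := hγle z hz hz1
        have h3 : ε * (⟪c', y⟫ - ⟪c', z⟫) < ε * R :=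
          mul_lt_mul_of_pos_left (hRdiff y hys z hz) hεpos
        rw [hε, hεR] at h3
        rw [hmeq y hy1]
        nlinarith
  · -- all of s is minimal for c : values of c constant on s
    have hall : ∀ z ∈ s, z ∈ smin s c := by
      intro z hz
      by_contra hzn
      exact hrest ⟨z, Finset.mem_sdiff.2 ⟨hz, hzn⟩⟩
    have hseq : smin s c = s := Finset.Subset.antisymm smin_subset hall
    refine ⟨1, one_pos, ?_⟩
    rw [hseq]
    apply Finset.ext
    intro y
    rw [mem_smin, mem_smin]
    constructor
    · rintro ⟨hys, hymin⟩
      refine ⟨hys, fun z hz => ?_⟩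
      have h1 := hymin z hz
      rw [inner_add_left, inner_add_left, real_inner_smul_left, real_inner_smul_left,
        hmeq y (hall y hys), hmeq z (hall z hz), one_mul, one_mul] at h1
      linarith
    · rintro ⟨hys, hymin⟩
      refine ⟨hys, fun z hz => ?_⟩
      rw [inner_add_left, inner_add_left, real_inner_smul_left, real_inner_smul_left,
        hmeq y (hall y hys), hmeq z (hall z hz), one_mul, one_mul]
      linarith [hymin z hz]

/-- a nonzero vector of the vector span has nonconstant inner products on s -/
lemma nonconst_of_mem_vectorSpan {s : Finset (Esp d)} {c : Esp d}
    (hc : c ∈ vectorSpan ℝ (s : Set (Esp d))) (hcne : c ≠ 0) :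
    ∃ y ∈ s, ∃ z ∈ s, ⟪c, z⟫ < ⟪c, y⟫ := by
  by_contra hcon
  push_neg at hcon
  have hconst : ∀ y ∈ s, ∀ z ∈ s, ⟪c, y - z⟫ = 0 := by
    intro y hy z hz
    have h1 := hcon y hy z hz
    have h2 := hcon z hz y hy
    rw [inner_sub_right]
    linarith
  have hW : ∀ w ∈ vectorSpan ℝ (s : Set (Esp d)), ⟪c, w⟫ = 0 := by
    intro w hw
    rw [vectorSpan_def] at hw
    induction hw using Submodule.span_induction with
    | mem w hw =>
      obtain ⟨y, hy, z, hz, rfl⟩ := Set.mem_vsub.1 hw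
      rw [vsub_eq_sub]
      exact hconst y hy z hz
    | zero => exact inner_zero_right c
    | add a b _ _ ha hb => rw [inner_add_right, ha, hb, add_zero]
    | smul r a _ ha => rw [real_inner_smul_right, ha, mul_zero]
  exact hcne (inner_self_eq_zero.1 (hW c hc))

/-- projection of a vector to the vector span keeps inner products with span elements -/
lemma proj_inner {W : Submodule ℝ (Esp d)} (c : Esp d) {w : Esp d} (hw : w ∈ W) :
    ⟪(W.orthogonalProjectionOnto c : Esp d), w⟫ = ⟪c, w⟫ := by
  have h := Submodule.starProjection_inner_eq_zero (K := W) c w hw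
  rw [Submodule.starProjection_apply] at h
  rw [inner_sub_left] at h
  linarith


/-- existence of a W-exposer for x avoiding the line spanned by c -/
lemma exposer_avoiding {s : Finset (Esp d)} {x : Esp d}
    (hx : x ∈ Set.extremePoints ℝ (convexHull ℝ (s : Set (Esp d))))
    (hncol : ¬ Collinear ℝ (s : Set (Esp d))) (c : Esp d) :
    ∃ cx : Esp d, cx ∈ vectorSpan ℝ (s : Set (Esp d)) ∧
      (∀ y ∈ s, y ≠ x → 0 < ⟪cx, y⟫ - ⟪cx, x⟫) ∧
      cx ∉ Submodule.span ℝ ({c} : Set (Esp d)) := by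
  classical
  have hxs : x ∈ s := extremePoints_convexHull_subset hx
  set W := vectorSpan ℝ (s : Set (Esp d)) with hW
  obtain ⟨e, he⟩ := exists_exposer hx
  set eW : Esp d := (W.orthogonalProjectionOnto e : Esp d) with heW
  have heWmem : eW ∈ W := (W.orthogonalProjectionOnto e).2
  have heWexp : ∀ y ∈ s, y ≠ x → 0 < ⟪eW, y⟫ - ⟪eW, x⟫ := by
    intro y hy hyx
    have hmem : y - x ∈ W := by
      rw [hW, ← vsub_eq_sub]
      exact vsub_mem_vectorSpan ℝ (Finset.mem_coe.2 hy) (Finset.mem_coe.2 hxs)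
    have h1 : ⟪eW, y - x⟫ = ⟪e, y - x⟫ := proj_inner e hmem
    rw [inner_sub_right, inner_sub_right] at h1
    have h2 := he y hy hyx
    linarith
  by_cases hin : eW ∈ Submodule.span ℝ ({c} : Set (Esp d))
  · -- perturb : find g ∈ W outside the line
    have hg : ∃ g ∈ W, g ∉ Submodule.span ℝ ({c} : Set (Esp d)) := by
      by_contra hgg
      push_neg at hgg
      apply hncol
      unfold Collinear
      calc Module.rank ℝ (vectorSpan ℝ (s : Set (Esp d)))
          ≤ Module.rank ℝ (Submodule.span ℝ ({c} : Set (Esp d))) :=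
            Submodule.rank_mono (fun w hw => hgg w hw)
      _ ≤ Cardinal.mk ({c} : Set (Esp d)) := rank_span_le _
      _ = 1 := Cardinal.mk_singleton c
    obtain ⟨g, hgW, hgout⟩ := hg
    -- t = points of s other than x
    have htne : (s.erase x).Nonempty := by
      rcases Finset.eq_empty_or_nonempty (s.erase x) with h | h
      · exfalso
        apply hncol
        have : (s : Set (Esp d)) ⊆ {x} := by
          intro y hy
          rw [Finset.mem_coe] at hy
          by_contra hyx
          exact Finset.notMem_empty y (h ▸ Finset.mem_erase.2 ⟨hyx, hy⟩)
        exact Collinear.subset this (collinear_singleton ℝ x)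
      · exact h
    set δ : ℝ := (s.erase x).inf' htne
      (fun y => (⟪eW, y⟫ - ⟪eW, x⟫) / (1 + |⟪g, y⟫ - ⟪g, x⟫|)) with hδ
    have hδpos : 0 < δ := by
      rw [hδ, Finset.lt_inf'_iff]
      intro y hy
      obtain ⟨hyx, hys⟩ := Finset.mem_erase.1 hy
      exact div_pos (heWexp y hys hyx) (by positivity)
    refine ⟨eW + δ • g, Submodule.add_mem W heWmem (Submodule.smul_mem W δ hgW), ?_, ?_⟩
    · intro y hy hyx
      have hmem : y ∈ s.erase x := Finset.mem_erase.2 ⟨hyx, hy⟩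
      have hle : δ ≤ (⟪eW, y⟫ - ⟪eW, x⟫) / (1 + |⟪g, y⟫ - ⟪g, x⟫|) :=
        Finset.inf'_le _ hmem
      set A := ⟪eW, y⟫ - ⟪eW, x⟫ with hA
      set B := ⟪g, y⟫ - ⟪g, x⟫ with hB
      have hApos : 0 < A := heWexp y hy hyx
      have habs : δ * |B| < A := by
        have h1 : δ * (1 + |B|) ≤ A := by
          rw [← div_mul_cancel₀ A (show (1:ℝ) + |B| ≠ 0 by positivity)]
          exact mul_le_mul_of_nonneg_right hle (by positivity)
        nlinarith [abs_nonneg B, hδpos]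
      have hval : ⟪eW + δ • g, y⟫ - ⟪eW + δ • g, x⟫ = A + δ * B := by
        rw [inner_add_left, inner_add_left, real_inner_smul_left, real_inner_smul_left]
        ring
      rw [hval]
      have := neg_abs_le B
      nlinarith [hδpos]
    · intro hmem
      apply hgout
      have h1 : (eW + δ • g) - eW ∈ Submodule.span ℝ ({c} : Set (Esp d)) :=
        Submodule.sub_mem _ hmem hin
      have h2 : δ • g ∈ Submodule.span ℝ ({c} : Set (Esp d)) := by
        simpa using h1
      have := Submodule.smul_mem _ δ⁻¹ h2
      rwa [smul_smul, inv_mul_cancel₀ (ne_of_gt hδpos), one_smul] at this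
  · exact ⟨eW, heWmem, heWexp, hin⟩


/-- the sweep lemma : rotating from an exposer of x towards c, at the last time x is still
minimal, some other minimizer has strictly smaller c-value. -/
lemma sweep {s : Finset (Esp d)} {x : Esp d} (hxs : x ∈ s) {cx c : Esp d}
    (hexp : ∀ y ∈ s, y ≠ x → 0 < ⟪cx, y⟫ - ⟪cx, x⟫)
    (hworse : ∃ w ∈ s, ⟪c, w⟫ < ⟪c, x⟫) :
    ∃ t : ℝ, 0 ≤ t ∧ t < 1 ∧ x ∈ smin s ((1-t) • cx + t • c) ∧
      ∃ y₀ ∈ smin s ((1-t) • cx + t • c), ⟪c, y₀⟫ < ⟪c, x⟫ := by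
  classical
  set A : Esp d → ℝ := fun y => ⟪cx, y⟫ - ⟪cx, x⟫ with hA
  set B : Esp d → ℝ := fun y => ⟪c, y⟫ - ⟪c, x⟫ with hB
  have hA0 : ∀ y ∈ s, 0 ≤ A y := by
    intro y hy
    rcases eq_or_ne y x with rfl | hyx
    · simp [hA]
    · exact (hexp y hy hyx).le
  set r : Esp d → ℝ := fun y => if 0 ≤ B y then 1 else A y / (A y - B y) with hr
  have hrdef : ∀ y, r y = if 0 ≤ B y then 1 else A y / (A y - B y) := fun y => rfl
  have hr01 : ∀ y ∈ s, 0 ≤ r y ∧ r y ≤ 1 := by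
    intro y hy
    rw [hrdef]
    by_cases h : 0 ≤ B y
    · simp [h]
    · push_neg at h
      simp only [if_neg (not_le.2 h)]
      have hAB : 0 < A y - B y := by
        have := hA0 y hy; linarith
      constructor
      · exact div_nonneg (hA0 y hy) hAB.le
      · rw [div_le_one hAB]; linarith
  -- the value of the swept functional
  have hval : ∀ t : ℝ, ∀ y : Esp d,
      ⟪(1-t) • cx + t • c, y⟫ - ⟪(1-t) • cx + t • c, x⟫ = (1-t) * A y + t * B y := by
    intro t y
    rw [inner_add_left, inner_add_left, real_inner_smul_left, real_inner_smul_left,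
      real_inner_smul_left, real_inner_smul_left, hA, hB]
    ring
  -- key positivity : for t ≤ r y, the swept value at y is ≥ 0
  have hpos : ∀ y ∈ s, ∀ t : ℝ, 0 ≤ t → t ≤ r y → 0 ≤ (1-t) * A y + t * B y := by
    intro y hy t ht0 htr
    rw [hrdef] at htr
    by_cases h : 0 ≤ B y
    · rw [if_pos h] at htr
      have := hA0 y hy
      have h1 : (0:ℝ) ≤ 1 - t := by linarith
      positivity
    · push_neg at h
      rw [if_neg (not_le.2 h)] at htr
      have hAB : 0 < A y - B y := by have := hA0 y hy; linarith
      have h2 : t * (A y - B y) ≤ A y := by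
        have h3 := mul_le_mul_of_nonneg_right htr hAB.le
        rwa [div_mul_cancel₀ _ (ne_of_gt hAB)] at h3
      nlinarith
  obtain ⟨y₀, hy₀s, hy₀min⟩ := s.exists_min_image r ⟨x, hxs⟩
  set t : ℝ := r y₀ with ht
  obtain ⟨w, hws, hw⟩ := hworse
  have hrw : r w < 1 := by
    have hBw : B w < 0 := by rw [hB]; simpa using hw
    rw [hrdef, if_neg (not_le.2 hBw)]
    have hAw : 0 < A w - B w := by have := hA0 w hws; linarith
    rw [div_lt_one hAw]
    linarith
  have ht1 : t < 1 := lt_of_le_of_lt (hy₀min w hws) hrw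
  have hBy₀ : B y₀ < 0 := by
    by_contra h
    push_neg at h
    rw [ht, hrdef, if_pos h] at ht1
    exact lt_irrefl 1 ht1
  have ht0 : 0 ≤ t := (hr01 y₀ hy₀s).1
  have hxmin : ∀ z ∈ s, ⟪(1-t) • cx + t • c, x⟫ ≤ ⟪(1-t) • cx + t • c, z⟫ := by
    intro z hz
    have h1 := hpos z hz t ht0 (hy₀min z hz)
    have h2 := hval t z
    linarith
  have hy₀val : (1-t) * A y₀ + t * B y₀ = 0 := by
    have hAB : 0 < A y₀ - B y₀ := by have := hA0 y₀ hy₀s; linarith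
    have htv : t = A y₀ / (A y₀ - B y₀) := by rw [ht, hrdef, if_neg (not_le.2 hBy₀)]
    have h3 : t * (A y₀ - B y₀) = A y₀ := by
      rw [htv, div_mul_cancel₀ _ (ne_of_gt hAB)]
    nlinarith
  refine ⟨t, ht0, ht1, mem_smin.2 ⟨hxs, hxmin⟩, y₀, mem_smin.2 ⟨hy₀s, fun z hz => ?_⟩,
    by have h2 : ⟪c, y₀⟫ - ⟪c, x⟫ < 0 := hBy₀; linarith⟩
  have h2 := hval t y₀
  have h3 := hxmin z hz
  linarith


/-- the face of a polytope determined by c, as a polytope -/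
lemma face_eq_hull_smin (s : Finset (Esp d)) (hs : s.Nonempty) (c : Esp d) :
    polyFace (convexHull ℝ (s : Set (Esp d))) c
      = convexHull ℝ ((smin s c : Finset (Esp d)) : Set (Esp d)) := faceHull s hs c

/-- adjacency in a face implies adjacency in the polytope -/
lemma adj_of_face_adj (s : Finset (Esp d)) (hs : s.Nonempty) (c : Esp d) {a b : Esp d}
    (hab : polyAdj (convexHull ℝ ((smin s c : Finset (Esp d)) : Set (Esp d))) a b) :
    polyAdj (convexHull ℝ (s : Set (Esp d))) a b := by
  obtain ⟨hne, ha, hb, c', hc'⟩ := hab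
  have hFface : polyFace (convexHull ℝ (s : Set (Esp d))) c
      = convexHull ℝ ((smin s c : Finset (Esp d)) : Set (Esp d)) := faceHull s hs c
  have haP : a ∈ polyVerts (convexHull ℝ (s : Set (Esp d))) := by
    apply extreme_of_face (c := c)
    rw [hFface]; exact ha
  have hbP : b ∈ polyVerts (convexHull ℝ (s : Set (Esp d))) := by
    apply extreme_of_face (c := c)
    rw [hFface]; exact hb
  obtain ⟨ε, hεpos, hε⟩ := smin_perturb s hs c c'
  refine ⟨hne, haP, hbP, c + ε • c', ?_⟩
  rw [faceHull s hs (c + ε • c'), hε, ← faceHull (smin s c) (smin_nonempty hs c) c', hc']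

/-- graph of a face is a subgraph -/
lemma graph_face_le (s : Finset (Esp d)) (hs : s.Nonempty) (c : Esp d) :
    polyGraph (convexHull ℝ ((smin s c : Finset (Esp d)) : Set (Esp d)))
      ≤ polyGraph (convexHull ℝ (s : Set (Esp d))) :=
  fun _ _ hab => adj_of_face_adj s hs c hab

/-- connectivity of the graph of a polytope -/
lemma conn : ∀ (n : ℕ) (s : Finset (Esp d)), s.card ≤ n →
    ∀ u ∈ polyVerts (convexHull ℝ (s : Set (Esp d))),
    ∀ v ∈ polyVerts (convexHull ℝ (s : Set (Esp d))),
    (polyGraph (convexHull ℝ (s : Set (Esp d)))).Reachable u v := by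
  intro n
  induction n with
  | zero =>
    intro s hcard u hu v hv
    have hs0 : s = ∅ := Finset.card_eq_zero.1 (Nat.le_zero.1 hcard)
    subst hs0
    simp only [Finset.coe_empty, convexHull_empty] at hu
    exact absurd hu.1 (Set.notMem_empty u)
  | succ n ih =>
    intro s hcard u hu v hv
    rcases eq_or_ne u v with rfl | huv
    · exact SimpleGraph.Reachable.refl u
    have hus : u ∈ s := extremePoints_convexHull_subset hu
    have hvs : v ∈ s := extremePoints_convexHull_subset hv
    have hsne : s.Nonempty := ⟨u, hus⟩
    by_cases hcol : Collinear ℝ (s : Set (Esp d))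
    · -- segment case : u and v are adjacent via the zero functional
      obtain ⟨a, b, ha, hb, hseg⟩ := collinear_hull_segment s hsne hcol
      have huab : u = a ∨ u = b := extreme_of_segment (by rw [← hseg]; exact hu)
      have hvab : v = a ∨ v = b := extreme_of_segment (by rw [← hseg]; exact hv)
      have hP : convexHull ℝ (s : Set (Esp d)) = segment ℝ u v := by
        rcases huab with rfl | rfl <;> rcases hvab with rfl | rfl
        · exact absurd rfl huv
        · exact hseg
        · rw [hseg, segment_symm]
        · exact absurd rfl huv
      have hadj : polyAdj (convexHull ℝ (s : Set (Esp d))) u v := by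
        refine ⟨huv, hu, hv, 0, ?_⟩
        rw [hP]
        apply Set.eq_of_subset_of_subset
        · exact fun z hz => hz.1
        · intro z hz
          exact ⟨hz, fun y _ => by simp only [inner_zero_left]; exact le_refl 0⟩
      exact SimpleGraph.Adj.reachable hadj
    · -- full-dimensional-ish case
      -- generic direction
      classical
      set t : Finset (Esp d) :=
        ((s ×ˢ s).filter (fun p => p.1 ≠ p.2)).image (fun p => p.1 - p.2) with htdef
      have ht0 : ∀ w ∈ t, w ≠ 0 := by
        intro w hw
        rw [htdef] at hw
        obtain ⟨p, hp, rfl⟩ := Finset.mem_image.1 hw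
        have := (Finset.mem_filter.1 hp).2
        exact sub_ne_zero_of_ne this
      obtain ⟨c₀, hc₀⟩ := exists_generic t ht0
      set W : Submodule ℝ (Esp d) := vectorSpan ℝ (s : Set (Esp d)) with hWdef
      set c : Esp d := (W.orthogonalProjectionOnto c₀ : Esp d) with hcdef
      have hcW : c ∈ W := (W.orthogonalProjectionOnto c₀).2
      have hgen : ∀ y ∈ s, ∀ z ∈ s, y ≠ z → ⟪c, y⟫ ≠ ⟪c, z⟫ := by
        intro y hy z hz hyz
        have hmem : y - z ∈ W := by
          rw [hWdef, ← vsub_eq_sub]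
          exact vsub_mem_vectorSpan ℝ (Finset.mem_coe.2 hy) (Finset.mem_coe.2 hz)
        have h1 : ⟪c, y - z⟫ = ⟪c₀, y - z⟫ := proj_inner c₀ hmem
        have h2 : ⟪c₀, y - z⟫ ≠ 0 := by
          apply hc₀
          rw [htdef]
          exact Finset.mem_image.2 ⟨(y, z), Finset.mem_filter.2
            ⟨Finset.mem_product.2 ⟨hy, hz⟩, hyz⟩, rfl⟩
        intro h
        apply h2
        rw [← h1, inner_sub_right, h, sub_self]
      -- the unique minimal vertex
      obtain ⟨z₀, hz₀s, hz₀min⟩ := s.exists_min_image (fun y => ⟪c, y⟫) hsne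
      have hz₀strict : ∀ y ∈ s, y ≠ z₀ → ⟪c, z₀⟫ < ⟪c, y⟫ := by
        intro y hy hyz
        exact lt_of_le_of_ne (hz₀min y hy) (hgen z₀ hz₀s y hy (Ne.symm hyz))
      have hsmin_z₀ : smin s c = {z₀} := by
        apply Finset.ext
        intro y
        rw [mem_smin, Finset.mem_singleton]
        constructor
        · rintro ⟨hys, hymin⟩
          by_contra hyne
          exact absurd (hymin z₀ hz₀s) (not_le.2 (hz₀strict y hys hyne))
        · rintro rfl
          exact ⟨hz₀s, hz₀min⟩
      have hz₀V : z₀ ∈ polyVerts (convexHull ℝ (s : Set (Esp d))) := by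
        apply extreme_of_face (c := c)
        rw [faceHull s hsne c, hsmin_z₀]
        simp only [Finset.coe_singleton, convexHull_singleton]
        exact ⟨rfl, fun a ha b hb hab => by
          rw [Set.mem_singleton_iff] at ha hb; exact ha⟩
      -- descent : every vertex reaches z₀
      have key : ∀ (k : ℕ) (x : Esp d), x ∈ polyVerts (convexHull ℝ (s : Set (Esp d))) →
          (s.filter (fun z => ⟪c, z⟫ < ⟪c, x⟫)).card ≤ k →
          (polyGraph (convexHull ℝ (s : Set (Esp d)))).Reachable x z₀ := by
        intro k
        induction k with
        | zero =>
          intro x hx hcard0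
          rcases eq_or_ne x z₀ with rfl | hxz
          · exact SimpleGraph.Reachable.refl x
          · exfalso
            have hxs' : x ∈ s := extremePoints_convexHull_subset hx
            have : z₀ ∈ s.filter (fun z => ⟪c, z⟫ < ⟪c, x⟫) :=
              Finset.mem_filter.2 ⟨hz₀s, hz₀strict x hxs' hxz⟩
            have := Finset.card_pos.2 ⟨z₀, this⟩
            omega
        | succ k ihk =>
          intro x hx hcardk
          rcases eq_or_ne x z₀ with rfl | hxz
          · exact SimpleGraph.Reachable.refl x
          have hxs' : x ∈ s := extremePoints_convexHull_subset hx
          have hworse : ∃ w ∈ s, ⟪c, w⟫ < ⟪c, x⟫ := ⟨z₀, hz₀s, hz₀strict x hxs' hxz⟩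
          have hcne : c ≠ 0 := by
            intro h
            obtain ⟨w, hws, hw⟩ := hworse
            rw [h, inner_zero_left, inner_zero_left] at hw
            exact lt_irrefl 0 hw
          obtain ⟨cx, hcxW, hcxexp, hcxspan⟩ := exposer_avoiding hx hcol c
          obtain ⟨ts, hts0, hts1, hxmin, y₀, hy₀mem, hy₀val⟩ := sweep hxs' hcxexp hworse
          set ct : Esp d := (1 - ts) • cx + ts • c with hct
          have hctW : ct ∈ W :=
            Submodule.add_mem W (Submodule.smul_mem _ _ hcxW) (Submodule.smul_mem _ _ hcW)
          have hctne : ct ≠ 0 := by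
            intro h
            rcases eq_or_lt_of_le hts0 with h0 | h0
            · apply hcxspan
              have hcx0 : cx = 0 := by
                have : ct = cx := by rw [hct, ← h0]; simp
                rw [← this, h]
              rw [hcx0]
              exact Submodule.zero_mem _
            · apply hcxspan
              have h1ts : (0:ℝ) < 1 - ts := by linarith
              have h2 : (1 - ts) • cx = -(ts • c) := by
                rw [eq_neg_iff_add_eq_zero]; exact h
              have h3 : cx = (1 - ts)⁻¹ • ((1 - ts) • cx) := by
                rw [smul_smul, inv_mul_cancel₀ (ne_of_gt h1ts), one_smul]
              rw [h3, h2]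
              exact Submodule.smul_mem _ _ (Submodule.neg_mem _
                (Submodule.smul_mem _ _ (Submodule.mem_span_singleton_self c)))
          set s' : Finset (Esp d) := smin s ct with hs'def
          have hs'sub : s' ⊆ s := smin_subset
          have hs'ne : s'.Nonempty := smin_nonempty hsne ct
          have hproper : s'.card < s.card := by
            obtain ⟨y, hy, z, hz, hlt⟩ := nonconst_of_mem_vectorSpan hctW hctne
            apply Finset.card_lt_card
            rw [Finset.ssubset_def]
            refine ⟨hs'sub, fun hss => ?_⟩
            have hy' := mem_smin.1 (hss hy)
            exact absurd (hy'.2 z hz) (not_le.2 hlt)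
          have hhullsub : convexHull ℝ (s' : Set (Esp d)) ⊆ convexHull ℝ (s : Set (Esp d)) :=
            convexHull_mono (Finset.coe_subset.2 hs'sub)
          have hxF : x ∈ convexHull ℝ (s' : Set (Esp d)) :=
            subset_convexHull ℝ _ (Finset.mem_coe.2 hxmin)
          have hxVF : x ∈ polyVerts (convexHull ℝ (s' : Set (Esp d))) :=
            extreme_of_subset hhullsub hx hxF
          obtain ⟨ys, hyss, hysmin⟩ := s'.exists_min_image (fun y => ⟪c, y⟫) hs'ne
          have hysval : ⟪c, ys⟫ < ⟪c, x⟫ := lt_of_le_of_lt (hysmin y₀ hy₀mem) hy₀val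
          have hsmin_ys : smin s' c = {ys} := by
            apply Finset.ext
            intro y
            rw [mem_smin, Finset.mem_singleton]
            constructor
            · rintro ⟨hys2, hymin2⟩
              by_contra hyne
              have hstrict : ⟪c, ys⟫ < ⟪c, y⟫ :=
                lt_of_le_of_ne (hysmin y hys2)
                  (hgen ys (hs'sub hyss) y (hs'sub hys2) (fun hh => hyne hh.symm))
              exact absurd (hymin2 ys hyss) (not_le.2 hstrict)
            · rintro rfl
              exact ⟨hyss, hysmin⟩
          have hysVF : ys ∈ polyVerts (convexHull ℝ (s' : Set (Esp d))) := by
            apply extreme_of_face (c := c)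
            rw [faceHull s' hs'ne c, hsmin_ys]
            simp only [Finset.coe_singleton, convexHull_singleton]
            rw [extremePoints_singleton]
            exact rfl
          have hreachF : (polyGraph (convexHull ℝ (s' : Set (Esp d)))).Reachable x ys :=
            ih s' (by omega) x hxVF ys hysVF
          have hreachP : (polyGraph (convexHull ℝ (s : Set (Esp d)))).Reachable x ys :=
            hreachF.mono (graph_face_le s hsne ct)
          have hysV : ys ∈ polyVerts (convexHull ℝ (s : Set (Esp d))) := by
            apply extreme_of_face (c := ct)
            rw [faceHull s hsne ct]
            exact hysVF
          have hcard' : (s.filter (fun z => ⟪c, z⟫ < ⟪c, ys⟫)).card ≤ k := by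
            have h1 : s.filter (fun z => ⟪c, z⟫ < ⟪c, ys⟫)
                ⊂ s.filter (fun z => ⟪c, z⟫ < ⟪c, x⟫) := by
              rw [Finset.ssubset_def]
              constructor
              · intro z hz
                rw [Finset.mem_filter] at hz ⊢
                exact ⟨hz.1, lt_trans hz.2 hysval⟩
              · intro hsub
                have hin : ys ∈ s.filter (fun z => ⟪c, z⟫ < ⟪c, x⟫) :=
                  Finset.mem_filter.2 ⟨hs'sub hyss, hysval⟩
                have := Finset.mem_filter.1 (hsub hin)
                exact lt_irrefl _ this.2
            have := Finset.card_lt_card h1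
            omega
          exact hreachP.trans (ihk ys hysV hcard')
      have h1 := key s.card u hu (Finset.card_le_card (Finset.filter_subset _ _))
      have h2 := key s.card v hv (Finset.card_le_card (Finset.filter_subset _ _))
      exact h1.trans h2.symm

/-- segments are collinear -/
lemma collinear_segment (a b : Esp d) : Collinear ℝ (segment ℝ a b) := by
  rw [collinear_iff_exists_forall_eq_smul_vadd]
  refine ⟨a, b - a, fun x hx => ?_⟩
  rw [segment_eq_image'] at hx
  obtain ⟨θ, _, hθ⟩ := hx
  exact ⟨θ, by rw [← hθ, vadd_eq_add]; abel⟩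

/-- translating an extreme point -/
lemma extreme_translate {A : Set (Esp d)} {x u : Esp d}
    (hx : x ∈ Set.extremePoints ℝ A) :
    u + x ∈ Set.extremePoints ℝ ((fun z => u + z) '' A) := by
  refine ⟨⟨x, hx.1, rfl⟩, ?_⟩
  rintro a ⟨a', ha', rfl⟩ b ⟨b', hb', rfl⟩ hseg
  have := (mem_openSegment_translate ℝ u).1 hseg
  have h2 := hx.2 ha' hb' this
  subst h2
  rfl

/-- lifting a vertex of P to a vertex of P + Q -/
lemma lift_vertex (sP sQ : Finset (Esp d)) (hsP : sP.Nonempty) (hsQ : sQ.Nonempty)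
    {u : Esp d} (hu : u ∈ polyVerts (convexHull ℝ (sP : Set (Esp d)))) :
    ∃ q ∈ convexHull ℝ (sQ : Set (Esp d)),
      u + q ∈ polyVerts (convexHull ℝ (sP : Set (Esp d)) + convexHull ℝ (sQ : Set (Esp d))) := by
  set P := convexHull ℝ (sP : Set (Esp d)) with hPdef
  set Q := convexHull ℝ (sQ : Set (Esp d)) with hQdef
  obtain ⟨c, hc⟩ := exists_exposer hu
  have hus : u ∈ sP := extremePoints_convexHull_subset hu
  have hsminP : smin sP c = {u} := by
    apply Finset.ext
    intro y
    rw [mem_smin, Finset.mem_singleton]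
    constructor
    · rintro ⟨hys, hymin⟩
      by_contra hyu
      have := hc y hys hyu
      have := hymin u hus
      linarith
    · intro hy
      rw [hy]
      refine ⟨hus, fun z hz => ?_⟩
      rcases eq_or_ne z u with rfl | hzu
      · exact le_refl _
      · have := hc z hz hzu; linarith
  have hfaceP : polyFace P c = {u} := by
    rw [hPdef, faceHull sP hsP c, hsminP]
    simp
  set G := convexHull ℝ ((smin sQ c : Finset (Esp d)) : Set (Esp d)) with hGdef
  have hGface : polyFace Q c = G := faceHull sQ hsQ c
  have hGne : G.Nonempty := by
    obtain ⟨w0, hw0⟩ := smin_nonempty hsQ c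
    exact ⟨w0, subset_convexHull ℝ _ (Finset.mem_coe.2 hw0)⟩
  have hGcomp : IsCompact G := (smin sQ c).finite_toSet.isCompact_convexHull ℝ
  obtain ⟨q, hq⟩ := hGcomp.extremePoints_nonempty hGne
  have hqQ : q ∈ Q := convexHull_mono (Finset.coe_subset.2 smin_subset) hq.1
  refine ⟨q, hqQ, ?_⟩
  apply extreme_of_face (c := c)
  have hfsum : polyFace (P + Q) c = (fun z => u + z) '' G := by
    rw [face_add P Q c, hfaceP, hGface, Set.singleton_add]
  rw [hfsum]
  exact extreme_translate hq

/-- projecting an edge of P + Q to P : the P-components are equal or adjacent -/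
lemma adj_proj (sP sQ : Finset (Esp d)) (hsP : sP.Nonempty) (hsQ : sQ.Nonempty)
    {w₁ w₂ p₁ q₁ p₂ q₂ : Esp d}
    (hadj : polyAdj (convexHull ℝ (sP : Set (Esp d)) + convexHull ℝ (sQ : Set (Esp d))) w₁ w₂)
    (hp₁ : p₁ ∈ convexHull ℝ (sP : Set (Esp d))) (hq₁ : q₁ ∈ convexHull ℝ (sQ : Set (Esp d)))
    (hp₂ : p₂ ∈ convexHull ℝ (sP : Set (Esp d))) (hq₂ : q₂ ∈ convexHull ℝ (sQ : Set (Esp d)))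
    (h1 : w₁ = p₁ + q₁) (h2 : w₂ = p₂ + q₂) :
    p₁ = p₂ ∨ polyAdj (convexHull ℝ (sP : Set (Esp d))) p₁ p₂ := by
  set P := convexHull ℝ (sP : Set (Esp d)) with hPdef
  set Q := convexHull ℝ (sQ : Set (Esp d)) with hQdef
  obtain ⟨hne, hw₁, hw₂, c, hc⟩ := hadj
  have hfadd : polyFace (P + Q) c = polyFace P c + polyFace Q c := face_add P Q c
  have hw₁f : w₁ ∈ polyFace (P + Q) c := by rw [hc]; exact left_mem_segment ℝ w₁ w₂
  have hw₂f : w₂ ∈ polyFace (P + Q) c := by rw [hc]; exact right_mem_segment ℝ w₁ w₂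
  have hcomp : ∀ {w p q : Esp d}, w ∈ polyFace (P + Q) c → p ∈ P → q ∈ Q → w = p + q →
      p ∈ polyFace P c ∧ q ∈ polyFace Q c := by
    intro w p q hwf hp hq hw
    constructor
    · refine ⟨hp, fun y hy => ?_⟩
      have := hwf.2 (y + q) (Set.add_mem_add hy hq)
      rw [hw, inner_add_right, inner_add_right] at this
      linarith
    · refine ⟨hq, fun y hy => ?_⟩
      have := hwf.2 (p + y) (Set.add_mem_add hp hy)
      rw [hw, inner_add_right, inner_add_right] at this
      linarith
  obtain ⟨hp₁F, hq₁F⟩ := hcomp hw₁f hp₁ hq₁ h1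
  obtain ⟨hp₂F, hq₂F⟩ := hcomp hw₂f hp₂ hq₂ h2
  by_cases hpp : p₁ = p₂
  · exact Or.inl hpp
  right
  have hFPsub : polyFace P c ⊆ segment ℝ (w₁ - q₁) (w₂ - q₁) := by
    intro f hf
    have hfq : f + q₁ ∈ segment ℝ w₁ w₂ := by
      rw [← hc, hfadd]
      exact Set.add_mem_add hf hq₁F
    have hmem : q₁ + f ∈ segment ℝ (q₁ + (w₁ - q₁)) (q₁ + (w₂ - q₁)) := by
      have e1 : q₁ + (w₁ - q₁) = w₁ := by abel
      have e2 : q₁ + (w₂ - q₁) = w₂ := by abel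
      rw [e1, e2, add_comm]
      exact hfq
    exact (mem_segment_translate ℝ q₁).1 hmem
  have hcolF : Collinear ℝ ((smin sP c : Finset (Esp d)) : Set (Esp d)) := by
    apply Collinear.subset ?_ (collinear_segment (w₁ - q₁) (w₂ - q₁))
    intro y hy
    apply hFPsub
    rw [hPdef, faceHull sP hsP c]
    exact subset_convexHull ℝ _ hy
  obtain ⟨α, β, hα, hβ, hseg⟩ :=
    collinear_hull_segment (smin sP c) (smin_nonempty hsP c) hcolF
  have hFP : polyFace P c = segment ℝ α β := by rw [hPdef, faceHull sP hsP c, hseg]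
  have hp₁V : p₁ ∈ polyVerts P := comp_extreme_left hw₁ hp₁ hq₁ h1
  have hp₂V : p₂ ∈ polyVerts P := comp_extreme_left hw₂ hp₂ hq₂ h2
  have hFsubP : polyFace P c ⊆ P := fun z hz => hz.1
  have hp₁e : p₁ ∈ Set.extremePoints ℝ (segment ℝ α β) := by
    rw [← hFP]
    exact extreme_of_subset hFsubP hp₁V hp₁F
  have hp₂e : p₂ ∈ Set.extremePoints ℝ (segment ℝ α β) := by
    rw [← hFP]
    exact extreme_of_subset hFsubP hp₂V hp₂F
  have hseg' : segment ℝ α β = segment ℝ p₁ p₂ := by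
    rcases extreme_of_segment hp₁e with rfl | rfl <;> rcases extreme_of_segment hp₂e with rfl | rfl
    · exact absurd rfl hpp
    · rfl
    · rw [segment_symm]
    · exact absurd rfl hpp
  exact ⟨hpp, hp₁V, hp₂V, c, by rw [hFP, hseg']⟩

/-- projecting a walk in P + Q to a walk in P -/
lemma walk_proj (sP sQ : Finset (Esp d)) (hsP : sP.Nonempty) (hsQ : sQ.Nonempty) :
    ∀ {w w' : Esp d}
    (walk : (polyGraph (convexHull ℝ (sP : Set (Esp d)) + convexHull ℝ (sQ : Set (Esp d)))).Walk w w')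
    {p q p' q' : Esp d},
    w ∈ polyVerts (convexHull ℝ (sP : Set (Esp d)) + convexHull ℝ (sQ : Set (Esp d))) →
    p ∈ convexHull ℝ (sP : Set (Esp d)) → q ∈ convexHull ℝ (sQ : Set (Esp d)) → w = p + q →
    p' ∈ convexHull ℝ (sP : Set (Esp d)) → q' ∈ convexHull ℝ (sQ : Set (Esp d)) → w' = p' + q' →
    ∃ ω : (polyGraph (convexHull ℝ (sP : Set (Esp d)))).Walk p p', ω.length ≤ walk.length := by
  intro w w' walk
  induction walk with
  | nil =>
    intro p q p' q' hwV hp hq hw hp' hq' hw'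
    have := sum_decomp_unique hwV hp hq hp' hq' hw hw'
    rcases this with ⟨rfl, -⟩
    exact ⟨SimpleGraph.Walk.nil, by simp⟩
  | @cons w w₁ w'' h rest ih =>
    intro p q p' q' hwV hp hq hw hp' hq' hw'
    have hw₁V : w₁ ∈ polyVerts (convexHull ℝ (sP : Set (Esp d)) + convexHull ℝ (sQ : Set (Esp d))) :=
      h.2.2.1
    obtain ⟨p₁, hp₁, q₁, hq₁, hw₁⟩ := Set.mem_add.1 hw₁V.1
    obtain ⟨ω₁, hω₁⟩ := ih hw₁V hp₁ hq₁ hw₁.symm hp' hq' hw'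
    rcases adj_proj sP sQ hsP hsQ h hp hq hp₁ hq₁ hw hw₁.symm with rfl | hadj
    · exact ⟨ω₁, by simp only [SimpleGraph.Walk.length_cons]; omega⟩
    · exact ⟨SimpleGraph.Walk.cons hadj ω₁, by show ω₁.length + 1 ≤ rest.length + 1; omega⟩

lemma verts_nonempty (s : Finset (Esp d)) (hs : s.Nonempty) :
    (polyVerts (convexHull ℝ (s : Set (Esp d)))).Nonempty := by
  obtain ⟨x, hx⟩ := hs
  exact (s.finite_toSet.isCompact_convexHull ℝ).extremePoints_nonempty
    ⟨x, subset_convexHull ℝ _ (Finset.mem_coe.2 hx)⟩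

lemma diam_set_bddAbove (P : Set (Esp d)) (hfin : (polyVerts P).Finite) :
    BddAbove {n : ℕ | ∃ u ∈ polyVerts P, ∃ v ∈ polyVerts P, n = (polyGraph P).dist u v} := by
  apply Set.Finite.bddAbove
  have hsub : {n : ℕ | ∃ u ∈ polyVerts P, ∃ v ∈ polyVerts P, n = (polyGraph P).dist u v}
      ⊆ (fun p : Esp d × Esp d => (polyGraph P).dist p.1 p.2) '' (polyVerts P ×ˢ polyVerts P) := by
    rintro n ⟨u, hu, v, hv, rfl⟩
    exact ⟨(u, v), ⟨hu, hv⟩, rfl⟩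
  exact Set.Finite.subset ((hfin.prod hfin).image _) hsub

lemma half (sP sQ : Finset (Esp d)) (hsP : sP.Nonempty) (hsQ : sQ.Nonempty) :
    polyDiam (convexHull ℝ (sP : Set (Esp d)))
      ≤ polyDiam (convexHull ℝ (sP : Set (Esp d)) + convexHull ℝ (sQ : Set (Esp d))) := by
  classical
  have hPQhull : convexHull ℝ (sP : Set (Esp d)) + convexHull ℝ (sQ : Set (Esp d))
      = convexHull ℝ ((sP + sQ : Finset (Esp d)) : Set (Esp d)) := by
    rw [Finset.coe_add, convexHull_add]
  have hfinPQ : (polyVerts (convexHull ℝ (sP : Set (Esp d)) + convexHull ℝ (sQ : Set (Esp d)))).Finite := by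
    rw [hPQhull]
    exact Set.Finite.subset (sP + sQ).finite_toSet extremePoints_convexHull_subset
  unfold polyDiam
  apply csSup_le
  · obtain ⟨u₀, hu₀⟩ := verts_nonempty sP hsP
    exact ⟨_, ⟨u₀, hu₀, u₀, hu₀, rfl⟩⟩
  rintro n ⟨u, hu, v, hv, rfl⟩
  obtain ⟨qu, hqu, hwu⟩ := lift_vertex sP sQ hsP hsQ hu
  obtain ⟨qv, hqv, hwv⟩ := lift_vertex sP sQ hsP hsQ hv
  have hreach : (polyGraph (convexHull ℝ (sP : Set (Esp d)) + convexHull ℝ (sQ : Set (Esp d)))).Reachable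
      (u + qu) (v + qv) := by
    rw [hPQhull]
    rw [hPQhull] at hwu hwv
    exact conn (sP + sQ).card (sP + sQ) le_rfl (u + qu) hwu (v + qv) hwv
  obtain ⟨ω, hω⟩ := hreach.exists_walk_length_eq_dist
  obtain ⟨ω', hω'⟩ := walk_proj sP sQ hsP hsQ ω hwu hu.1 hqu rfl hv.1 hqv rfl
  have hdist : (polyGraph (convexHull ℝ (sP : Set (Esp d)))).dist u v
      ≤ (polyGraph (convexHull ℝ (sP : Set (Esp d)) + convexHull ℝ (sQ : Set (Esp d)))).dist
          (u + qu) (v + qv) := by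
    calc (polyGraph (convexHull ℝ (sP : Set (Esp d)))).dist u v
        ≤ ω'.length := SimpleGraph.dist_le ω'
    _ ≤ ω.length := hω'
    _ = _ := hω
  apply le_trans hdist
  exact le_csSup (diam_set_bddAbove _ hfinPQ) ⟨u + qu, hwu, v + qv, hwv, rfl⟩

end PolyAux

theorem stmt1 {d : ℕ} (P Q : Set (Esp d)) (hP : IsPolytope P) (hQ : IsPolytope Q) :
    max (polyDiam P) (polyDiam Q) ≤ polyDiam (P + Q) := by
  obtain ⟨sP, hsPne, rfl⟩ := hP
  obtain ⟨sQ, hsQne, rfl⟩ := hQ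
  apply max_le
  · exact PolyAux.half sP sQ hsPne hsQne
  · have h := PolyAux.half sQ sP hsQne hsPne
    rwa [add_comm (convexHull ℝ (sQ : Set (Esp d)))] at h
end
end

section
/- Let P and Q be polytopes in ℝ^d whose normal fans coincide, i.e., for every vector c, {c' : F_P(c) ⊆ F_P(c')} = {c' : F_Q(c) ⊆ F_Q(c')}. Then P has a summand homothetic to Q: there exist a real α > 0 and a polytope R such that P = α • Q + R. -/
set_option linter.unusedSectionVars false


open Pointwise
open scoped RealInnerProductSpace

noncomputable section

namespace Stmt13Aux

variable {E : Type*} [NormedAddCommGroup E] [InnerProductSpace ℝ E] [FiniteDimensional ℝ E]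

/-- conic combinations of a finite set -/
def coneOf (S : Finset E) : Set E :=
  {x | ∃ lam : E → ℝ, (∀ a ∈ S, 0 ≤ lam a) ∧ x = ∑ a ∈ S, lam a • a}

lemma zero_mem_coneOf (S : Finset E) : (0 : E) ∈ coneOf S :=
  ⟨fun _ => 0, fun _ _ => le_refl _, by simp⟩

lemma mem_coneOf_self {S : Finset E} {a : E} (ha : a ∈ S) : a ∈ coneOf S := by
  classical
  refine ⟨fun x => if x = a then 1 else 0, fun x _ => by dsimp only; split_ifs <;> norm_num, ?_⟩
  simp only [ite_smul, one_smul, zero_smul, Finset.sum_ite_eq', ha, if_true]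

lemma smul_mem_coneOf {S : Finset E} {x : E} (hx : x ∈ coneOf S) {r : ℝ} (hr : 0 ≤ r) :
    r • x ∈ coneOf S := by
  obtain ⟨lam, hlam, rfl⟩ := hx
  exact ⟨fun a => r * lam a, fun a ha => mul_nonneg hr (hlam a ha),
    by simp only [Finset.smul_sum]; exact Finset.sum_congr rfl fun a _ => (mul_smul _ _ _).symm⟩

lemma convex_coneOf (S : Finset E) : Convex ℝ (coneOf S) := by
  rintro x ⟨lx, hlx, rfl⟩ y ⟨ly, hly, rfl⟩ a b ha hb _
  refine ⟨fun v => a * lx v + b * ly v, fun v hv =>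
    add_nonneg (mul_nonneg ha (hlx v hv)) (mul_nonneg hb (hly v hv)), ?_⟩
  simp only [Finset.smul_sum, ← Finset.sum_add_distrib]
  exact Finset.sum_congr rfl fun v _ => by show _ = (a * lx v + b * ly v) • v; rw [add_smul, mul_smul, mul_smul]

lemma conic_carath (S : Finset E) (f : E → ℝ) (hf : ∀ a ∈ S, 0 ≤ f a) :
    ∃ T : Finset E, T ⊆ S ∧ LinearIndependent ℝ (fun x : {a // a ∈ T} => (x : E)) ∧
      ∃ g : E → ℝ, (∀ a ∈ T, 0 ≤ g a) ∧ ∑ a ∈ T, g a • a = ∑ a ∈ S, f a • a := by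
  classical
  induction S using Finset.strongInductionOn generalizing f with
  | _ S ih =>
  by_cases hli : LinearIndependent ℝ (fun x : {a // a ∈ S} => (x : E))
  · exact ⟨S, le_refl _, hli, f, hf, rfl⟩
  · obtain ⟨g0, hg0sum, i0, hi0⟩ := Fintype.not_linearIndependent_iff.mp hli
    set μ : E → ℝ := fun x => if h : x ∈ S then g0 ⟨x, h⟩ else 0 with hμdef
    have hμsum : ∑ a ∈ S, μ a • a = 0 := by
      rw [← Finset.sum_attach S (fun a => μ a • a), ← hg0sum]
      refine Finset.sum_congr rfl fun i _ => ?_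
      simp only [hμdef, dif_pos i.2]
    have hμi0 : μ (i0 : E) = g0 i0 := by simp only [hμdef, dif_pos i0.2]
    obtain ⟨ν, hνsum, a1, ha1S, ha1pos⟩ :
        ∃ ν : E → ℝ, (∑ a ∈ S, ν a • a = 0) ∧ ∃ a ∈ S, 0 < ν a := by
      rcases lt_or_gt_of_ne hi0 with hneg | hpos
      · refine ⟨fun a => -μ a, ?_, (i0 : E), i0.2, ?_⟩
        · have : ∑ a ∈ S, -(μ a • a) = -∑ a ∈ S, μ a • a := Finset.sum_neg_distrib _
          simp only [neg_smul]
          rw [this, hμsum, neg_zero]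
        · show 0 < -μ (i0 : E)
          rw [hμi0]; linarith
      · exact ⟨μ, hμsum, (i0 : E), i0.2, hμi0 ▸ hpos⟩
    set T' : Finset E := S.filter (fun a => 0 < ν a) with hT'
    have hT'ne : T'.Nonempty := ⟨a1, Finset.mem_filter.mpr ⟨ha1S, ha1pos⟩⟩
    set r : ℝ := T'.inf' hT'ne (fun a => f a / ν a) with hrdef
    obtain ⟨a₀, ha₀T', ha₀⟩ := Finset.exists_mem_eq_inf' hT'ne (fun a => f a / ν a)
    have ha₀S : a₀ ∈ S := (Finset.filter_subset _ _) ha₀T'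
    have ha₀pos : 0 < ν a₀ := (Finset.mem_filter.mp ha₀T').2
    have hr0 : 0 ≤ r := by
      rw [hrdef, ha₀]
      exact div_nonneg (hf a₀ ha₀S) ha₀pos.le
    set f' : E → ℝ := fun a => f a - r * ν a with hf'def
    have hf'0 : ∀ a ∈ S, 0 ≤ f' a := by
      intro a haS
      by_cases hν : 0 < ν a
      · have h1 : r ≤ f a / ν a := Finset.inf'_le _ (Finset.mem_filter.mpr ⟨haS, hν⟩)
        have h2 := (le_div_iff₀ hν).mp h1
        show 0 ≤ f a - r * ν a
        linarith
      · push_neg at hν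
        have h1 : r * ν a ≤ 0 := mul_nonpos_iff.mpr (Or.inl ⟨hr0, hν⟩)
        have h2 := hf a haS
        show 0 ≤ f a - r * ν a
        linarith
    have hf'a₀ : f' a₀ = 0 := by
      show f a₀ - r * ν a₀ = 0
      rw [hrdef, ha₀, div_mul_cancel₀ _ (ne_of_gt ha₀pos), sub_self]
    have hsum' : ∑ a ∈ S, f' a • a = ∑ a ∈ S, f a • a := by
      have h1 : ∑ a ∈ S, (r * ν a) • a = r • ∑ a ∈ S, ν a • a := by
        rw [Finset.smul_sum]; exact Finset.sum_congr rfl fun a _ => mul_smul r (ν a) a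
      simp only [hf'def, sub_smul, Finset.sum_sub_distrib, h1, hνsum, smul_zero, sub_zero]
    obtain ⟨T, hTsub, hTli, g, hg0, hgsum⟩ :=
      ih (S.erase a₀) (Finset.erase_ssubset ha₀S) f' (fun a ha => hf'0 a (Finset.erase_subset _ _ ha))
    refine ⟨T, hTsub.trans (Finset.erase_subset _ _), hTli, g, hg0, ?_⟩
    rw [hgsum, Finset.sum_erase _ (by rw [hf'a₀, zero_smul]), hsum']


def comboMap (T : Finset E) : ({a // a ∈ T} → ℝ) →ₗ[ℝ] E where
  toFun g := ∑ i, g i • (i : E)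
  map_add' g h := by simp [add_smul, Finset.sum_add_distrib]
  map_smul' r g := by simp [mul_smul, Finset.smul_sum]

lemma coneOf_eq_union (S : Finset E) :
    coneOf S = ⋃ T ∈ {T : Finset E | T ⊆ S ∧
        LinearIndependent ℝ (fun x : {a // a ∈ T} => (x : E))},
      comboMap T '' {g | ∀ i, 0 ≤ g i} := by
  classical
  ext x
  simp only [Set.mem_iUnion, Set.mem_setOf_eq, Set.mem_image, exists_prop]
  constructor
  · rintro ⟨f, hf, rfl⟩
    obtain ⟨T, hTS, hli, g, hg, hsum⟩ := conic_carath S f hf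
    refine ⟨T, ⟨hTS, hli⟩, fun i => g (i : E), fun i => hg _ i.2, ?_⟩
    show ∑ i : {a // a ∈ T}, g (i : E) • (i : E) = _
    rw [← Finset.sum_attach T (fun a => g a • a)] at hsum
    rw [← hsum, Finset.univ_eq_attach]
  · rintro ⟨T, ⟨hTS, -⟩, g, hg, rfl⟩
    refine ⟨fun a => if h : a ∈ T then g ⟨a, h⟩ else 0, fun a _ => ?_, ?_⟩
    · dsimp only; split_ifs with hT
      · exact hg ⟨a, hT⟩
      · exact le_refl 0
    · show comboMap T g = _
      rw [← Finset.sum_subset hTS (fun a _ haT => by show (if h : a ∈ T then g ⟨a, h⟩ else 0) • a = 0; rw [dif_neg haT, zero_smul])]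
      show _ = ∑ a ∈ T, (if h : a ∈ T then g ⟨a, h⟩ else 0) • a
      rw [← Finset.sum_attach T (fun a => (if h : a ∈ T then g ⟨a, h⟩ else 0) • a)]
      show ∑ i : {a // a ∈ T}, g i • (i : E) = _
      rw [Finset.univ_eq_attach]
      exact Finset.sum_congr rfl fun i _ => by rw [dif_pos i.2]

lemma isClosed_coneOf (S : Finset E) : IsClosed (coneOf S) := by
  rw [coneOf_eq_union]
  refine Set.Finite.isClosed_biUnion ?_ ?_
  · refine Set.Finite.subset S.powerset.finite_toSet fun T hT => ?_
    simpa [Finset.mem_powerset] using hT.1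
  · rintro T ⟨-, hli⟩
    have hker : LinearMap.ker (comboMap (E := E) T) = ⊥ := by
      rw [eq_bot_iff]
      intro g hg
      have := Fintype.linearIndependent_iff.mp hli g hg
      exact funext this
    have hce := LinearMap.isClosedEmbedding_of_injective hker
    refine hce.isClosedMap _ ?_
    have : {g : {a // a ∈ T} → ℝ | ∀ i, 0 ≤ g i} = ⋂ i, {g | 0 ≤ g i} := by
      ext g; simp [Set.mem_iInter]
    rw [this]
    exact isClosed_iInter fun i => isClosed_le continuous_const (continuous_apply i)

lemma farkas (S : Finset E) (b : E)
    (hyp : ∀ c : E, (∀ a ∈ S, ⟪c, a⟫ ≤ 0) → ⟪c, b⟫ ≤ 0) : b ∈ coneOf S := by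
  by_contra hb
  obtain ⟨f, u, hfa, hub⟩ :=
    geometric_hahn_banach_closed_point (convex_coneOf S) (isClosed_coneOf S) hb
  have hu0 : 0 < u := by simpa using hfa 0 (zero_mem_coneOf S)
  have hfneg : ∀ x ∈ coneOf S, f x ≤ 0 := by
    intro x hx
    by_contra hpos
    push_neg at hpos
    have h2 : ((u + 1) / f x) • x ∈ coneOf S :=
      smul_mem_coneOf hx (by positivity)
    have h3 := hfa _ h2
    rw [map_smul, smul_eq_mul, div_mul_cancel₀ _ (ne_of_gt hpos)] at h3
    linarith
  set c := (InnerProductSpace.toDual ℝ E).symm f with hc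
  have hcx : ∀ x, ⟪c, x⟫ = f x := fun x => InnerProductSpace.toDual_symm_apply
  have hfin := hyp c fun a ha => by rw [hcx]; exact hfneg a (mem_coneOf_self ha)
  rw [hcx] at hfin
  linarith


def mval (s : Finset E) (hs : s.Nonempty) (c : E) : ℝ := s.inf' hs fun v => ⟪c, v⟫

open Classical in
def amin (s : Finset E) (hs : s.Nonempty) (c : E) : Finset E :=
  s.filter fun v => ⟪c, v⟫ = mval s hs c

def pp (F : Finset E) : E := (F.card : ℝ)⁻¹ • ∑ v ∈ F, v

lemma innerLinear (c : E) : IsLinearMap ℝ (fun x : E => ⟪c, x⟫) :=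
  ⟨fun x y => inner_add_right c x y, fun r x => real_inner_smul_right c x r⟩

lemma mval_le {s : Finset E} {hs : s.Nonempty} {c x} (hx : x ∈ convexHull ℝ (s : Set E)) :
    mval s hs c ≤ ⟪c, x⟫ := by
  refine convexHull_min (fun v hv => ?_) (convex_halfSpace_ge (innerLinear c) _) hx
  exact Finset.inf'_le (fun v => ⟪c, v⟫) (Finset.mem_coe.mp hv)

lemma amin_nonempty (s : Finset E) (hs : s.Nonempty) (c : E) : (amin s hs c).Nonempty := by
  classical
  obtain ⟨v, hv, h'⟩ := Finset.exists_mem_eq_inf' hs fun v => ⟪c, v⟫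
  exact ⟨v, by rw [amin]; exact Finset.mem_filter.mpr ⟨hv, h'.symm⟩⟩

lemma amin_subset (s : Finset E) (hs : s.Nonempty) (c : E) : amin s hs c ⊆ s := by
  classical
  rw [amin]; exact Finset.filter_subset _ _

lemma amin_inner {s : Finset E} {hs : s.Nonempty} {c v} (hv : v ∈ amin s hs c) :
    ⟪c, v⟫ = mval s hs c := by
  classical
  rw [amin] at hv
  exact (Finset.mem_filter.mp hv).2

lemma amin_mem {s : Finset E} {hs : s.Nonempty} {c v} (hvs : v ∈ s)
    (hvm : ⟪c, v⟫ = mval s hs c) : v ∈ amin s hs c := by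
  classical
  rw [amin]; exact Finset.mem_filter.mpr ⟨hvs, hvm⟩

lemma inner_pp (F : Finset E) (c : E) :
    ⟪c, pp F⟫ = (F.card : ℝ)⁻¹ * ∑ v ∈ F, ⟪c, v⟫ := by
  rw [pp, real_inner_smul_right, inner_sum]

lemma inner_pp_const {F : Finset E} (hF : F.Nonempty) {c : E} {r : ℝ}
    (h : ∀ v ∈ F, ⟪c, v⟫ = r) : ⟪c, pp F⟫ = r := by
  rw [inner_pp, Finset.sum_congr rfl h, Finset.sum_const, nsmul_eq_mul]
  have hc : (F.card : ℝ) ≠ 0 := Nat.cast_ne_zero.mpr hF.card_ne_zero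
  field_simp

lemma inner_pp_amin (s : Finset E) (hs : s.Nonempty) (c : E) :
    ⟪c, pp (amin s hs c)⟫ = mval s hs c :=
  inner_pp_const (amin_nonempty s hs c) fun _ hv => amin_inner hv

lemma pp_mem_hull {F : Finset E} (hF : F.Nonempty) : pp F ∈ convexHull ℝ (F : Set E) := by
  have h := Finset.centerMass_mem_convexHull F (w := fun _ => (1 : ℝ))
    (fun _ _ => zero_le_one)
    (by rw [Finset.sum_const, nsmul_eq_mul, mul_one]; exact_mod_cast hF.card_pos)
    (z := id) (fun i hi => Finset.mem_coe.mpr hi)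
  have he : F.centerMass (fun _ => (1 : ℝ)) id = pp F := by
    rw [Finset.centerMass, pp, Finset.sum_const, nsmul_eq_mul, mul_one]
    congr 1
    exact Finset.sum_congr rfl fun v _ => one_smul ℝ v
  rwa [he] at h

lemma amin_mono {s : Finset E} {hs : s.Nonempty} {c₀ c : E}
    (h : ⟪c, pp (amin s hs c₀)⟫ = mval s hs c) : amin s hs c₀ ⊆ amin s hs c := by
  set F := amin s hs c₀ with hF
  have hFne : F.Nonempty := amin_nonempty s hs c₀
  have hc : (F.card : ℝ) ≠ 0 := Nat.cast_ne_zero.mpr hFne.card_ne_zero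
  have hsum : ∑ v ∈ F, ⟪c, v⟫ = (F.card : ℝ) * mval s hs c := by
    rw [inner_pp] at h
    field_simp at h
    linarith [h]
  have hzero : ∑ v ∈ F, (⟪c, v⟫ - mval s hs c) = 0 := by
    rw [Finset.sum_sub_distrib, hsum, Finset.sum_const, nsmul_eq_mul, sub_self]
  have hnn : ∀ v ∈ F, 0 ≤ ⟪c, v⟫ - mval s hs c := fun v hv =>
    sub_nonneg.mpr (Finset.inf'_le (fun v => ⟪c, v⟫) (amin_subset s hs c₀ hv))
  have hall := (Finset.sum_eq_zero_iff_of_nonneg hnn).mp hzero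
  intro v hv
  exact amin_mem (amin_subset s hs c₀ hv) (by linarith [hall v hv])

lemma hull_amin_inner {s : Finset E} {hs : s.Nonempty} {c x}
    (hx : x ∈ convexHull ℝ ((amin s hs c : Finset E) : Set E)) : ⟪c, x⟫ = mval s hs c := by
  refine convexHull_min (fun v hv => amin_inner (Finset.mem_coe.mp hv))
    (convex_hyperplane (innerLinear c) _) hx

end Stmt13Aux

namespace Stmt13Aux

lemma face_subset_amin {d : ℕ} (s : Finset (Esp d)) (hs : s.Nonempty) (c : Esp d) :
    polyFace (convexHull ℝ (s : Set (Esp d))) c ⊆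
      convexHull ℝ ((amin s hs c : Finset (Esp d)) : Set (Esp d)) := by
  classical
  rintro x ⟨hxP, hxmin⟩
  obtain ⟨v₀, hv₀s, hv₀⟩ := Finset.exists_mem_eq_inf' hs (fun v => ⟪c, v⟫)
  have hxv : ⟪c, x⟫ = mval s hs c := by
    refine le_antisymm ?_ (mval_le hxP)
    have h1 := hxmin v₀ (subset_convexHull ℝ _ hv₀s)
    rw [mval, hv₀]; exact h1
  rw [Finset.convexHull_eq] at hxP
  obtain ⟨w, hw0, hw1, hwx⟩ := hxP
  have hxc : ∑ v ∈ s, w v • v = x := by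
    rw [← hwx, Finset.centerMass_eq_of_sum_1 _ _ hw1]; rfl
  have hinner : ∑ v ∈ s, w v * ⟪c, v⟫ = mval s hs c := by
    rw [← hxv, ← hxc, inner_sum]
    exact Finset.sum_congr rfl fun v _ => (real_inner_smul_right _ _ _).symm
  have hzero : ∑ v ∈ s, w v * (⟪c, v⟫ - mval s hs c) = 0 := by
    simp only [mul_sub, Finset.sum_sub_distrib, hinner, ← Finset.sum_mul, hw1, one_mul,
      sub_self]
  have hnn : ∀ v ∈ s, 0 ≤ w v * (⟪c, v⟫ - mval s hs c) := fun v hv =>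
    mul_nonneg (hw0 v hv) (sub_nonneg.mpr (Finset.inf'_le (fun v => ⟪c, v⟫) hv))
  have hall := (Finset.sum_eq_zero_iff_of_nonneg hnn).mp hzero
  have hsupp : ∀ v ∈ s, v ∉ amin s hs c → w v = 0 := by
    intro v hv hnv
    rcases mul_eq_zero.mp (hall v hv) with h1 | h1
    · exact h1
    · exact absurd (amin_mem hv (by linarith [sub_eq_zero.mp h1])) hnv
  have hws : ∑ v ∈ amin s hs c, w v = 1 := by
    rw [← hw1]
    exact Finset.sum_subset (amin_subset s hs c) fun v hv hnv => hsupp v hv hnv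
  have hxa : (amin s hs c).centerMass w id = x := by
    rw [Finset.centerMass_eq_of_sum_1 _ _ hws, ← hxc]
    exact Finset.sum_subset (amin_subset s hs c)
      fun v hv hnv => by rw [hsupp v hv hnv, zero_smul]
  rw [← hxa]
  exact Finset.centerMass_mem_convexHull _
    (fun v hv => hw0 v (amin_subset s hs c hv))
    (by rw [hws]; exact one_pos) (fun i hi => Finset.mem_coe.mpr hi)

end Stmt13Aux

open Stmt13Aux


open Stmt13Aux

set_option maxHeartbeats 2000000 in
theorem stmt13 {d : ℕ} (P Q : Set (Esp d)) (hP : IsPolytope P) (hQ : IsPolytope Q)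
    (h : ∀ c : Esp d,
      {c' : Esp d | polyFace P c ⊆ polyFace P c'} =
      {c' : Esp d | polyFace Q c ⊆ polyFace Q c'}) :
    ∃ α : ℝ, 0 < α ∧ ∃ R : Set (Esp d), IsPolytope R ∧ P = α • Q + R := by
  classical
  obtain ⟨s, hs, hPs⟩ := hP
  obtain ⟨t, ht, hQt⟩ := hQ
  have hmP : ∀ x ∈ P, ∀ c, mval s hs c ≤ ⟪c, x⟫ := by
    intro x hx c; rw [hPs] at hx; exact mval_le hx
  have hmQ : ∀ x ∈ Q, ∀ c, mval t ht c ≤ ⟪c, x⟫ := by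
    intro x hx c; rw [hQt] at hx; exact mval_le hx
  have hppP : ∀ c, pp (amin s hs c) ∈ P := by
    intro c; rw [hPs]
    exact convexHull_mono (Finset.coe_subset.mpr (amin_subset s hs c))
      (pp_mem_hull (amin_nonempty s hs c))
  have hppQ : ∀ c, pp (amin t ht c) ∈ Q := by
    intro c; rw [hQt]
    exact convexHull_mono (Finset.coe_subset.mpr (amin_subset t ht c))
      (pp_mem_hull (amin_nonempty t ht c))
  have hfaceQ : ∀ c, pp (amin t ht c) ∈ polyFace Q c := fun c =>
    ⟨hppQ c, fun y hy => by rw [inner_pp_amin]; exact hmQ y hy c⟩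
  have hmono : ∀ c₀ c, ⟪c, pp (amin s hs c₀)⟫ = mval s hs c →
      polyFace P c₀ ⊆ polyFace P c := by
    intro c₀ c hpc x hx
    have h1 : x ∈ convexHull ℝ ((amin s hs c₀ : Finset (Esp d)) : Set (Esp d)) := by
      refine face_subset_amin s hs c₀ ?_
      rw [hPs] at hx
      exact hx
    have h2 := convexHull_mono (Finset.coe_subset.mpr (amin_mono hpc)) h1
    have h3 : ⟪c, x⟫ = mval s hs c := hull_amin_inner h2
    exact ⟨hx.1, fun y hy => by rw [h3]; exact hmP y hy c⟩
  have htrans : ∀ c₀ c, ⟪c, pp (amin s hs c₀)⟫ = mval s hs c →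
      ⟪c, pp (amin t ht c₀)⟫ = mval t ht c := by
    intro c₀ c hpc
    have hQmono : polyFace Q c₀ ⊆ polyFace Q c := by
      have hc : c ∈ {c' | polyFace P c₀ ⊆ polyFace P c'} := hmono c₀ c hpc
      rw [h c₀] at hc
      exact hc
    have hq0 := hQmono (hfaceQ c₀)
    obtain ⟨w₀, hw₀t, hw₀⟩ := Finset.exists_mem_eq_inf' ht (fun w => ⟪c, w⟫)
    refine le_antisymm ?_ (hmQ _ hq0.1 c)
    have h1 := hq0.2 w₀ (by rw [hQt]; exact subset_convexHull ℝ _ hw₀t)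
    rw [mval, hw₀]; exact h1
  have hMex : ∀ c₀, ∀ w ∈ t, ∃ M : ℝ, 0 ≤ M ∧ ∀ c,
      ⟪c, pp (amin t ht c₀) - w⟫ ≤ M * (⟪c, pp (amin s hs c₀)⟫ - mval s hs c) := by
    intro c₀ w hw
    set img := s.image (fun v => pp (amin s hs c₀) - v) with himg
    have hyp : ∀ c : Esp d, (∀ a ∈ img, ⟪c, a⟫ ≤ 0) →
        ⟪c, pp (amin t ht c₀) - w⟫ ≤ 0 := by
      intro c hc
      have hple : ∀ v ∈ s, ⟪c, pp (amin s hs c₀)⟫ ≤ ⟪c, v⟫ := by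
        intro v hv
        have h1 := hc _ (Finset.mem_image_of_mem _ hv)
        rwa [inner_sub_right, sub_nonpos] at h1
      have hpm : ⟪c, pp (amin s hs c₀)⟫ = mval s hs c :=
        le_antisymm (Finset.le_inf' hs _ hple) (hmP _ (hppP c₀) c)
      have hq := htrans c₀ c hpm
      rw [inner_sub_right, sub_nonpos, hq]
      exact Finset.inf'_le (fun v => ⟪c, v⟫) hw
    obtain ⟨lam, hlam, hsum⟩ := farkas _ _ hyp
    refine ⟨(∑ a ∈ img, lam a), Finset.sum_nonneg hlam, ?_⟩
    intro c
    rw [hsum, inner_sum]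
    have hterm : ∀ a ∈ img,
        ⟪c, lam a • a⟫ ≤ lam a * (⟪c, pp (amin s hs c₀)⟫ - mval s hs c) := by
      intro a ha
      rw [real_inner_smul_right]
      refine mul_le_mul_of_nonneg_left ?_ (hlam _ ha)
      obtain ⟨v, hv, rfl⟩ := Finset.mem_image.mp ha
      rw [inner_sub_right]
      have h2 : mval s hs c ≤ ⟪c, v⟫ := Finset.inf'_le (fun v => ⟪c, v⟫) hv
      linarith
    calc ∑ a ∈ img, ⟪c, lam a • a⟫
        ≤ ∑ a ∈ img, lam a * (⟪c, pp (amin s hs c₀)⟫ - mval s hs c) :=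
          Finset.sum_le_sum hterm
      _ = (∑ a ∈ img, lam a) * (⟪c, pp (amin s hs c₀)⟫ - mval s hs c) :=
          (Finset.sum_mul _ _ _).symm
  obtain ⟨K, hKmem⟩ : ∃ K : Finset (Finset (Esp d) × Finset (Esp d)),
      ∀ AB, AB ∈ K ↔ ∃ c₀ : Esp d, amin s hs c₀ = AB.1 ∧ amin t ht c₀ = AB.2 := by
    refine ⟨(s.powerset ×ˢ t.powerset).filter
      (fun AB => ∃ c₀, amin s hs c₀ = AB.1 ∧ amin t ht c₀ = AB.2), ?_⟩
    intro AB
    rw [Finset.mem_filter]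
    constructor
    · rintro ⟨-, hc⟩; exact hc
    · rintro ⟨c₀, h1, h2⟩
      refine ⟨Finset.mem_product.mpr ⟨?_, ?_⟩, c₀, h1, h2⟩
      · exact Finset.mem_powerset.mpr (h1 ▸ amin_subset s hs c₀)
      · exact Finset.mem_powerset.mpr (h2 ▸ amin_subset t ht c₀)
  have hKself : ∀ c : Esp d, (amin s hs c, amin t ht c) ∈ K := fun c =>
    (hKmem _).mpr ⟨c, rfl, rfl⟩
  obtain ⟨ε, hε0, hkey⟩ : ∃ ε : ℝ, 0 < ε ∧ ∀ AB ∈ K, ∀ c : Esp d,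
      ε * (⟪c, pp AB.2⟫ - mval t ht c) ≤ ⟪c, pp AB.1⟫ - mval s hs c := by
    set gM : (Finset (Esp d) × Finset (Esp d)) × Esp d → ℝ := fun x =>
      if hx : ∃ M : ℝ, 0 ≤ M ∧ ∀ c, ⟪c, pp x.1.2 - x.2⟫ ≤ M * (⟪c, pp x.1.1⟫ - mval s hs c)
      then hx.choose else 0 with hgM
    have hgM0 : ∀ x, 0 ≤ gM x := by
      intro x; rw [hgM]; dsimp only; split_ifs with hx
      · exact hx.choose_spec.1
      · exact le_refl 0
    have hgMspec : ∀ x, (∃ M : ℝ, 0 ≤ M ∧ ∀ c,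
        ⟪c, pp x.1.2 - x.2⟫ ≤ M * (⟪c, pp x.1.1⟫ - mval s hs c)) →
        ∀ c, ⟪c, pp x.1.2 - x.2⟫ ≤ gM x * (⟪c, pp x.1.1⟫ - mval s hs c) := by
      intro x hx c; rw [hgM]; dsimp only; rw [dif_pos hx]; exact hx.choose_spec.2 c
    set Ms : ℝ := ∑ x ∈ K ×ˢ t, gM x with hMs
    have hMs0 : 0 ≤ Ms := Finset.sum_nonneg fun x _ => hgM0 x
    have hgMle : ∀ x ∈ K ×ˢ t, gM x ≤ Ms := fun x hx =>
      Finset.single_le_sum (fun y _ => hgM0 y) hx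
    set ε : ℝ := (1 + Ms)⁻¹ with hε
    have h1Ms : (0:ℝ) < 1 + Ms := by linarith
    have hε0 : 0 < ε := by rw [hε]; positivity
    have hεMs : ε * Ms ≤ 1 := by
      have hprod : ε * (1 + Ms) = 1 := by rw [hε]; field_simp
      nlinarith [hε0.le]
    refine ⟨ε, hε0, ?_⟩
    intro AB hAB c
    obtain ⟨c₀, hc1, hc2⟩ := (hKmem AB).mp hAB
    obtain ⟨w₀, hw₀t, hw₀⟩ := Finset.exists_mem_eq_inf' ht (fun w => ⟪c, w⟫)
    have hx : (AB, w₀) ∈ K ×ˢ t := Finset.mem_product.mpr ⟨hAB, hw₀t⟩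
    have hex : ∃ M : ℝ, 0 ≤ M ∧ ∀ c,
        ⟪c, pp AB.2 - w₀⟫ ≤ M * (⟪c, pp AB.1⟫ - mval s hs c) := by
      rw [← hc1, ← hc2]; exact hMex c₀ w₀ hw₀t
    have hbound := hgMspec (AB, w₀) hex c
    have hφ0 : 0 ≤ ⟪c, pp AB.1⟫ - mval s hs c := by
      rw [← hc1]; exact sub_nonneg.mpr (hmP _ (hppP c₀) c)
    have hψ : ⟪c, pp AB.2⟫ - mval t ht c = ⟪c, pp AB.2 - w₀⟫ := by
      rw [inner_sub_right, mval, hw₀]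
    rw [hψ]
    calc ε * ⟪c, pp AB.2 - w₀⟫
        ≤ ε * (gM (AB, w₀) * (⟪c, pp AB.1⟫ - mval s hs c)) :=
          mul_le_mul_of_nonneg_left hbound hε0.le
      _ ≤ ε * (Ms * (⟪c, pp AB.1⟫ - mval s hs c)) :=
          mul_le_mul_of_nonneg_left
            (mul_le_mul_of_nonneg_right (hgMle _ hx) hφ0) hε0.le
      _ = (ε * Ms) * (⟪c, pp AB.1⟫ - mval s hs c) := by ring
      _ ≤ 1 * (⟪c, pp AB.1⟫ - mval s hs c) := mul_le_mul_of_nonneg_right hεMs hφ0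
      _ = ⟪c, pp AB.1⟫ - mval s hs c := one_mul _
  obtain ⟨D, hDmem⟩ : ∃ D : Finset (Esp d),
      ∀ x, x ∈ D ↔ ∃ AB ∈ K, pp AB.1 - ε • pp AB.2 = x :=
    ⟨K.image (fun AB => pp AB.1 - ε • pp AB.2), fun x => Finset.mem_image⟩
  have hDne : D.Nonempty := ⟨_, (hDmem _).mpr ⟨_, hKself 0, rfl⟩⟩
  set R : Set (Esp d) := convexHull ℝ (D : Set (Esp d)) with hR
  have hRD : ∀ c : Esp d, ∀ x ∈ R, mval s hs c - ε * mval t ht c ≤ ⟪c, x⟫ := by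
    intro c x hx
    rw [hR] at hx
    refine convexHull_min ?_ (convex_halfSpace_ge (innerLinear c) _) hx
    intro y hy
    obtain ⟨AB, hAB, rfl⟩ := (hDmem y).mp (Finset.mem_coe.mp hy)
    have hk := hkey AB hAB c
    show mval s hs c - ε * mval t ht c ≤ ⟪c, pp AB.1 - ε • pp AB.2⟫
    rw [inner_sub_right, real_inner_smul_right, mul_sub] at *
    linarith [hk]
  have hRwit : ∀ c : Esp d, ∃ x ∈ (D : Set (Esp d)),
      ⟪c, x⟫ = mval s hs c - ε * mval t ht c := by
    intro c
    refine ⟨pp (amin s hs c) - ε • pp (amin t ht c),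
      Finset.mem_coe.mpr ((hDmem _).mpr ⟨_, hKself c, rfl⟩), ?_⟩
    rw [inner_sub_right, real_inner_smul_right, inner_pp_amin, inner_pp_amin]
  have hPcomp : IsCompact P := by rw [hPs]; exact s.finite_toSet.isCompact_convexHull (𝕜 := ℝ)
  have hQcomp : IsCompact Q := by rw [hQt]; exact t.finite_toSet.isCompact_convexHull (𝕜 := ℝ)
  have hRcomp : IsCompact R := by rw [hR]; exact D.finite_toSet.isCompact_convexHull (𝕜 := ℝ)
  have hQconv : Convex ℝ Q := by rw [hQt]; exact convex_convexHull ℝ _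
  have hRconv : Convex ℝ R := by rw [hR]; exact convex_convexHull ℝ _
  have hsumcomp : IsCompact (ε • Q + R) := (hQcomp.smul ε).add hRcomp
  have hsumconv : Convex ℝ (ε • Q + R) := (hQconv.smul ε).add hRconv
  refine ⟨ε, hε0, R, ⟨D, hDne, hR⟩, ?_⟩
  apply Set.Subset.antisymm
  · intro x hx
    by_contra hnx
    obtain ⟨f, u, hfx, hfb⟩ :=
      geometric_hahn_banach_point_closed hsumconv hsumcomp.isClosed hnx
    set c := (InnerProductSpace.toDual ℝ (Esp d)).symm f with hc
    have hcx : ∀ y, ⟪c, y⟫ = f y := fun y => InnerProductSpace.toDual_symm_apply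
    obtain ⟨w₀, hw₀t, hw₀⟩ := Finset.exists_mem_eq_inf' ht (fun w => ⟪c, w⟫)
    obtain ⟨xD, hxD, hxDv⟩ := hRwit c
    have hb : ε • w₀ + xD ∈ ε • Q + R := by
      refine Set.add_mem_add (Set.smul_mem_smul_set ?_) ?_
      · rw [hQt]; exact subset_convexHull ℝ _ hw₀t
      · rw [hR]; exact subset_convexHull ℝ _ hxD
    have h1 := hfb _ hb
    rw [← hcx, inner_add_right, real_inner_smul_right, hxDv] at h1
    have h2 : ⟪c, w₀⟫ = mval t ht c := by rw [mval, hw₀]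
    rw [h2] at h1
    have h3 : mval s hs c ≤ ⟪c, x⟫ := hmP x hx c
    rw [hcx] at h3
    linarith
  · intro x hx
    rw [Set.mem_add] at hx
    obtain ⟨y, hy, r, hr, rfl⟩ := hx
    rw [Set.mem_smul_set] at hy
    obtain ⟨qq, hqq, rfl⟩ := hy
    by_contra hnx
    have hPconv : Convex ℝ P := by rw [hPs]; exact convex_convexHull ℝ _
    obtain ⟨f, u, hfx, hfb⟩ :=
      geometric_hahn_banach_point_closed hPconv hPcomp.isClosed hnx
    set c := (InnerProductSpace.toDual ℝ (Esp d)).symm f with hc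
    have hcx : ∀ y, ⟪c, y⟫ = f y := fun y => InnerProductSpace.toDual_symm_apply
    obtain ⟨v₀, hv₀s, hv₀⟩ := Finset.exists_mem_eq_inf' hs (fun v => ⟪c, v⟫)
    have h1 := hfb v₀ (by rw [hPs]; exact subset_convexHull ℝ _ hv₀s)
    rw [← hcx] at h1
    have h2 : mval t ht c ≤ ⟪c, qq⟫ := hmQ qq hqq c
    have h3 := hRD c r hr
    rw [← hcx, inner_add_right, real_inner_smul_right] at hfx
    have h5 : mval s hs c = ⟪c, v₀⟫ := hv₀
    linarith [mul_le_mul_of_nonneg_left h2 hε0.le]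
end
end

section
/- Let P and Q be polytopes in ℝ^d with f0(P) = f0(P + Q). Then for every nonempty face F of P there is a unique nonempty face G of Q such that F + G is a face of P + Q, and the map F ↦ F + G is a bijection from the set of nonempty faces of P onto the set of nonempty faces of P + Q. -/
open Pointwise
open scoped RealInnerProductSpace

noncomputable section

variable {d : ℕ}

lemma innerLin (c : Esp d) : IsLinearMap ℝ (fun y : Esp d => ⟪c, y⟫) :=
  ⟨fun a b => inner_add_right c a b, fun r x => real_inner_smul_right c x r⟩

open Classical in
def argmin (c : Esp d) (s : Finset (Esp d)) : Finset (Esp d) :=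
  s.filter (fun x => ∀ y ∈ s, ⟪c, x⟫ ≤ ⟪c, y⟫)

lemma mem_argmin {c : Esp d} {s : Finset (Esp d)} {x : Esp d} :
    x ∈ argmin c s ↔ x ∈ s ∧ ∀ y ∈ s, ⟪c, x⟫ ≤ ⟪c, y⟫ := by
  simp [argmin]

lemma argmin_nonempty {c : Esp d} {s : Finset (Esp d)} (hs : s.Nonempty) :
    (argmin c s).Nonempty := by
  obtain ⟨x, hx, hmin⟩ := s.exists_min_image (fun y => ⟪c, y⟫) hs
  exact ⟨x, mem_argmin.2 ⟨hx, hmin⟩⟩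

lemma hull_subset_halfspace {s : Finset (Esp d)} {c : Esp d} {x : Esp d}
    (hx : x ∈ argmin c s) :
    convexHull ℝ (s : Set (Esp d)) ⊆ {y | ⟪c, x⟫ ≤ ⟪c, y⟫} := by
  refine convexHull_min (fun y hy => (mem_argmin.1 hx).2 y hy) ?_
  exact convex_halfSpace_ge (innerLin c) _

lemma convex_polyFace (P : Set (Esp d)) (hP : Convex ℝ P) (c : Esp d) :
    Convex ℝ (polyFace P c) := by
  rintro x hx y hy a b ha hb hab
  refine ⟨hP hx.1 hy.1 ha hb hab, fun z hz => ?_⟩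
  have := hx.2 z hz; have := hy.2 z hz
  calc ⟪c, a • x + b • y⟫ = a * ⟪c, x⟫ + b * ⟪c, y⟫ := by
        rw [inner_add_right, real_inner_smul_right, real_inner_smul_right]
    _ ≤ a * ⟪c, z⟫ + b * ⟪c, z⟫ := by
        have h1 := hx.2 z hz; have h2 := hy.2 z hz; nlinarith
    _ = ⟪c, z⟫ := by rw [← add_mul, hab, one_mul]

lemma polyFace_hull (s : Finset (Esp d)) (hs : s.Nonempty) (c : Esp d) :
    polyFace (convexHull ℝ (s : Set (Esp d))) c
      = convexHull ℝ ((argmin c s : Finset (Esp d)) : Set (Esp d)) := by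
  obtain ⟨x₀, hx₀⟩ := argmin_nonempty (c := c) hs
  apply Set.Subset.antisymm
  · rintro x ⟨hxP, hxmin⟩
    -- ⟪c,x⟫ = ⟪c,x₀⟫
    have hle : ⟪c, x⟫ ≤ ⟪c, x₀⟫ :=
      hxmin x₀ (subset_convexHull ℝ _ (mem_argmin.1 hx₀).1)
    have hge : ⟪c, x₀⟫ ≤ ⟪c, x⟫ := hull_subset_halfspace hx₀ hxP
    have heq : ⟪c, x⟫ = ⟪c, x₀⟫ := le_antisymm hle hge
    rw [Finset.convexHull_eq] at hxP
    obtain ⟨w, hw0, hw1, hwx⟩ := hxP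
    have hxsum : x = ∑ y ∈ s, w y • y := by
      rw [← hwx, Finset.centerMass_eq_of_sum_1 _ _ hw1]; rfl
    have hinner : ⟪c, x⟫ = ∑ y ∈ s, w y * ⟪c, y⟫ := by
      rw [hxsum, inner_sum]
      exact Finset.sum_congr rfl fun y _ => real_inner_smul_right c y (w y)
    have hzero : ∀ y ∈ s, w y * (⟪c, y⟫ - ⟪c, x₀⟫) = 0 := by
      have hsum0 : ∑ y ∈ s, w y * (⟪c, y⟫ - ⟪c, x₀⟫) = 0 := by
        have : ∑ y ∈ s, w y * ⟪c, y⟫ - ∑ y ∈ s, w y * ⟪c, x₀⟫ = 0 := by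
          rw [← hinner, ← Finset.sum_mul, hw1, one_mul, heq, sub_self]
        rw [← this, ← Finset.sum_sub_distrib]
        exact Finset.sum_congr rfl fun y _ => by ring
      refine (Finset.sum_eq_zero_iff_of_nonneg fun y hy => ?_).1 hsum0
      have h1 : (0:ℝ) ≤ w y := hw0 y hy
      have h2 : ⟪c, x₀⟫ ≤ ⟪c, y⟫ := (mem_argmin.1 hx₀).2 y hy
      exact mul_nonneg h1 (by linarith)
    have hw0' : ∀ y ∈ s, y ∉ argmin c s → w y = 0 := by
      intro y hy hyn
      by_contra hwy
      have h2 : ⟪c, x₀⟫ ≤ ⟪c, y⟫ := (mem_argmin.1 hx₀).2 y hy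
      have : ⟪c, y⟫ = ⟪c, x₀⟫ := by
        have := hzero y hy
        rcases mul_eq_zero.1 this with h | h
        · exact absurd h hwy
        · linarith
      exact hyn (mem_argmin.2 ⟨hy, fun z hz => this ▸ (mem_argmin.1 hx₀).2 z hz⟩)
    have hsub : argmin c s ⊆ s := Finset.filter_subset _ _
    have hcm : (argmin c s).centerMass w id = x := by
      rw [← hwx]
      exact Finset.centerMass_subset id hsub hw0'
    rw [← hcm]
    refine Finset.centerMass_mem_convexHull _ (fun y hy => hw0 y (hsub hy)) ?_
      (fun y _ => Finset.mem_coe.2 ‹y ∈ argmin c s›)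
    · rw [Finset.sum_subset hsub (fun y hy hyn => hw0' y hy hyn), hw1]
      exact one_pos
  · refine convexHull_min (fun y hy => ?_)
      (convex_polyFace _ (convex_convexHull ℝ _) c)
    have hy' := mem_argmin.1 (Finset.mem_coe.1 hy)
    exact ⟨subset_convexHull ℝ _ hy'.1, fun z hz => hull_subset_halfspace hy hz⟩

lemma polyFace_subset (P : Set (Esp d)) (c : Esp d) : polyFace P c ⊆ P :=
  fun _ hx => hx.1

lemma polyFace_zero (P : Set (Esp d)) : polyFace P 0 = P := by
  ext x; simp [polyFace]

lemma polyFace_singleton (u : Esp d) (c : Esp d) :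
    polyFace ({u} : Set (Esp d)) c = {u} := by
  ext x
  constructor
  · exact fun hx => hx.1
  · rintro rfl; exact ⟨rfl, by rintro y rfl; exact le_refl _⟩

lemma isPolytope_polyFace {P : Set (Esp d)} (hP : IsPolytope P) (c : Esp d) :
    IsPolytope (polyFace P c) := by
  obtain ⟨s, hs, rfl⟩ := hP
  exact ⟨argmin c s, argmin_nonempty hs, polyFace_hull s hs c⟩

lemma polyFace_nonempty {P : Set (Esp d)} (hP : IsPolytope P) (c : Esp d) :
    (polyFace P c).Nonempty := by
  obtain ⟨s, hs, rfl⟩ := hP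
  rw [polyFace_hull s hs c]
  obtain ⟨x, hx⟩ := argmin_nonempty (c := c) hs
  exact ⟨x, subset_convexHull ℝ _ hx⟩

lemma IsPolytope.nonempty {P : Set (Esp d)} (hP : IsPolytope P) : P.Nonempty := by
  have := polyFace_nonempty hP 0
  rwa [polyFace_zero] at this

lemma IsPolytope.convex {P : Set (Esp d)} (hP : IsPolytope P) : Convex ℝ P := by
  obtain ⟨s, hs, rfl⟩ := hP; exact convex_convexHull ℝ _

lemma IsPolytope.isCompact {P : Set (Esp d)} (hP : IsPolytope P) : IsCompact P := by
  obtain ⟨s, hs, rfl⟩ := hP; exact s.finite_toSet.isCompact_convexHull ℝ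

lemma IsPolytope.isClosed {P : Set (Esp d)} (hP : IsPolytope P) : IsClosed P :=
  hP.isCompact.isClosed

lemma IsPolytope.add {P Q : Set (Esp d)} (hP : IsPolytope P) (hQ : IsPolytope Q) :
    IsPolytope (P + Q) := by
  classical
  obtain ⟨s, hs, rfl⟩ := hP; obtain ⟨t, ht, rfl⟩ := hQ
  refine ⟨s + t, hs.add ht, ?_⟩
  rw [Finset.coe_add, convexHull_add]

lemma polyFace_add (P Q : Set (Esp d)) (c : Esp d) :
    polyFace (P + Q) c = polyFace P c + polyFace Q c := by
  ext z
  constructor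
  · rintro ⟨hz, hmin⟩
    obtain ⟨x, hx, y, hy, rfl⟩ := Set.mem_add.1 hz
    refine Set.add_mem_add ⟨hx, fun x' hx' => ?_⟩ ⟨hy, fun y' hy' => ?_⟩
    · have := hmin (x' + y) (Set.add_mem_add hx' hy)
      rw [inner_add_right, inner_add_right] at this; linarith
    · have := hmin (x + y') (Set.add_mem_add hx hy')
      rw [inner_add_right, inner_add_right] at this; linarith
  · rintro hz
    obtain ⟨x, hx, y, hy, rfl⟩ := Set.mem_add.1 hz
    refine ⟨Set.add_mem_add hx.1 hy.1, fun z' hz' => ?_⟩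
    obtain ⟨x', hx', y', hy', rfl⟩ := Set.mem_add.1 hz'
    rw [inner_add_right, inner_add_right]
    exact add_le_add (hx.2 x' hx') (hy.2 y' hy')

/-- separation of a point from a polytope -/
lemma sep_point {K : Set (Esp d)} (hK : IsPolytope K) {z : Esp d} (hz : z ∉ K) :
    ∃ w : Esp d, ∀ y ∈ K, ⟪w, z⟫ < ⟪w, y⟫ := by
  obtain ⟨f, u, hfz, hfK⟩ :=
    geometric_hahn_banach_point_closed hK.convex hK.isClosed hz
  refine ⟨(InnerProductSpace.toDual ℝ (Esp d)).symm f, fun y hy => ?_⟩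
  rw [InnerProductSpace.toDual_symm_apply, InnerProductSpace.toDual_symm_apply]
  exact hfz.trans (hfK y hy)

/-- Minkowski-type cancellation -/
lemma sum_cancel {K K' L : Set (Esp d)} (hK : IsPolytope K) (hL : IsPolytope L)
    (hsub : K ⊆ K') (hsum : K' + L ⊆ K + L) : K' ⊆ K := by
  intro z hz
  by_contra hzK
  obtain ⟨w, hw⟩ := sep_point hK hzK
  obtain ⟨l, hl⟩ := polyFace_nonempty hL w
  have hzl : z + l ∈ K + L := hsum (Set.add_mem_add hz hl.1)
  obtain ⟨k, hk, l', hl', heq⟩ := Set.mem_add.1 hzl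
  have h1 : ⟪w, z⟫ < ⟪w, k⟫ := hw k hk
  have h2 : ⟪w, l⟫ ≤ ⟪w, l'⟫ := hl.2 l' hl'
  have : ⟪w, z + l⟫ = ⟪w, k + l'⟫ := by rw [heq]
  rw [inner_add_right, inner_add_right] at this
  linarith

lemma verts_subset {s : Finset (Esp d)} :
    polyVerts (convexHull ℝ (s : Set (Esp d))) ⊆ (s : Set (Esp d)) :=
  extremePoints_convexHull_subset

lemma IsPolytope.vertsFinite {P : Set (Esp d)} (hP : IsPolytope P) :
    (polyVerts P).Finite := by
  obtain ⟨s, hs, rfl⟩ := hP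
  exact s.finite_toSet.subset verts_subset

lemma hull_verts {P : Set (Esp d)} (hP : IsPolytope P) :
    convexHull ℝ (polyVerts P) = P := by
  have hcl : IsClosed (convexHull ℝ (Set.extremePoints ℝ P)) :=
    (hP.vertsFinite.isCompact_convexHull ℝ).isClosed
  have := closure_convexHull_extremePoints hP.isCompact hP.convex
  rwa [hcl.closure_eq] at this

lemma verts_nonempty {P : Set (Esp d)} (hP : IsPolytope P) :
    (polyVerts P).Nonempty := by
  by_contra hemp
  rw [Set.not_nonempty_iff_eq_empty] at hemp
  have := hull_verts hP
  rw [hemp, convexHull_empty] at this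
  exact hP.nonempty.ne_empty this.symm

/-- a point in a subset that is extreme in the superset is extreme in the subset -/
lemma extreme_of_subset {A B : Set (Esp d)} {x : Esp d} (hBA : B ⊆ A)
    (hx : x ∈ Set.extremePoints ℝ A) (hxB : x ∈ B) : x ∈ Set.extremePoints ℝ B :=
  ⟨hxB, fun _ h₁ _ h₂ hseg => hx.2 (hBA h₁) (hBA h₂) hseg⟩

/-- a face is an extreme subset -/
lemma isExtreme_polyFace {P : Set (Esp d)} (c : Esp d) :
    IsExtreme ℝ P (polyFace P c) := by
  refine ⟨polyFace_subset P c, ?_⟩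
  rintro x₁ h₁ x₂ h₂ x ⟨hxP, hxmin⟩ hseg
  obtain ⟨a, b, ha, hb, hab, rfl⟩ := hseg
  have e1 : ⟪c, a • x₁ + b • x₂⟫ = a * ⟪c, x₁⟫ + b * ⟪c, x₂⟫ := by
    rw [inner_add_right, real_inner_smul_right, real_inner_smul_right]
  have l1 : ⟪c, a • x₁ + b • x₂⟫ ≤ ⟪c, x₁⟫ := hxmin x₁ h₁
  have l2 : ⟪c, a • x₁ + b • x₂⟫ ≤ ⟪c, x₂⟫ := hxmin x₂ h₂
  have h2 : a * ⟪c, a • x₁ + b • x₂⟫ ≤ a * ⟪c, x₁⟫ := mul_le_mul_of_nonneg_left l1 ha.le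
  have h3 : b * ⟪c, a • x₁ + b • x₂⟫ ≤ b * ⟪c, x₂⟫ := mul_le_mul_of_nonneg_left l2 hb.le
  have h4 : a * ⟪c, a • x₁ + b • x₂⟫ + b * ⟪c, a • x₁ + b • x₂⟫ = ⟪c, a • x₁ + b • x₂⟫ := by
    rw [← add_mul, hab, one_mul]
  have e2 : ⟪c, x₁⟫ = ⟪c, a • x₁ + b • x₂⟫ :=
    (mul_left_cancel₀ (ne_of_gt ha) (by linarith : a * ⟪c, x₁⟫ = a * ⟪c, a • x₁ + b • x₂⟫))
  have e3 : ⟪c, x₂⟫ = ⟪c, a • x₁ + b • x₂⟫ :=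
    (mul_left_cancel₀ (ne_of_gt hb) (by linarith : b * ⟪c, x₂⟫ = b * ⟪c, a • x₁ + b • x₂⟫))
  exact ⟨h₁, fun y hy => e2 ▸ hxmin y hy⟩

lemma verts_polyFace_subset {P : Set (Esp d)} (c : Esp d) :
    polyVerts (polyFace P c) ⊆ polyVerts P :=
  (isExtreme_polyFace c).extremePoints_subset_extremePoints

/-- exposed singleton implies vertex -/
lemma vertex_of_singleton_face {P : Set (Esp d)} {u c : Esp d}
    (h : polyFace P c = {u}) : u ∈ polyVerts P := by
  have huP : u ∈ P := (polyFace_subset P c) (h ▸ rfl)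
  refine ⟨huP, ?_⟩
  intro x₁ h₁ x₂ h₂ hseg
  have hu : u ∈ polyFace P c := h ▸ rfl
  have := (isExtreme_polyFace (P := P) c).2 h₁ h₂ hu hseg
  rw [h] at this
  exact this

lemma vertex_exposed {P : Set (Esp d)} (hP : IsPolytope P) {u : Esp d}
    (hu : u ∈ polyVerts P) : ∃ c, polyFace P c = {u} := by
  classical
  obtain ⟨s, hs, rfl⟩ := hP
  have hus : u ∈ s := verts_subset hu
  rcases (s.erase u).eq_empty_or_nonempty with he | hne
  · have : s = {u} := by
      rcases (Finset.erase_eq_empty_iff s u).1 he with h | h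
      · exact absurd (h ▸ hus) (Finset.notMem_empty u)
      · exact h
    refine ⟨0, ?_⟩
    rw [polyFace_zero, this, Finset.coe_singleton, convexHull_singleton]
  · set K := convexHull ℝ ((s.erase u : Finset (Esp d)) : Set (Esp d)) with hK
    have hKpoly : IsPolytope K := ⟨s.erase u, hne, rfl⟩
    have hKsub : K ⊆ convexHull ℝ (s : Set (Esp d)) :=
      convexHull_mono (by exact_mod_cast Finset.erase_subset u s)
    have huK : u ∉ K := by
      intro huK
      have := verts_subset (extreme_of_subset hKsub hu huK)
      exact Finset.notMem_erase u s (by exact_mod_cast this)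
    obtain ⟨w, hw⟩ := sep_point hKpoly huK
    -- decompose the hull
    have hcoe : (s : Set (Esp d)) = insert u ((s.erase u : Finset (Esp d)) : Set (Esp d)) := by
      rw [Finset.coe_erase, Set.insert_diff_singleton]
      exact (Set.insert_eq_self.2 (by exact_mod_cast hus)).symm
    have hPdec : convexHull ℝ (s : Set (Esp d)) = convexJoin ℝ {u} K := by
      rw [hcoe, convexHull_insert (by exact_mod_cast hne)]
    have hfu : ∀ x ∈ convexHull ℝ (s : Set (Esp d)), ⟪w, u⟫ ≤ ⟪w, x⟫ := by
      intro x hx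
      rw [hPdec, mem_convexJoin] at hx
      obtain ⟨a', ha', z, hz, hseg⟩ := hx
      rw [Set.mem_singleton_iff] at ha'
      rw [ha'] at hseg
      obtain ⟨a, b, ha, hb, hab, rfl⟩ := hseg
      have e : ⟪w, a • u + b • z⟫ = a * ⟪w, u⟫ + b * ⟪w, z⟫ := by
        rw [inner_add_right, real_inner_smul_right, real_inner_smul_right]
      have h4 : a * ⟪w, u⟫ + b * ⟪w, u⟫ = ⟪w, u⟫ := by rw [← add_mul, hab, one_mul]
      have h5 : b * ⟪w, u⟫ ≤ b * ⟪w, z⟫ := mul_le_mul_of_nonneg_left (hw z hz).le hb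
      linarith
    refine ⟨w, Set.Subset.antisymm ?_ ?_⟩
    · rintro x ⟨hxP, hxmin⟩
      have h1 : ⟪w, x⟫ ≤ ⟪w, u⟫ := hxmin u (subset_convexHull ℝ _ hus)
      have h2 : ⟪w, u⟫ ≤ ⟪w, x⟫ := hfu x hxP
      have heq : ⟪w, x⟫ = ⟪w, u⟫ := le_antisymm h1 h2
      have hx' := hxP
      rw [hPdec, mem_convexJoin] at hx'
      obtain ⟨a', ha', z, hz, hseg⟩ := hx'
      rw [Set.mem_singleton_iff] at ha'
      rw [ha'] at hseg
      obtain ⟨a, b, ha, hb, hab, rfl⟩ := hseg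
      have e : ⟪w, a • u + b • z⟫ = a * ⟪w, u⟫ + b * ⟪w, z⟫ := by
        rw [inner_add_right, real_inner_smul_right, real_inner_smul_right]
      have h4 : a * ⟪w, u⟫ + b * ⟪w, u⟫ = ⟪w, u⟫ := by rw [← add_mul, hab, one_mul]
      have hb0 : b = 0 := by
        by_contra hbne
        have hbpos : 0 < b := lt_of_le_of_ne hb (Ne.symm hbne)
        have h5 : b * ⟪w, u⟫ < b * ⟪w, z⟫ := mul_lt_mul_of_pos_left (hw z hz) hbpos
        linarith
      have ha1 : a = 1 := by linarith
      simp [hb0, ha1]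
    · rintro x rfl
      exact ⟨subset_convexHull ℝ _ hus, hfu⟩

lemma add_decomp_unique {P Q : Set (Esp d)} {w u v u' v' : Esp d}
    (hw : w ∈ Set.extremePoints ℝ (P + Q)) (hu : u ∈ P) (hv : v ∈ Q) (huv : u + v = w)
    (hu' : u' ∈ P) (hv' : v' ∈ Q) (huv' : u' + v' = w) : u = u' ∧ v = v' := by
  have hp : u + v' ∈ P + Q := Set.add_mem_add hu hv'
  have hq : u' + v ∈ P + Q := Set.add_mem_add hu' hv
  have hsum : (u + v') + (u' + v) = w + w := by
    have : (u + v') + (u' + v) = (u + v) + (u' + v') := by abel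
    rw [this, huv, huv']
  have hpw : u + v' = w := by
    by_cases hpq : u + v' = u' + v
    · have h2 : (2:ℝ) • (u + v') = (2:ℝ) • w := by
        rw [two_smul, two_smul]
        calc (u + v') + (u + v') = (u + v') + (u' + v) := by rw [hpq]
          _ = w + w := hsum
      exact smul_right_injective _ (two_ne_zero) h2
    · have hseg : w ∈ openSegment ℝ (u + v') (u' + v) := by
        refine ⟨1/2, 1/2, by norm_num, by norm_num, by norm_num, ?_⟩
        rw [← smul_add, hsum, smul_add, ← add_smul]
        norm_num
      exact (hw.2 hp hq hseg)
  have hv'' : v' = v := by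
    have : u + v' = u + v := by rw [hpw, ← huv]
    exact add_left_cancel this
  constructor
  · have : u' + v' = u + v' := by rw [huv', ← hpw]
    exact (add_right_cancel this).symm
  · exact hv''.symm

lemma add_eq_singleton {A B : Set (Esp d)} {w : Esp d} (hA : A.Nonempty) (hB : B.Nonempty)
    (h : A + B = {w}) : ∃ u v, A = {u} ∧ B = {v} ∧ u + v = w := by
  obtain ⟨u, hu⟩ := hA; obtain ⟨v, hv⟩ := hB
  have huv : u + v = w := by
    have := Set.add_mem_add hu hv; rw [h] at this; exact this
  refine ⟨u, v, ?_, ?_, huv⟩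
  · apply Set.Subset.antisymm
    · intro a ha
      have := Set.add_mem_add ha hv; rw [h] at this
      have : a + v = u + v := by rw [this, huv]
      exact add_right_cancel this
    · rintro a rfl; exact hu
  · apply Set.Subset.antisymm
    · intro b hb
      have := Set.add_mem_add hu hb; rw [h] at this
      have : u + b = u + v := by rw [this, huv]
      exact add_left_cancel this
    · rintro b rfl; exact hv

lemma vertex_decomp {P Q : Set (Esp d)} (hP : IsPolytope P) (hQ : IsPolytope Q) {w : Esp d}
    (hw : w ∈ polyVerts (P + Q)) :
    ∃ u v, u ∈ polyVerts P ∧ v ∈ polyVerts Q ∧ u + v = w ∧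
      ∃ c, polyFace P c = {u} ∧ polyFace Q c = {v} := by
  obtain ⟨c, hc⟩ := vertex_exposed (hP.add hQ) hw
  rw [polyFace_add] at hc
  obtain ⟨u, v, hA, hB, huv⟩ :=
    add_eq_singleton (polyFace_nonempty hP c) (polyFace_nonempty hQ c) hc
  exact ⟨u, v, vertex_of_singleton_face hA, vertex_of_singleton_face hB, huv, c, hA, hB⟩

open Classical in
lemma argmin_perturb (s : Finset (Esp d)) (hs : s.Nonempty) (c c' : Esp d) :
    ∃ ε₀ : ℝ, 0 < ε₀ ∧ ∀ ε : ℝ, 0 < ε → ε ≤ ε₀ →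
      argmin (c + ε • c') s = argmin c' (argmin c s) := by
  classical
  set g : Esp d → Esp d → ℝ := fun x y =>
    if ⟪c, x⟫ < ⟪c, y⟫ then (⟪c, y⟫ - ⟪c, x⟫) / (1 + |⟪c', x⟫| + |⟪c', y⟫|) else 1 with hg
  have hprodne : (s ×ˢ s).Nonempty := hs.product hs
  set ε₀ : ℝ := (s ×ˢ s).inf' hprodne (fun p => g p.1 p.2) with hε₀
  have hgpos : ∀ x y : Esp d, 0 < g x y := by
    intro x y
    rw [hg]
    dsimp only
    split_ifs with h
    · apply div_pos (by linarith) (by positivity)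
    · exact one_pos
  have hε₀pos : 0 < ε₀ := by
    rw [hε₀, Finset.lt_inf'_iff]
    exact fun p _ => hgpos p.1 p.2
  refine ⟨ε₀, hε₀pos, ?_⟩
  intro ε hεpos hεle
  have hkey : ∀ x ∈ s, ∀ y ∈ s, ⟪c, x⟫ < ⟪c, y⟫ →
      ⟪c, x⟫ + ε * ⟪c', x⟫ < ⟪c, y⟫ + ε * ⟪c', y⟫ := by
    intro x hx y hy hlt
    have hM : (0:ℝ) < 1 + |⟪c', x⟫| + |⟪c', y⟫| := by positivity
    have hεg : ε ≤ g x y := by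
      have h0 := Finset.inf'_le (s := s ×ˢ s) (fun p => g p.1 p.2)
        (b := (x, y)) (Finset.mem_product.2 ⟨hx, hy⟩)
      rw [← hε₀] at h0
      exact hεle.trans h0
    have hgv : g x y = (⟪c, y⟫ - ⟪c, x⟫) / (1 + |⟪c', x⟫| + |⟪c', y⟫|) := by
      rw [hg]; dsimp only; rw [if_pos hlt]
    have hεM : ε * (1 + |⟪c', x⟫| + |⟪c', y⟫|) ≤ ⟪c, y⟫ - ⟪c, x⟫ := by
      rw [← le_div_iff₀ hM]
      rw [hgv] at hεg; exact hεg
    have ha1 : ε * ⟪c', x⟫ ≤ ε * |⟪c', x⟫| :=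
      mul_le_mul_of_nonneg_left (le_abs_self _) hεpos.le
    have hb1 : ε * (-⟪c', y⟫) ≤ ε * |⟪c', y⟫| :=
      mul_le_mul_of_nonneg_left (neg_le_abs _) hεpos.le
    have hexp : ε * (1 + |⟪c', x⟫| + |⟪c', y⟫|)
        = ε + ε * |⟪c', x⟫| + ε * |⟪c', y⟫| := by ring
    have hb1' : -(ε * ⟪c', y⟫) ≤ ε * |⟪c', y⟫| := by rwa [mul_neg] at hb1
    linarith
  have hinner : ∀ x : Esp d, ⟪c + ε • c', x⟫ = ⟪c, x⟫ + ε * ⟪c', x⟫ := by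
    intro x
    rw [inner_add_left, real_inner_smul_left]
  ext x
  constructor
  · intro hx
    obtain ⟨hxs, hxmin⟩ := mem_argmin.1 hx
    have hxargc : x ∈ argmin c s := by
      refine mem_argmin.2 ⟨hxs, fun y hy => ?_⟩
      by_contra hlt
      push_neg at hlt
      have := hkey y hy x hxs hlt
      have h2 := hxmin y hy
      rw [hinner, hinner] at h2
      linarith
    refine mem_argmin.2 ⟨hxargc, fun y hy => ?_⟩
    have hy' := mem_argmin.1 hy
    have h2 := hxmin y hy'.1
    rw [hinner, hinner] at h2
    have hcc : ⟪c, x⟫ = ⟪c, y⟫ :=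
      le_antisymm ((mem_argmin.1 hxargc).2 y hy'.1) (hy'.2 x hxs)
    have : ε * ⟪c', x⟫ ≤ ε * ⟪c', y⟫ := by linarith
    exact le_of_mul_le_mul_left this hεpos
  · intro hx
    obtain ⟨hxarg, hxmin⟩ := mem_argmin.1 hx
    have hx' := mem_argmin.1 hxarg
    refine mem_argmin.2 ⟨hx'.1, fun y hy => ?_⟩
    rw [hinner, hinner]
    rcases lt_or_eq_of_le (hx'.2 y hy) with hlt | heq
    · exact (hkey x hx'.1 y hy hlt).le
    · have hyarg : y ∈ argmin c s :=
        mem_argmin.2 ⟨hy, fun z hz => heq ▸ hx'.2 z hz⟩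
      have h3 := hxmin y hyarg
      have : ε * ⟪c', x⟫ ≤ ε * ⟪c', y⟫ :=
        mul_le_mul_of_nonneg_left h3 hεpos.le
      linarith

lemma polyFace_perturb {P : Set (Esp d)} (hP : IsPolytope P) (c c' : Esp d) :
    ∃ ε₀ : ℝ, 0 < ε₀ ∧ ∀ ε : ℝ, 0 < ε → ε ≤ ε₀ →
      polyFace P (c + ε • c') = polyFace (polyFace P c) c' := by
  obtain ⟨s, hs, rfl⟩ := hP
  obtain ⟨ε₀, hε₀, hε⟩ := argmin_perturb s hs c c'
  refine ⟨ε₀, hε₀, fun ε h1 h2 => ?_⟩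
  rw [polyFace_hull s hs (c + ε • c'), hε ε h1 h2, polyFace_hull s hs c,
    polyFace_hull (argmin c s) (argmin_nonempty hs) c']

/-- simultaneous perturbation for two polytopes -/
lemma polyFace_perturb₂ {P Q : Set (Esp d)} (hP : IsPolytope P) (hQ : IsPolytope Q)
    (c c' : Esp d) :
    ∃ ε : ℝ, 0 < ε ∧ polyFace P (c + ε • c') = polyFace (polyFace P c) c' ∧
      polyFace Q (c + ε • c') = polyFace (polyFace Q c) c' := by
  obtain ⟨ε₁, h₁, hP'⟩ := polyFace_perturb hP c c'
  obtain ⟨ε₂, h₂, hQ'⟩ := polyFace_perturb hQ c c'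
  refine ⟨min ε₁ ε₂, lt_min h₁ h₂, hP' _ (lt_min h₁ h₂) (min_le_left _ _),
    hQ' _ (lt_min h₁ h₂) (min_le_right _ _)⟩

lemma exposePair {P Q : Set (Esp d)} (hP : IsPolytope P) (hQ : IsPolytope Q) (c : Esp d)
    {u : Esp d} (hu : u ∈ polyVerts (polyFace P c)) :
    ∃ c₃ v, polyFace P c₃ = {u} ∧ polyFace Q c₃ = {v} ∧ v ∈ polyVerts (polyFace Q c) := by
  obtain ⟨c', hc'⟩ := vertex_exposed (isPolytope_polyFace hP c) hu
  obtain ⟨ε, hε, hPe, hQe⟩ := polyFace_perturb₂ hP hQ c c'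
  set c₂ := c + ε • c' with hc₂
  have hPc₂ : polyFace P c₂ = {u} := by rw [hc₂, hPe, hc']
  have hF2poly : IsPolytope (polyFace Q c₂) := isPolytope_polyFace hQ c₂
  obtain ⟨v, hv⟩ := verts_nonempty hF2poly
  obtain ⟨c'', hc''⟩ := vertex_exposed hF2poly hv
  obtain ⟨ε', hε', hPe', hQe'⟩ := polyFace_perturb₂ hP hQ c₂ c''
  refine ⟨c₂ + ε' • c'', v, ?_, ?_, ?_⟩
  · rw [hPe', hPc₂, polyFace_singleton]
  · rw [hQe', hc'']
  · have hsub : polyVerts (polyFace Q c₂) ⊆ polyVerts (polyFace Q c) := by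
      rw [hc₂, hQe]
      exact verts_polyFace_subset (P := polyFace Q c) c'
    exact hsub hv

open Classical in
def comp1 (P Q : Set (Esp d)) (w : Esp d) : Esp d :=
  if h : ∃ u, u ∈ polyVerts P ∧ ∃ v ∈ polyVerts Q, u + v = w then h.choose else 0

lemma comp1_mem {P Q : Set (Esp d)} (hP : IsPolytope P) (hQ : IsPolytope Q) {w : Esp d}
    (hw : w ∈ polyVerts (P + Q)) : comp1 P Q w ∈ polyVerts P := by
  obtain ⟨u, v, hu, hv, huv, -⟩ := vertex_decomp hP hQ hw
  have hex : ∃ u, u ∈ polyVerts P ∧ ∃ v ∈ polyVerts Q, u + v = w := ⟨u, hu, v, hv, huv⟩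
  rw [comp1, dif_pos hex]
  exact hex.choose_spec.1

lemma comp1_spec {P Q : Set (Esp d)} (hP : IsPolytope P) (hQ : IsPolytope Q)
    {w u v : Esp d} (hw : w ∈ polyVerts (P + Q)) (hu : u ∈ P) (hv : v ∈ Q)
    (huv : u + v = w) : comp1 P Q w = u := by
  obtain ⟨u', v', hu', hv', huv', -⟩ := vertex_decomp hP hQ hw
  have hex : ∃ u, u ∈ polyVerts P ∧ ∃ v ∈ polyVerts Q, u + v = w := ⟨u', hu', v', hv', huv'⟩
  rw [comp1, dif_pos hex]
  obtain ⟨h1, v'', h2, h3⟩ := hex.choose_spec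
  exact (add_decomp_unique hw (extremePoints_subset h1) (extremePoints_subset h2) h3
    hu hv huv).1

lemma comp1_surj {P Q : Set (Esp d)} (hP : IsPolytope P) (hQ : IsPolytope Q)
    {u : Esp d} (hu : u ∈ polyVerts P) :
    ∃ w ∈ polyVerts (P + Q), comp1 P Q w = u := by
  have hu0 : u ∈ polyVerts (polyFace P 0) := by rwa [polyFace_zero]
  obtain ⟨c₂, v, hPc₂, hQc₂, hv⟩ := exposePair hP hQ 0 hu0
  rw [polyFace_zero] at hv
  have hface : polyFace (P + Q) c₂ = {u + v} := by
    rw [polyFace_add, hPc₂, hQc₂, Set.singleton_add_singleton]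
  have hw : u + v ∈ polyVerts (P + Q) := vertex_of_singleton_face hface
  exact ⟨u + v, hw, comp1_spec hP hQ hw (extremePoints_subset hu)
    (extremePoints_subset hv) rfl⟩

/-- key uniqueness from the vertex-count hypothesis -/
lemma comp_unique {P Q : Set (Esp d)} (hP : IsPolytope P) (hQ : IsPolytope Q)
    (h : f0 P = f0 (P + Q)) {u v v' : Esp d}
    (hw : u + v ∈ polyVerts (P + Q)) (hw' : u + v' ∈ polyVerts (P + Q))
    (hu : u ∈ P) (hv : v ∈ Q) (hv' : v' ∈ Q) : v = v' := by
  have h1 : comp1 P Q (u + v) = u := comp1_spec hP hQ hw hu hv rfl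
  have h2 : comp1 P Q (u + v') = u := comp1_spec hP hQ hw' hu hv' rfl
  have hinj := Set.inj_on_of_surj_on_of_ncard_le
    (s := polyVerts (P + Q)) (t := polyVerts P)
    (fun w _ => comp1 P Q w)
    (fun w hw => comp1_mem hP hQ hw)
    (fun b hb => by
      obtain ⟨w, hwm, hwc⟩ := comp1_surj hP hQ hb
      exact ⟨w, hwm, hwc⟩)
    (le_of_eq h.symm)
    hw hw' (h1.trans h2.symm)
    ((hP.add hQ).vertsFinite)
  exact add_left_cancel hinj

lemma vertsQ_congr {P Q : Set (Esp d)} (hP : IsPolytope P) (hQ : IsPolytope Q)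
    (h : f0 P = f0 (P + Q)) {c c' : Esp d} (hcc : polyFace P c = polyFace P c') :
    polyVerts (polyFace Q c) ⊆ polyVerts (polyFace Q c') := by
  intro v hv
  obtain ⟨c₂, u, hQc₂, hPc₂, hu⟩ := exposePair hQ hP c hv
  rw [hcc] at hu
  obtain ⟨c₃, v', hPc₃, hQc₃, hv'⟩ := exposePair hP hQ c' hu
  have hw : u + v ∈ polyVerts (P + Q) := by
    apply vertex_of_singleton_face (c := c₂)
    rw [polyFace_add, hPc₂, hQc₂, Set.singleton_add_singleton]
  have hw' : u + v' ∈ polyVerts (P + Q) := by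
    apply vertex_of_singleton_face (c := c₃)
    rw [polyFace_add, hPc₃, hQc₃, Set.singleton_add_singleton]
  have huP : u ∈ P := extremePoints_subset (verts_polyFace_subset c' hu)
  have hvQ : v ∈ Q := extremePoints_subset (verts_polyFace_subset c hv)
  have hv'Q : v' ∈ Q := extremePoints_subset (verts_polyFace_subset c' hv')
  have : v = v' := comp_unique hP hQ h hw hw' huP hvQ hv'Q
  rw [this]
  exact hv'

lemma faceQ_congr {P Q : Set (Esp d)} (hP : IsPolytope P) (hQ : IsPolytope Q)
    (h : f0 P = f0 (P + Q)) {c c' : Esp d} (hcc : polyFace P c = polyFace P c') :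
    polyFace Q c = polyFace Q c' := by
  have h1 := vertsQ_congr hP hQ h hcc
  have h2 := vertsQ_congr hP hQ h hcc.symm
  have hveq : polyVerts (polyFace Q c) = polyVerts (polyFace Q c') :=
    Set.Subset.antisymm h1 h2
  rw [← hull_verts (isPolytope_polyFace hQ c), ← hull_verts (isPolytope_polyFace hQ c'), hveq]

/-- forcing lemma: a Minkowski decomposition of a face of `P + Q` into faces is standard -/
lemma face_force {P Q : Set (Esp d)} (hP : IsPolytope P) (hQ : IsPolytope Q)
    {F G : Set (Esp d)} {c'' : Esp d} (hF : IsFace P F) (hG : IsFace Q G)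
    (hFne : F.Nonempty) (hGne : G.Nonempty)
    (hsum : polyFace (P + Q) c'' = F + G) :
    F = polyFace P c'' ∧ G = polyFace Q c'' := by
  obtain ⟨cF, hcF⟩ := hF
  obtain ⟨cG, hcG⟩ := hG
  have hFsubP : F ⊆ P := hcF ▸ polyFace_subset P cF
  have hGsubQ : G ⊆ Q := hcG ▸ polyFace_subset Q cG
  have hFpoly : IsPolytope F := hcF ▸ isPolytope_polyFace hP cF
  have hGpoly : IsPolytope G := hcG ▸ isPolytope_polyFace hQ cG
  -- F ⊆ polyFace P c''
  have hFsub : F ⊆ polyFace P c'' := by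
    intro x hx
    obtain ⟨y, hy⟩ := hGne
    have hxy : x + y ∈ polyFace (P + Q) c'' := by
      rw [hsum]; exact Set.add_mem_add hx hy
    refine ⟨hFsubP hx, fun x' hx' => ?_⟩
    have := hxy.2 (x' + y) (Set.add_mem_add hx' (hGsubQ hy))
    rw [inner_add_right, inner_add_right] at this
    linarith
  have hGsub : G ⊆ polyFace Q c'' := by
    intro y hy
    obtain ⟨x, hx⟩ := hFne
    have hxy : x + y ∈ polyFace (P + Q) c'' := by
      rw [hsum]; exact Set.add_mem_add hx hy
    refine ⟨hGsubQ hy, fun y' hy' => ?_⟩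
    have := hxy.2 (x + y') (Set.add_mem_add (hFsubP hx) hy')
    rw [inner_add_right, inner_add_right] at this
    linarith
  have hsum' : polyFace P c'' + polyFace Q c'' = F + G := by
    rw [← polyFace_add, hsum]
  constructor
  · refine Set.Subset.antisymm hFsub ?_
    refine sum_cancel hFpoly hGpoly hFsub ?_
    calc polyFace P c'' + G ⊆ polyFace P c'' + polyFace Q c'' :=
          Set.add_subset_add_left hGsub
      _ = F + G := hsum'
  · refine Set.Subset.antisymm hGsub ?_
    refine sum_cancel hGpoly hFpoly hGsub ?_
    calc polyFace Q c'' + F ⊆ polyFace Q c'' + polyFace P c'' :=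
          Set.add_subset_add_left hFsub
      _ = polyFace P c'' + polyFace Q c'' := add_comm _ _
      _ = F + G := hsum'
      _ = G + F := add_comm _ _

theorem stmt14 {d : ℕ} (P Q : Set (Esp d)) (hP : IsPolytope P) (hQ : IsPolytope Q)
    (h : f0 P = f0 (P + Q)) :
    (∀ F : Set (Esp d), IsFace P F → F.Nonempty →
      ∃! G : Set (Esp d), IsFace Q G ∧ G.Nonempty ∧ IsFace (P + Q) (F + G)) ∧
    ∃ ψ : Set (Esp d) → Set (Esp d),
      (∀ F : Set (Esp d), IsFace P F → F.Nonempty →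
        IsFace Q (ψ F) ∧ (ψ F).Nonempty ∧ IsFace (P + Q) (F + ψ F)) ∧
      Set.BijOn (fun F => F + ψ F)
        {F : Set (Esp d) | IsFace P F ∧ F.Nonempty}
        {X : Set (Esp d) | IsFace (P + Q) X ∧ X.Nonempty} := by
  constructor
  · intro F hF hFne
    obtain ⟨c, hc⟩ := hF
    refine ⟨polyFace Q c, ⟨⟨c, rfl⟩, polyFace_nonempty hQ c,
      ⟨c, by rw [polyFace_add, hc]⟩⟩, ?_⟩
    rintro G' ⟨hG'face, hG'ne, c'', hc''⟩
    have hforce := face_force hP hQ ⟨c, hc⟩ hG'face hFne hG'ne hc''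
    have hPcc : polyFace P c = polyFace P c'' := by rw [hc, hforce.1]
    rw [hforce.2, ← faceQ_congr hP hQ h hPcc]
  · classical
    refine ⟨fun F => if hf : IsFace P F then polyFace Q hf.choose else ∅, ?_, ?_, ?_, ?_⟩
    · intro F hF hFne
      simp only [dif_pos hF]
      exact ⟨⟨hF.choose, rfl⟩, polyFace_nonempty hQ _,
        ⟨hF.choose, by rw [polyFace_add, hF.choose_spec]⟩⟩
    · -- MapsTo
      rintro F ⟨hF, hFne⟩
      simp only [Set.mem_setOf_eq, dif_pos hF]
      exact ⟨⟨hF.choose, by rw [polyFace_add, hF.choose_spec]⟩,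
        hFne.add (polyFace_nonempty hQ _)⟩
    · -- InjOn
      rintro F₁ ⟨hF₁, hne₁⟩ F₂ ⟨hF₂, hne₂⟩ heq
      simp only [dif_pos hF₁, dif_pos hF₂] at heq
      have hc'' : polyFace (P + Q) hF₁.choose = F₁ + polyFace Q hF₁.choose := by
        rw [polyFace_add, hF₁.choose_spec]
      have hforce₁ := face_force hP hQ hF₁ ⟨hF₁.choose, rfl⟩ hne₁
        (polyFace_nonempty hQ _) hc''
      have hc''₂ : polyFace (P + Q) hF₁.choose = F₂ + polyFace Q hF₂.choose := by
        rw [hc'', heq]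
      have hforce₂ := face_force hP hQ hF₂ ⟨hF₂.choose, rfl⟩ hne₂
        (polyFace_nonempty hQ _) hc''₂
      rw [hforce₁.1, hforce₂.1]
    · -- SurjOn
      rintro X ⟨⟨c, hc⟩, hXne⟩
      have hFface : IsFace P (polyFace P c) := ⟨c, rfl⟩
      refine ⟨polyFace P c, ⟨hFface, polyFace_nonempty hP c⟩, ?_⟩
      simp only [dif_pos hFface]
      have hQeq : polyFace Q hFface.choose = polyFace Q c :=
        faceQ_congr hP hQ h hFface.choose_spec
      rw [hQeq, ← polyFace_add, hc]
end
end
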